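/- arXiv:2102.04630 — 5 statements merged into one kernel-verified Lean document; each statement's English description precedes it below -/
import Mathlib

section
/- Let h > 0 and let u : ℤ² → ℝ (encoding a function on the lattice hℤ²) solve Lu_i = f(i, u_i) for all i ∈ ℤ², where the source term f satisfies the structural condition (H⁺) with data L_f⁺ and κ₀⁺. Assume the nondegeneracy condition holds, that κ₁⁺ < +∞ and κ₂⁺ < +∞, and that for some ϑ∞⁺ ∈ (−π,π] the quantities κ₃⁺, κ₄⁺, κ₅⁺, κ₆⁺, κ₇⁺ are all finite. Then Σ_{i∈ℤ², j∈{1,2}} (ρ_i⁺)²( |Dⱼ⁺ϑ_i⁺|² + |Dⱼ⁻ϑ_i⁺|² ) ≤ C·h, where C := 4( κ₂⁺ + 2e^{2π}κ₃⁺ + 2e^{2π}κ₄⁺ + 2κ₅⁺ + κ₆⁺ + κ₇⁺ ). -/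
set_option maxHeartbeats 1000000


noncomputable section

open Real

namespace FK

/-- Lattice unit vectors `e₁ = (1,0)`, `e₂ = (0,1)`. -/
def ee : Fin 2 → ℤ × ℤ := ![(1, 0), (0, 1)]

/-- Forward difference quotient `Dⱼ⁺u_i := (u_{i+eⱼ} − u_i)/h`. -/
def Dp (h : ℝ) (u : ℤ × ℤ → ℝ) (j : Fin 2) (i : ℤ × ℤ) : ℝ :=
  (u (i + ee j) - u i) / h

/-- Backward difference quotient `Dⱼ⁻u_i := (u_i − u_{i−eⱼ})/h`. -/
def Dm (h : ℝ) (u : ℤ × ℤ → ℝ) (j : Fin 2) (i : ℤ × ℤ) : ℝ :=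
  (u i - u (i - ee j)) / h

/-- Directional operator `Lⱼu_i := (u_{i+eⱼ} + u_{i−eⱼ} − 2u_i)/h²`. -/
def Lj (h : ℝ) (u : ℤ × ℤ → ℝ) (j : Fin 2) (i : ℤ × ℤ) : ℝ :=
  (u (i + ee j) + u (i - ee j) - 2 * u i) / h ^ 2

/-- Discrete Laplacian `Lu_i := L₁u_i + L₂u_i`. -/
def Lap (h : ℝ) (u : ℤ × ℤ → ℝ) (i : ℤ × ℤ) : ℝ :=
  Lj h u 0 i + Lj h u 1 i

/-- `U_i⁺ := D₁⁺u_i + 𝒾·D₂⁺u_i`. -/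
def Up (h : ℝ) (u : ℤ × ℤ → ℝ) (i : ℤ × ℤ) : ℂ :=
  (Dp h u 0 i : ℂ) + Complex.I * (Dp h u 1 i : ℂ)

/-- `ρ_i⁺ := |U_i⁺|`. -/
def rhoP (h : ℝ) (u : ℤ × ℤ → ℝ) (i : ℤ × ℤ) : ℝ := ‖Up h u i‖

/-- `ϑ_i⁺ ∈ (−π,π]`, the argument of `U_i⁺`. -/
def thetaP (h : ℝ) (u : ℤ × ℤ → ℝ) (i : ℤ × ℤ) : ℝ := (Up h u i).arg

/-- `U_i⁻ := D₁⁻u_i + 𝒾·D₂⁻u_i`. -/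
def Um (h : ℝ) (u : ℤ × ℤ → ℝ) (i : ℤ × ℤ) : ℂ :=
  (Dm h u 0 i : ℂ) + Complex.I * (Dm h u 1 i : ℂ)

/-- `ρ_i⁻ := |U_i⁻|`. -/
def rhoM (h : ℝ) (u : ℤ × ℤ → ℝ) (i : ℤ × ℤ) : ℝ := ‖Um h u i‖

/-- `ϑ_i⁻ ∈ (−π,π]`, the argument of `U_i⁻`. -/
def thetaM (h : ℝ) (u : ℤ × ℤ → ℝ) (i : ℤ × ℤ) : ℝ := (Um h u i).arg

/-- Structural condition (H⁺) on a source term `f` with data `Lf` and `k0`. -/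
def Hplus (h : ℝ) (u : ℤ × ℤ → ℝ) (f Lf : ℤ × ℤ → ℝ → ℝ) (k0 : ℝ) : Prop :=
  ∀ i : ℤ × ℤ,
    (∑ j : Fin 2,
        |f (i + ee j) (u (i + ee j)) - f i (u i) - Lf i (u i) * (u (i + ee j) - u i)| / h)
      ≤ k0 * h

/-- Structural condition (H⁻) on a source term `f` with data `Lf` and `k0`. -/
def Hminus (h : ℝ) (u : ℤ × ℤ → ℝ) (f Lf : ℤ × ℤ → ℝ → ℝ) (k0 : ℝ) : Prop :=
  ∀ i : ℤ × ℤ,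
    (∑ j : Fin 2,
        |f i (u i) - f (i - ee j) (u (i - ee j)) - Lf i (u i) * (u i - u (i - ee j))| / h)
      ≤ k0 * h

/-- Forward nondegeneracy condition. -/
def NondegP (u : ℤ × ℤ → ℝ) : Prop :=
  ∀ i : ℤ × ℤ, 0 < (u (i + ee 0) - u i) ^ 2 + (u (i + ee 1) - u i) ^ 2

/-- Backward nondegeneracy condition. -/
def NondegM (u : ℤ × ℤ → ℝ) : Prop :=
  ∀ i : ℤ × ℤ, 0 < (u (i - ee 0) - u i) ^ 2 + (u (i - ee 1) - u i) ^ 2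

end FK

open FK


namespace FKAux
open FK

/-- crude cubic Taylor bound for sin -/
lemma sin_taylor (x : ℝ) : |Real.sin x - x| ≤ 2 * |x|^3 := by
  have key : ∀ y : ℝ, 0 < y → |Real.sin y - y| ≤ 2 * |y|^3 := by
    intro y hy
    have h1 : Real.sin y < y := Real.sin_lt hy
    rcases le_or_gt y 1 with hle | hgt
    · have h2 : y - y^3/4 < Real.sin y := by
        have := Real.sin_gt_sub_cube hy; linarith [pow_pos hy 3]
      rw [abs_of_nonpos (by linarith), abs_of_pos hy]
      nlinarith [pow_pos hy 3]
    · have h3 : -1 ≤ Real.sin y := Real.neg_one_le_sin y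
      rw [abs_of_nonpos (by linarith), abs_of_pos hy]
      nlinarith [pow_pos hy 3, sq_nonneg y, sq_nonneg (y-1)]
  rcases lt_trichotomy x 0 with hx | hx | hx
  · have hk := key (-x) (by linarith)
    rw [Real.sin_neg, abs_neg, show -Real.sin x - -x = -(Real.sin x - x) by ring, abs_neg] at hk
    exact hk
  · simp [hx]
  · exact key x hx

/-- the shift equivalence `(i,j) ↦ (i+eⱼ, j)` -/
def sig : (ℤ × ℤ) × Fin 2 ≃ (ℤ × ℤ) × Fin 2 where
  toFun p := (p.1 + ee p.2, p.2)
  invFun p := (p.1 - ee p.2, p.2)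
  left_inv p := by simp
  right_inv p := by simp

@[simp] lemma sig_apply (p : (ℤ × ℤ) × Fin 2) : sig p = (p.1 + ee p.2, p.2) := rfl
@[simp] lemma sig_symm_apply (p : (ℤ × ℤ) × Fin 2) : sig.symm p = (p.1 - ee p.2, p.2) := rfl

lemma rho_nonneg (h : ℝ) (u : ℤ × ℤ → ℝ) (i : ℤ × ℤ) : 0 ≤ rhoP h u i :=
  norm_nonneg _

lemma theta_diff_le (h : ℝ) (u : ℤ × ℤ → ℝ) (a b : ℤ × ℤ) :
    |thetaP h u a - thetaP h u b| ≤ 2 * π := by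
  have h1 := Complex.neg_pi_lt_arg (Up h u a)
  have h2 := Complex.arg_le_pi (Up h u a)
  have h3 := Complex.neg_pi_lt_arg (Up h u b)
  have h4 := Complex.arg_le_pi (Up h u b)
  rw [thetaP, thetaP]
  rw [abs_le]
  constructor <;> linarith

lemma polarA (h : ℝ) (u : ℤ × ℤ → ℝ) (i : ℤ × ℤ) :
    Dp h u 0 i = rhoP h u i * Real.cos (thetaP h u i) ∧
    Dp h u 1 i = rhoP h u i * Real.sin (thetaP h u i) := by
  have key := Complex.norm_mul_cos_add_sin_mul_I (Up h u i)
  have hre := congrArg Complex.re key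
  have him := congrArg Complex.im key
  simp only [Complex.mul_re, Complex.mul_im, Complex.add_re, Complex.add_im,
    Complex.ofReal_re, Complex.ofReal_im, Complex.I_re, Complex.I_im,
    Complex.cos_ofReal_re, Complex.sin_ofReal_re, Complex.cos_ofReal_im,
    Complex.sin_ofReal_im, Up] at hre him
  rw [rhoP, thetaP, Up]
  constructor
  · linarith [hre]
  · linarith [him]

lemma abs_Dp_le_rho (h : ℝ) (u : ℤ × ℤ → ℝ) (i : ℤ × ℤ) :
    |Dp h u 0 i| ≤ rhoP h u i ∧ |Dp h u 1 i| ≤ rhoP h u i := by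
  obtain ⟨h0, h1⟩ := polarA h u i
  have hρ := rho_nonneg h u i
  constructor
  · rw [h0, abs_mul, abs_of_nonneg hρ]
    calc rhoP h u i * |Real.cos (thetaP h u i)| ≤ rhoP h u i * 1 :=
      mul_le_mul_of_nonneg_left (Real.abs_cos_le_one _) hρ
    _ = rhoP h u i := mul_one _
  · rw [h1, abs_mul, abs_of_nonneg hρ]
    calc rhoP h u i * |Real.sin (thetaP h u i)| ≤ rhoP h u i * 1 :=
      mul_le_mul_of_nonneg_left (Real.abs_sin_le_one _) hρ
    _ = rhoP h u i := mul_one _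

lemma rho_le (h : ℝ) (u : ℤ × ℤ → ℝ) (κ₁ : ℝ) (hκ₁ : ∀ (i : ℤ × ℤ) (j : Fin 2), |Dp h u j i| ≤ κ₁)
    (i : ℤ × ℤ) : rhoP h u i ≤ 2 * κ₁ := by
  have h1 := hκ₁ i 0
  have h2 := hκ₁ i 1
  have key : rhoP h u i ≤ |Dp h u 0 i| + |Dp h u 1 i| := by
    rw [rhoP, Up]
    calc ‖(Dp h u 0 i : ℂ) + Complex.I * (Dp h u 1 i : ℂ)‖
        ≤ ‖(Dp h u 0 i : ℂ)‖ + ‖Complex.I * (Dp h u 1 i : ℂ)‖ :=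
          norm_add_le _ _
    _ = |Dp h u 0 i| + |Dp h u 1 i| := by
          rw [norm_mul, Complex.norm_I, Complex.norm_real, Complex.norm_real, one_mul,
            Real.norm_eq_abs, Real.norm_eq_abs]
  linarith

/-- the flux `w_{i,j}` -/
def Wf (h : ℝ) (u : ℤ × ℤ → ℝ) (p : (ℤ × ℤ) × Fin 2) : ℝ :=
  Dp h u 0 p.1 * Dp h u 1 (p.1 + ee p.2) - Dp h u 1 p.1 * Dp h u 0 (p.1 + ee p.2)

/-- the model flux `m_{i,j}` -/
def Mf (h : ℝ) (u : ℤ × ℤ → ℝ) (p : (ℤ × ℤ) × Fin 2) : ℝ :=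
  ((rhoP h u p.1)^2 + (rhoP h u (p.1 + ee p.2))^2)/2 *
    (thetaP h u (p.1 + ee p.2) - thetaP h u p.1)

/-- the remainder flux -/
def Rf (h : ℝ) (u : ℤ × ℤ → ℝ) (p : (ℤ × ℤ) × Fin 2) : ℝ := Wf h u p - Mf h u p

lemma Wf_eq (h : ℝ) (u : ℤ × ℤ → ℝ) (p : (ℤ × ℤ) × Fin 2) :
    Wf h u p = rhoP h u p.1 * rhoP h u (p.1 + ee p.2) *
      Real.sin (thetaP h u (p.1 + ee p.2) - thetaP h u p.1) := by
  obtain ⟨hA1, hB1⟩ := polarA h u p.1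
  obtain ⟨hA2, hB2⟩ := polarA h u (p.1 + ee p.2)
  rw [Wf, hA1, hB1, hA2, hB2, Real.sin_sub]
  ring

/-- the discrete divergence identity (pure algebra) -/
lemma div_identity (h : ℝ) (hh : h ≠ 0) (u : ℤ × ℤ → ℝ) (i : ℤ × ℤ) :
    (∑ j : Fin 2, (Wf h u (i, j) - Wf h u (i - ee j, j))) =
    h * (Dp h u 0 i * (Lap h u (i + ee 1) - Lap h u i)
       - Dp h u 1 i * (Lap h u (i + ee 0) - Lap h u i)) := by
  obtain ⟨x, y⟩ := i
  simp only [Fin.sum_univ_two, Wf, Dp, Lap, Lj, ee, Matrix.cons_val_zero, Matrix.cons_val_one,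
    Matrix.head_cons, Prod.mk_add_mk, Prod.mk_sub_mk, add_zero, zero_add, sub_zero,
    add_sub_cancel_right, sub_add_cancel, add_sub_cancel_left]
  field_simp
  ring

/-- the source-term part -/
def gF (h : ℝ) (u : ℤ × ℤ → ℝ) (f : (ℤ × ℤ) → ℝ → ℝ) (i : ℤ × ℤ) : ℝ :=
  (Dp h u 0 i * (f (i + ee 1) (u (i + ee 1)) - f i (u i))
   - Dp h u 1 i * (f (i + ee 0) (u (i + ee 0)) - f i (u i))) / h

lemma div_identity' (h : ℝ) (hh : h ≠ 0) (u : ℤ × ℤ → ℝ) (f : (ℤ × ℤ) → ℝ → ℝ)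
    (heq : ∀ i : ℤ × ℤ, Lap h u i = f i (u i)) (i : ℤ × ℤ) :
    (∑ j : Fin 2, (Wf h u (i, j) - Wf h u (i - ee j, j))) = h^2 * gF h u f i := by
  rw [div_identity h hh u i, heq, heq, heq, gF]
  field_simp

lemma gF_bound (h : ℝ) (hh : 0 < h) (u : ℤ × ℤ → ℝ) (f Lf : (ℤ × ℤ) → ℝ → ℝ) (κ₀ : ℝ)
    (hH : Hplus h u f Lf κ₀) (i : ℤ × ℤ) :
    |gF h u f i| ≤ κ₀ * h * rhoP h u i := by
  have hH' := hH i
  rw [Fin.sum_univ_two] at hH'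
  set E0 := f (i + ee 0) (u (i + ee 0)) - f i (u i) - Lf i (u i) * (u (i + ee 0) - u i) with hE0
  set E1 := f (i + ee 1) (u (i + ee 1)) - f i (u i) - Lf i (u i) * (u (i + ee 1) - u i) with hE1
  have hg : gF h u f i = (Dp h u 0 i * E1 - Dp h u 1 i * E0) / h := by
    rw [gF, hE0, hE1, Dp, Dp]
    field_simp
    ring
  rw [hg, abs_div, abs_of_pos hh]
  obtain ⟨hA, hB⟩ := abs_Dp_le_rho h u i
  have hρ := rho_nonneg h u i
  have step1 : |Dp h u 0 i * E1 - Dp h u 1 i * E0| ≤ rhoP h u i * (|E0| + |E1|) := by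
    calc |Dp h u 0 i * E1 - Dp h u 1 i * E0|
        ≤ |Dp h u 0 i * E1| + |Dp h u 1 i * E0| := abs_sub _ _
    _ = |Dp h u 0 i| * |E1| + |Dp h u 1 i| * |E0| := by rw [abs_mul, abs_mul]
    _ ≤ rhoP h u i * |E1| + rhoP h u i * |E0| :=
        add_le_add (mul_le_mul_of_nonneg_right hA (abs_nonneg _))
          (mul_le_mul_of_nonneg_right hB (abs_nonneg _))
    _ = rhoP h u i * (|E0| + |E1|) := by ring
  calc |Dp h u 0 i * E1 - Dp h u 1 i * E0| / h
      ≤ rhoP h u i * (|E0| + |E1|) / h := (div_le_div_iff_of_pos_right hh).mpr step1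
  _ = rhoP h u i * (|E0| / h + |E1| / h) := by ring
  _ ≤ rhoP h u i * (κ₀ * h) := by
        apply mul_le_mul_of_nonneg_left _ hρ
        exact hH'
  _ = κ₀ * h * rhoP h u i := by ring

lemma Dm_shift (h : ℝ) (v : ℤ × ℤ → ℝ) (j : Fin 2) (i : ℤ × ℤ) :
    Dm h v j (i + ee j) = Dp h v j i := by
  simp [Dm, Dp, add_sub_cancel_right]

lemma core_r (a b δ : ℝ) (ha : 0 ≤ a) (hb : 0 ≤ b) :
    |a*b*Real.sin δ - (a^2+b^2)/2*δ| ≤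
      2*a^2* |δ|^3 + 2*a* |b-a| * |δ|^3 + (b-a)^2* |δ|/2 := by
  have h1 : a*b*Real.sin δ - (a^2+b^2)/2*δ = a*b*(Real.sin δ - δ) - (b-a)^2/2*δ := by ring
  have h2 : |a*b*(Real.sin δ - δ) - (b-a)^2/2*δ|
      ≤ |a*b*(Real.sin δ - δ)| + |(b-a)^2/2*δ| := abs_sub _ _
  have h3 : |a*b*(Real.sin δ - δ)| = a*b* |Real.sin δ - δ| := by
    rw [abs_mul, abs_mul, abs_of_nonneg ha, abs_of_nonneg hb]
  have h4 : |(b-a)^2/2*δ| = (b-a)^2* |δ|/2 := by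
    rw [abs_mul]
    rw [abs_of_nonneg (by positivity : (0:ℝ) ≤ (b-a)^2/2)]
    ring
  have h5 : a*b* |Real.sin δ - δ| ≤ a*b*(2* |δ|^3) :=
    mul_le_mul_of_nonneg_left (sin_taylor δ) (by positivity)
  have h6 : a*b ≤ a^2 + a* |b-a| := by
    have : b ≤ a + |b-a| := by
      have := le_abs_self (b - a); linarith
    nlinarith
  have h7 : a*b*(2* |δ|^3) ≤ (a^2 + a* |b-a|)*(2* |δ|^3) :=
    mul_le_mul_of_nonneg_right h6 (by positivity)
  calc |a*b*Real.sin δ - (a^2+b^2)/2*δ|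
      = |a*b*(Real.sin δ - δ) - (b-a)^2/2*δ| := by rw [h1]
  _ ≤ |a*b*(Real.sin δ - δ)| + |(b-a)^2/2*δ| := h2
  _ = a*b* |Real.sin δ - δ| + (b-a)^2* |δ|/2 := by rw [h3, h4]
  _ ≤ a*b*(2* |δ|^3) + (b-a)^2* |δ|/2 := by linarith
  _ ≤ (a^2 + a* |b-a|)*(2* |δ|^3) + (b-a)^2* |δ|/2 := by linarith
  _ = 2*a^2* |δ|^3 + 2*a* |b-a| * |δ|^3 + (b-a)^2* |δ|/2 := by ring

/-- κ-family summands -/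
def k3F (h : ℝ) (u : ℤ × ℤ → ℝ) (θinf : ℝ) (p : (ℤ × ℤ) × Fin 2) : ℝ :=
  (rhoP h u p.1) ^ 2 *
    (|Dp h (thetaP h u) p.2 p.1| ^ 3 + |Dm h (thetaP h u) p.2 p.1| ^ 3) *
    |thetaP h u p.1 - θinf|

def k4F (h : ℝ) (u : ℤ × ℤ → ℝ) (θinf : ℝ) (p : (ℤ × ℤ) × Fin 2) : ℝ :=
  rhoP h u p.1 *
    (|Dp h (rhoP h u) p.2 p.1| * |Dp h (thetaP h u) p.2 p.1| ^ 2 +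
     |Dm h (rhoP h u) p.2 p.1| * |Dm h (thetaP h u) p.2 p.1| ^ 2) *
    |thetaP h u p.1 - θinf|

def k5Z (h : ℝ) (u : ℤ × ℤ → ℝ) (θinf : ℝ) (i : ℤ × ℤ) : ℝ :=
  rhoP h u i * |thetaP h u i - θinf|

def k7F (h : ℝ) (u : ℤ × ℤ → ℝ) (θinf : ℝ) (p : (ℤ × ℤ) × Fin 2) : ℝ :=
  (|Dp h (rhoP h u) p.2 p.1| ^ 2 * |Dp h (thetaP h u) p.2 p.1| +
   |Dm h (rhoP h u) p.2 p.1| ^ 2 * |Dm h (thetaP h u) p.2 p.1|) *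
  |thetaP h u p.1 - θinf|

/-- forward pointwise bound on the remainder flux -/
lemma Rf_boundA (h : ℝ) (hh : 0 < h) (u : ℤ × ℤ → ℝ) (θinf : ℝ) (p : (ℤ × ℤ) × Fin 2) :
    |Rf h u p * (thetaP h u p.1 - θinf)| ≤
      h^3 * (2 * k3F h u θinf p + (4*π * k4F h u θinf p + k7F h u θinf p)) := by
  have hne : h ≠ 0 := ne_of_gt hh
  set a := rhoP h u p.1 with ha_def
  set b := rhoP h u (p.1 + ee p.2) with hb_def
  set δ := thetaP h u (p.1 + ee p.2) - thetaP h u p.1 with hδ_def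
  have ha : 0 ≤ a := rho_nonneg h u p.1
  have hb : 0 ≤ b := rho_nonneg h u (p.1 + ee p.2)
  have hRf : Rf h u p = a*b*Real.sin δ - (a^2+b^2)/2*δ := by
    rw [Rf, Wf_eq, Mf]
  have hc := core_r a b δ ha hb
  set X := |Dp h (thetaP h u) p.2 p.1| with hX_def
  set Y := |Dp h (rhoP h u) p.2 p.1| with hY_def
  have hX0 : 0 ≤ X := abs_nonneg _
  have hY0 : 0 ≤ Y := abs_nonneg _
  have hδX : |δ| = h * X := by
    rw [hX_def, Dp, abs_div, abs_of_pos hh]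
    field_simp
    rfl
  have hbaY : |b - a| = h * Y := by
    rw [hY_def, Dp, abs_div, abs_of_pos hh, ha_def, hb_def]
    field_simp
  have hδπ : |δ| ≤ 2 * π := theta_diff_le h u _ _
  have hXπ : h * X ≤ 2 * π := by rw [← hδX]; exact hδπ
  have hsq : (b-a)^2 = (h*Y)^2 := by rw [← hbaY, sq_abs]
  have hRb : |Rf h u p| ≤ 2*a^2*(h*X)^3 + 2*a*(h*Y)*(h*X)^3 + (h*Y)^2*(h*X)/2 := by
    rw [hRf]
    calc |a*b*Real.sin δ - (a^2+b^2)/2*δ|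
        ≤ 2*a^2* |δ|^3 + 2*a* |b-a| * |δ|^3 + (b-a)^2* |δ|/2 := hc
    _ = 2*a^2*(h*X)^3 + 2*a*(h*Y)*(h*X)^3 + (h*Y)^2*(h*X)/2 := by
        rw [hδX, hbaY, hsq]
  have hmid : 2*a*(h*Y)*(h*X)^3 ≤ 4*π*(a*Y*X^2)*h^3 := by
    have k1 : 0 ≤ a*Y*X^2*h^3 := by positivity
    nlinarith [mul_le_mul_of_nonneg_left hXπ k1]
  have hRb2 : |Rf h u p| ≤ h^3 * (2*(a^2*X^3) + (4*π*(a*Y*X^2) + Y^2*X/2)) := by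
    calc |Rf h u p| ≤ 2*a^2*(h*X)^3 + 2*a*(h*Y)*(h*X)^3 + (h*Y)^2*(h*X)/2 := hRb
    _ ≤ 2*a^2*(h*X)^3 + 4*π*(a*Y*X^2)*h^3 + (h*Y)^2*(h*X)/2 := by linarith
    _ = h^3 * (2*(a^2*X^3) + (4*π*(a*Y*X^2) + Y^2*X/2)) := by ring
  set Θ := |thetaP h u p.1 - θinf| with hΘ_def
  have hΘ0 : 0 ≤ Θ := abs_nonneg _
  have hk3 : a^2*X^3*Θ ≤ k3F h u θinf p := by
    rw [k3F, ← ha_def, ← hX_def, ← hΘ_def]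
    have : a^2*X^3 ≤ a^2 * (X^3 + |Dm h (thetaP h u) p.2 p.1|^3) := by
      nlinarith [abs_nonneg (Dm h (thetaP h u) p.2 p.1), pow_nonneg (abs_nonneg (Dm h (thetaP h u) p.2 p.1)) 3, sq_nonneg a]
    exact mul_le_mul_of_nonneg_right this hΘ0
  have hk4 : a*Y*X^2*Θ ≤ k4F h u θinf p := by
    rw [k4F, ← ha_def, ← hX_def, ← hY_def, ← hΘ_def]
    have : a*(Y*X^2) ≤ a * (Y*X^2 + |Dm h (rhoP h u) p.2 p.1| * |Dm h (thetaP h u) p.2 p.1|^2) := by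
      have h0 : 0 ≤ |Dm h (rhoP h u) p.2 p.1| * |Dm h (thetaP h u) p.2 p.1|^2 := by positivity
      nlinarith
    calc a*Y*X^2*Θ = (a*(Y*X^2))*Θ := by ring
    _ ≤ (a * (Y*X^2 + |Dm h (rhoP h u) p.2 p.1| * |Dm h (thetaP h u) p.2 p.1|^2))*Θ :=
        mul_le_mul_of_nonneg_right this hΘ0
  have hk7 : Y^2*X*Θ ≤ k7F h u θinf p := by
    rw [k7F, ← hX_def, ← hY_def, ← hΘ_def]
    have : Y^2*X ≤ Y^2*X + |Dm h (rhoP h u) p.2 p.1|^2 * |Dm h (thetaP h u) p.2 p.1| := by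
      have h0 : 0 ≤ |Dm h (rhoP h u) p.2 p.1|^2 * |Dm h (thetaP h u) p.2 p.1| := by positivity
      linarith
    exact mul_le_mul_of_nonneg_right this hΘ0
  have h3p : (0:ℝ) ≤ h^3 := by positivity
  calc |Rf h u p * (thetaP h u p.1 - θinf)| = |Rf h u p| * Θ := by rw [abs_mul]
  _ ≤ (h^3 * (2*(a^2*X^3) + (4*π*(a*Y*X^2) + Y^2*X/2))) * Θ :=
      mul_le_mul_of_nonneg_right hRb2 hΘ0
  _ = h^3 * (2*(a^2*X^3*Θ) + (4*π*(a*Y*X^2*Θ) + (Y^2*X*Θ)/2)) := by ring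
  _ ≤ h^3 * (2 * k3F h u θinf p + (4*π * k4F h u θinf p + k7F h u θinf p)) := by
      have hπ : (0:ℝ) < π := Real.pi_pos
      have h7 : (Y^2*X*Θ)/2 ≤ k7F h u θinf p := by
        have h70 : 0 ≤ Y^2*X*Θ := by positivity
        linarith
      have h4' : 4*π*(a*Y*X^2*Θ) ≤ 4*π*k4F h u θinf p := by
        apply mul_le_mul_of_nonneg_left hk4 (by positivity)
      apply mul_le_mul_of_nonneg_left _ h3p
      linarith

/-- backward pointwise bound on the remainder flux -/
lemma Rf_boundB (h : ℝ) (hh : 0 < h) (u : ℤ × ℤ → ℝ) (θinf : ℝ) (p : (ℤ × ℤ) × Fin 2) :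
    |Rf h u p * (thetaP h u (p.1 + ee p.2) - θinf)| ≤
      h^3 * (2 * k3F h u θinf (sig p) + (4*π * k4F h u θinf (sig p) + k7F h u θinf (sig p))) := by
  have hne : h ≠ 0 := ne_of_gt hh
  set a := rhoP h u p.1 with ha_def
  set b := rhoP h u (p.1 + ee p.2) with hb_def
  set δ := thetaP h u (p.1 + ee p.2) - thetaP h u p.1 with hδ_def
  have ha : 0 ≤ a := rho_nonneg h u p.1
  have hb : 0 ≤ b := rho_nonneg h u (p.1 + ee p.2)
  have hRf : Rf h u p = b*a*Real.sin δ - (b^2+a^2)/2*δ := by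
    rw [Rf, Wf_eq, Mf]; ring
  have hc := core_r b a δ hb ha
  set X := |Dm h (thetaP h u) p.2 (p.1 + ee p.2)| with hX_def
  set Y := |Dm h (rhoP h u) p.2 (p.1 + ee p.2)| with hY_def
  have hX0 : 0 ≤ X := abs_nonneg _
  have hY0 : 0 ≤ Y := abs_nonneg _
  have hδX : |δ| = h * X := by
    rw [hX_def, Dm_shift, Dp, abs_div, abs_of_pos hh]
    field_simp
    rfl
  have hbaY : |a - b| = h * Y := by
    rw [hY_def, Dm_shift, Dp, abs_div, abs_of_pos hh, ha_def, hb_def]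
    rw [abs_sub_comm]
    field_simp
  have hδπ : |δ| ≤ 2 * π := theta_diff_le h u _ _
  have hXπ : h * X ≤ 2 * π := by rw [← hδX]; exact hδπ
  have hsq : (a-b)^2 = (h*Y)^2 := by rw [← hbaY, sq_abs]
  have hRb : |Rf h u p| ≤ 2*b^2*(h*X)^3 + 2*b*(h*Y)*(h*X)^3 + (h*Y)^2*(h*X)/2 := by
    rw [hRf]
    calc |b*a*Real.sin δ - (b^2+a^2)/2*δ|
        ≤ 2*b^2* |δ|^3 + 2*b* |a-b| * |δ|^3 + (a-b)^2* |δ|/2 := hc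
    _ = 2*b^2*(h*X)^3 + 2*b*(h*Y)*(h*X)^3 + (h*Y)^2*(h*X)/2 := by
        rw [hδX, hbaY, hsq]
  have hmid : 2*b*(h*Y)*(h*X)^3 ≤ 4*π*(b*Y*X^2)*h^3 := by
    have k1 : 0 ≤ b*Y*X^2*h^3 := by positivity
    nlinarith [mul_le_mul_of_nonneg_left hXπ k1]
  have hRb2 : |Rf h u p| ≤ h^3 * (2*(b^2*X^3) + (4*π*(b*Y*X^2) + Y^2*X/2)) := by
    calc |Rf h u p| ≤ 2*b^2*(h*X)^3 + 2*b*(h*Y)*(h*X)^3 + (h*Y)^2*(h*X)/2 := hRb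
    _ ≤ 2*b^2*(h*X)^3 + 4*π*(b*Y*X^2)*h^3 + (h*Y)^2*(h*X)/2 := by linarith
    _ = h^3 * (2*(b^2*X^3) + (4*π*(b*Y*X^2) + Y^2*X/2)) := by ring
  set Θ := |thetaP h u (p.1 + ee p.2) - θinf| with hΘ_def
  have hΘ0 : 0 ≤ Θ := abs_nonneg _
  have hσ1 : (sig p).1 = p.1 + ee p.2 := rfl
  have hσ2 : (sig p).2 = p.2 := rfl
  have hk3 : b^2*X^3*Θ ≤ k3F h u θinf (sig p) := by
    rw [k3F, hσ1, hσ2, ← hb_def, ← hX_def, ← hΘ_def]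
    have : b^2*X^3 ≤ b^2 * (|Dp h (thetaP h u) p.2 (p.1 + ee p.2)|^3 + X^3) := by
      nlinarith [pow_nonneg (abs_nonneg (Dp h (thetaP h u) p.2 (p.1 + ee p.2))) 3, sq_nonneg b]
    exact mul_le_mul_of_nonneg_right this hΘ0
  have hk4 : b*Y*X^2*Θ ≤ k4F h u θinf (sig p) := by
    rw [k4F, hσ1, hσ2, ← hb_def, ← hX_def, ← hY_def, ← hΘ_def]
    have h0 : 0 ≤ |Dp h (rhoP h u) p.2 (p.1 + ee p.2)| * |Dp h (thetaP h u) p.2 (p.1 + ee p.2)|^2 := by positivity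
    have : b*(Y*X^2) ≤ b * (|Dp h (rhoP h u) p.2 (p.1 + ee p.2)| * |Dp h (thetaP h u) p.2 (p.1 + ee p.2)|^2 + Y*X^2) := by
      nlinarith
    calc b*Y*X^2*Θ = (b*(Y*X^2))*Θ := by ring
    _ ≤ _ := mul_le_mul_of_nonneg_right this hΘ0
  have hk7 : Y^2*X*Θ ≤ k7F h u θinf (sig p) := by
    rw [k7F, hσ1, hσ2, ← hX_def, ← hY_def, ← hΘ_def]
    have h0 : 0 ≤ |Dp h (rhoP h u) p.2 (p.1 + ee p.2)|^2 * |Dp h (thetaP h u) p.2 (p.1 + ee p.2)| := by positivity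
    have : Y^2*X ≤ |Dp h (rhoP h u) p.2 (p.1 + ee p.2)|^2 * |Dp h (thetaP h u) p.2 (p.1 + ee p.2)| + Y^2*X := by
      linarith
    exact mul_le_mul_of_nonneg_right this hΘ0
  have h3p : (0:ℝ) ≤ h^3 := by positivity
  calc |Rf h u p * (thetaP h u (p.1 + ee p.2) - θinf)| = |Rf h u p| * Θ := by rw [abs_mul]
  _ ≤ (h^3 * (2*(b^2*X^3) + (4*π*(b*Y*X^2) + Y^2*X/2))) * Θ :=
      mul_le_mul_of_nonneg_right hRb2 hΘ0
  _ = h^3 * (2*(b^2*X^3*Θ) + (4*π*(b*Y*X^2*Θ) + (Y^2*X*Θ)/2)) := by ring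
  _ ≤ h^3 * (2 * k3F h u θinf (sig p) + (4*π * k4F h u θinf (sig p) + k7F h u θinf (sig p))) := by
      have hπ : (0:ℝ) < π := Real.pi_pos
      have h70 : 0 ≤ Y^2*X*Θ := by positivity
      have h7 : (Y^2*X*Θ)/2 ≤ k7F h u θinf (sig p) := by linarith
      have h4' : 4*π*(b*Y*X^2*Θ) ≤ 4*π*k4F h u θinf (sig p) :=
        mul_le_mul_of_nonneg_left hk4 (by positivity)
      apply mul_le_mul_of_nonneg_left _ h3p
      linarith

/-- the model flux, forward pointwise bound -/
lemma Mf_boundA (h : ℝ) (hh : 0 < h) (u : ℤ × ℤ → ℝ) (θinf κ₁ : ℝ)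
    (hκ₁ : ∀ (i : ℤ × ℤ) (j : Fin 2), |Dp h u j i| ≤ κ₁) (p : (ℤ × ℤ) × Fin 2) :
    |Mf h u p * (thetaP h u p.1 - θinf)| ≤
      6*π*κ₁ * k5Z h u θinf p.1 + h^3 * k7F h u θinf p := by
  have hne : h ≠ 0 := ne_of_gt hh
  set a := rhoP h u p.1 with ha_def
  set b := rhoP h u (p.1 + ee p.2) with hb_def
  set δ := thetaP h u (p.1 + ee p.2) - thetaP h u p.1 with hδ_def
  have ha : 0 ≤ a := rho_nonneg h u p.1
  have hb : 0 ≤ b := rho_nonneg h u (p.1 + ee p.2)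
  set X := |Dp h (thetaP h u) p.2 p.1| with hX_def
  set Y := |Dp h (rhoP h u) p.2 p.1| with hY_def
  have hX0 : 0 ≤ X := abs_nonneg _
  have hY0 : 0 ≤ Y := abs_nonneg _
  have hδX : |δ| = h * X := by
    rw [hX_def, Dp, abs_div, abs_of_pos hh]
    field_simp
    rfl
  have hbaY : |b - a| = h * Y := by
    rw [hY_def, Dp, abs_div, abs_of_pos hh, ha_def, hb_def]
    field_simp
  have hδπ : |δ| ≤ 2 * π := theta_diff_le h u _ _
  have hXπ : h * X ≤ 2 * π := by rw [← hδX]; exact hδπ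
  have hXh0 : 0 ≤ h * X := by positivity
  have hκa : a ≤ 2 * κ₁ := rho_le h u κ₁ hκ₁ p.1
  set Θ := |thetaP h u p.1 - θinf| with hΘ_def
  have hΘ0 : 0 ≤ Θ := abs_nonneg _
  have hb2 : b^2 ≤ 2*a^2 + 2*(h*Y)^2 := by
    have h1 : b ≤ a + |b - a| := by have := le_abs_self (b - a); linarith
    have h2 : b ≤ a + h*Y := by rw [← hbaY]; exact h1
    nlinarith [sq_nonneg (a - h*Y), mul_le_mul h2 h2 hb (by positivity : (0:ℝ) ≤ a + h*Y)]
  have hMabs : |Mf h u p| = (a^2 + b^2)/2 * |δ| := by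
    rw [Mf, ← ha_def, ← hb_def, ← hδ_def, abs_mul,
      abs_of_nonneg (by positivity : (0:ℝ) ≤ (a^2 + b^2)/2)]
  have hMb : |Mf h u p| ≤ (3/2)*a^2*(h*X) + h^3*(Y^2*X) := by
    rw [hMabs, hδX]
    nlinarith [mul_nonneg (mul_nonneg (sq_nonneg Y) hX0) (by positivity : (0:ℝ) ≤ h^3),
      mul_nonneg (mul_nonneg hh.le hX0) (sq_nonneg a),
      mul_nonneg (mul_nonneg hh.le hX0) (mul_nonneg (mul_nonneg hh.le hY0) (mul_nonneg hh.le hY0))]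
  have hstep : (3/2)*a^2*(h*X) ≤ 6*π*κ₁*a := by
    have s1 : a*(h*X) ≤ a*(2*π) := mul_le_mul_of_nonneg_left hXπ ha
    have s2 : a^2*(h*X) = a*(a*(h*X)) := by ring
    have s3 : a*(a*(h*X)) ≤ (2*κ₁)*(a*(h*X)) := by
      apply mul_le_mul_of_nonneg_right hκa (mul_nonneg ha hXh0)
    have s4 : (2*κ₁)*(a*(h*X)) ≤ (2*κ₁)*(a*(2*π)) := by
      have hκ10 : (0:ℝ) ≤ 2*κ₁ := le_trans ha hκa |>.trans (le_refl _) |>.trans (le_refl _)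
      exact mul_le_mul_of_nonneg_left s1 (le_trans ha hκa)
    nlinarith [s3, s4]
  have hk7 : Y^2*X*Θ ≤ k7F h u θinf p := by
    rw [k7F, ← hX_def, ← hY_def, ← hΘ_def]
    have h0 : 0 ≤ |Dm h (rhoP h u) p.2 p.1|^2 * |Dm h (thetaP h u) p.2 p.1| := by positivity
    exact mul_le_mul_of_nonneg_right (by linarith) hΘ0
  have hk5 : a*Θ = k5Z h u θinf p.1 := by rw [k5Z, ← ha_def, ← hΘ_def]
  calc |Mf h u p * (thetaP h u p.1 - θinf)| = |Mf h u p| * Θ := by rw [abs_mul]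
  _ ≤ ((3/2)*a^2*(h*X) + h^3*(Y^2*X)) * Θ := mul_le_mul_of_nonneg_right hMb hΘ0
  _ = ((3/2)*a^2*(h*X))*Θ + h^3*(Y^2*X*Θ) := by ring
  _ ≤ (6*π*κ₁*a)*Θ + h^3*(k7F h u θinf p) := by
      have t1 : ((3/2)*a^2*(h*X))*Θ ≤ (6*π*κ₁*a)*Θ := mul_le_mul_of_nonneg_right hstep hΘ0
      have t2 : h^3*(Y^2*X*Θ) ≤ h^3*(k7F h u θinf p) :=
        mul_le_mul_of_nonneg_left hk7 (by positivity)
      linarith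
  _ = 6*π*κ₁ * k5Z h u θinf p.1 + h^3 * k7F h u θinf p := by rw [← hk5]; ring

/-- the model flux, backward pointwise bound -/
lemma Mf_boundB (h : ℝ) (hh : 0 < h) (u : ℤ × ℤ → ℝ) (θinf κ₁ : ℝ)
    (hκ₁ : ∀ (i : ℤ × ℤ) (j : Fin 2), |Dp h u j i| ≤ κ₁) (p : (ℤ × ℤ) × Fin 2) :
    |Mf h u p * (thetaP h u (p.1 + ee p.2) - θinf)| ≤
      6*π*κ₁ * k5Z h u θinf ((sig p).1) + h^3 * k7F h u θinf (sig p) := by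
  have hne : h ≠ 0 := ne_of_gt hh
  set a := rhoP h u p.1 with ha_def
  set b := rhoP h u (p.1 + ee p.2) with hb_def
  set δ := thetaP h u (p.1 + ee p.2) - thetaP h u p.1 with hδ_def
  have ha : 0 ≤ a := rho_nonneg h u p.1
  have hb : 0 ≤ b := rho_nonneg h u (p.1 + ee p.2)
  set X := |Dm h (thetaP h u) p.2 (p.1 + ee p.2)| with hX_def
  set Y := |Dm h (rhoP h u) p.2 (p.1 + ee p.2)| with hY_def
  have hX0 : 0 ≤ X := abs_nonneg _
  have hY0 : 0 ≤ Y := abs_nonneg _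
  have hδX : |δ| = h * X := by
    rw [hX_def, Dm_shift, Dp, abs_div, abs_of_pos hh]
    field_simp
    rfl
  have hbaY : |a - b| = h * Y := by
    rw [hY_def, Dm_shift, Dp, abs_div, abs_of_pos hh, ha_def, hb_def, abs_sub_comm]
    field_simp
  have hδπ : |δ| ≤ 2 * π := theta_diff_le h u _ _
  have hXπ : h * X ≤ 2 * π := by rw [← hδX]; exact hδπ
  have hXh0 : 0 ≤ h * X := by positivity
  have hκb : b ≤ 2 * κ₁ := rho_le h u κ₁ hκ₁ (p.1 + ee p.2)
  set Θ := |thetaP h u (p.1 + ee p.2) - θinf| with hΘ_def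
  have hΘ0 : 0 ≤ Θ := abs_nonneg _
  have ha2 : a^2 ≤ 2*b^2 + 2*(h*Y)^2 := by
    have h1 : a ≤ b + |a - b| := by have := le_abs_self (a - b); linarith
    have h2 : a ≤ b + h*Y := by rw [← hbaY]; exact h1
    nlinarith [sq_nonneg (b - h*Y), mul_le_mul h2 h2 ha (by positivity : (0:ℝ) ≤ b + h*Y)]
  have hMabs : |Mf h u p| = (a^2 + b^2)/2 * |δ| := by
    rw [Mf, ← ha_def, ← hb_def, ← hδ_def, abs_mul,
      abs_of_nonneg (by positivity : (0:ℝ) ≤ (a^2 + b^2)/2)]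
  have hMb : |Mf h u p| ≤ (3/2)*b^2*(h*X) + h^3*(Y^2*X) := by
    rw [hMabs, hδX]
    nlinarith [mul_nonneg (mul_nonneg (sq_nonneg Y) hX0) (by positivity : (0:ℝ) ≤ h^3),
      mul_nonneg (mul_nonneg hh.le hX0) (sq_nonneg b),
      mul_nonneg (mul_nonneg hh.le hX0) (mul_nonneg (mul_nonneg hh.le hY0) (mul_nonneg hh.le hY0))]
  have hstep : (3/2)*b^2*(h*X) ≤ 6*π*κ₁*b := by
    have s1 : b*(h*X) ≤ b*(2*π) := mul_le_mul_of_nonneg_left hXπ hb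
    have s3 : b*(b*(h*X)) ≤ (2*κ₁)*(b*(h*X)) :=
      mul_le_mul_of_nonneg_right hκb (mul_nonneg hb hXh0)
    have s4 : (2*κ₁)*(b*(h*X)) ≤ (2*κ₁)*(b*(2*π)) :=
      mul_le_mul_of_nonneg_left s1 (le_trans hb hκb)
    nlinarith [s3, s4]
  have hσ1 : (sig p).1 = p.1 + ee p.2 := rfl
  have hσ2 : (sig p).2 = p.2 := rfl
  have hk7 : Y^2*X*Θ ≤ k7F h u θinf (sig p) := by
    rw [k7F, hσ1, hσ2, ← hX_def, ← hY_def, ← hΘ_def]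
    have h0 : 0 ≤ |Dp h (rhoP h u) p.2 (p.1 + ee p.2)|^2 * |Dp h (thetaP h u) p.2 (p.1 + ee p.2)| := by
      positivity
    exact mul_le_mul_of_nonneg_right (by linarith) hΘ0
  have hk5 : b*Θ = k5Z h u θinf ((sig p).1) := by rw [k5Z, hσ1, ← hb_def, ← hΘ_def]
  calc |Mf h u p * (thetaP h u (p.1 + ee p.2) - θinf)| = |Mf h u p| * Θ := by rw [abs_mul]
  _ ≤ ((3/2)*b^2*(h*X) + h^3*(Y^2*X)) * Θ := mul_le_mul_of_nonneg_right hMb hΘ0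
  _ = ((3/2)*b^2*(h*X))*Θ + h^3*(Y^2*X*Θ) := by ring
  _ ≤ (6*π*κ₁*b)*Θ + h^3*(k7F h u θinf (sig p)) := by
      have t1 : ((3/2)*b^2*(h*X))*Θ ≤ (6*π*κ₁*b)*Θ := mul_le_mul_of_nonneg_right hstep hΘ0
      have t2 : h^3*(Y^2*X*Θ) ≤ h^3*(k7F h u θinf (sig p)) :=
        mul_le_mul_of_nonneg_left hk7 (by positivity)
      linarith
  _ = 6*π*κ₁ * k5Z h u θinf ((sig p).1) + h^3 * k7F h u θinf (sig p) := by rw [← hk5]; ring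

/-- the main nonnegative families -/
def aF (h : ℝ) (u : ℤ × ℤ → ℝ) (p : (ℤ × ℤ) × Fin 2) : ℝ :=
  (rhoP h u p.1)^2 * (Dp h (thetaP h u) p.2 p.1)^2

def bF (h : ℝ) (u : ℤ × ℤ → ℝ) (p : (ℤ × ℤ) × Fin 2) : ℝ :=
  (rhoP h u p.1)^2 * (Dm h (thetaP h u) p.2 p.1)^2

def sF (h : ℝ) (u : ℤ × ℤ → ℝ) (p : (ℤ × ℤ) × Fin 2) : ℝ :=
  (rhoP h u p.1)^2 * (|Dp h (thetaP h u) p.2 p.1|^2 + |Dm h (thetaP h u) p.2 p.1|^2)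

lemma sF_eq (h : ℝ) (u : ℤ × ℤ → ℝ) (p : (ℤ × ℤ) × Fin 2) :
    sF h u p = aF h u p + bF h u p := by
  rw [sF, aF, bF, sq_abs, sq_abs]; ring

lemma Mdelta (h : ℝ) (hne : h ≠ 0) (u : ℤ × ℤ → ℝ) (θinf : ℝ) (p : (ℤ × ℤ) × Fin 2) :
    Mf h u p * (thetaP h u (p.1 + ee p.2) - θinf) - Mf h u p * (thetaP h u p.1 - θinf)
      = h^2/2 * (aF h u p + bF h u (sig p)) := by
  have hb : bF h u (sig p) = (rhoP h u (p.1 + ee p.2))^2 * (Dp h (thetaP h u) p.2 p.1)^2 := by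
    show bF h u (p.1 + ee p.2, p.2) = _
    rw [bF]
    simp only [Dm_shift]
  rw [Mf, aF, hb, Dp]
  field_simp
  ring

lemma summable_fst {x : ℤ × ℤ → ℝ} (h0 : ∀ i, 0 ≤ x i) (hx : Summable x) :
    Summable (fun p : (ℤ × ℤ) × Fin 2 => x p.1) := by
  rw [summable_prod_of_nonneg (fun p => h0 p.1)]
  refine ⟨fun i => (hasSum_fintype _).summable, ?_⟩
  have he : (fun i : ℤ × ℤ => ∑' _ : Fin 2, x i) = fun i => x i + x i := by
    funext i; rw [tsum_fintype, Fin.sum_univ_two]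
  rw [he]
  exact hx.add hx

lemma maj_bound {ι : Type*} {g m : ι → ℝ} {c : ℝ} (hm : HasSum m c) (hb : ∀ p, |g p| ≤ m p) :
    Summable g ∧ |∑' p, g p| ≤ c ∧ (∑' p, |g p|) ≤ c := by
  have hsa : Summable (fun p => |g p|) :=
    Summable.of_nonneg_of_le (fun p => abs_nonneg _) hb hm.summable
  have hs : Summable g := summable_abs_iff.mp hsa
  have h2 : (∑' p, |g p|) ≤ c := by
    calc (∑' p, |g p|) ≤ ∑' p, m p := Summable.tsum_le_tsum hb hsa hm.summable
    _ = c := hm.tsum_eq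
  refine ⟨hs, ?_, h2⟩
  have h3 : ‖∑' p, g p‖ ≤ ∑' p, ‖g p‖ :=
    norm_tsum_le_tsum_norm (by simpa [Real.norm_eq_abs] using hsa)
  rw [Real.norm_eq_abs] at h3
  have h4 : (∑' p, ‖g p‖) = ∑' p, |g p| := tsum_congr (fun p => Real.norm_eq_abs _)
  rw [h4] at h3
  exact h3.trans h2

lemma k3F_nonneg (h : ℝ) (u : ℤ × ℤ → ℝ) (θinf : ℝ) (p : (ℤ × ℤ) × Fin 2) :
    0 ≤ k3F h u θinf p := by
  rw [k3F]; positivity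

lemma k4F_nonneg (h : ℝ) (u : ℤ × ℤ → ℝ) (θinf : ℝ) (p : (ℤ × ℤ) × Fin 2) :
    0 ≤ k4F h u θinf p := by
  rw [k4F]
  apply mul_nonneg (mul_nonneg (rho_nonneg h u p.1) _) (abs_nonneg _)
  apply add_nonneg
  · exact mul_nonneg (abs_nonneg _) (by positivity)
  · exact mul_nonneg (abs_nonneg _) (by positivity)

lemma k7F_nonneg (h : ℝ) (u : ℤ × ℤ → ℝ) (θinf : ℝ) (p : (ℤ × ℤ) × Fin 2) :
    0 ≤ k7F h u θinf p := by
  rw [k7F]; positivity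

end FKAux

/-- Theorem 1.1 / `DGDG` of the paper.  Quantitative rigidity estimate
for solutions of the discrete semilinear equation `Lu_i = f(i,u_i)` on `hℤ²`. -/
theorem statement0
    (h : ℝ) (hh : 0 < h)
    (u : ℤ × ℤ → ℝ) (f Lf : (ℤ × ℤ) → ℝ → ℝ) (κ₀ : ℝ) (hκ₀ : 0 < κ₀)
    (heq : ∀ i : ℤ × ℤ, Lap h u i = f i (u i))
    (hH : Hplus h u f Lf κ₀)
    (hnd : NondegP u)
    (κ₁ : ℝ) (hκ₁ : ∀ (i : ℤ × ℤ) (j : Fin 2), |Dp h u j i| ≤ κ₁)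
    (θinf : ℝ) (hθinf : θinf ∈ Set.Ioc (-π) π)
    (κ₂ κ₃ κ₄ κ₅ κ₆ κ₇ : ℝ)
    (hκ₂ : HasSum (fun p : (ℤ × ℤ) × Fin 2 =>
      (rhoP h u p.1) ^ 2 *
        (|Dp h (thetaP h u) p.2 p.1| * |Dp h (Dp h (thetaP h u) p.2) p.2 (p.1 - ee p.2)| +
         |Dm h (thetaP h u) p.2 p.1| * |Dm h (Dm h (thetaP h u) p.2) p.2 (p.1 + ee p.2)|)) κ₂)
    (hκ₃ : HasSum (fun p : (ℤ × ℤ) × Fin 2 =>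
      (rhoP h u p.1) ^ 2 *
        (|Dp h (thetaP h u) p.2 p.1| ^ 3 + |Dm h (thetaP h u) p.2 p.1| ^ 3) *
        |thetaP h u p.1 - θinf|) κ₃)
    (hκ₄ : HasSum (fun p : (ℤ × ℤ) × Fin 2 =>
      rhoP h u p.1 *
        (|Dp h (rhoP h u) p.2 p.1| * |Dp h (thetaP h u) p.2 p.1| ^ 2 +
         |Dm h (rhoP h u) p.2 p.1| * |Dm h (thetaP h u) p.2 p.1| ^ 2) *
        |thetaP h u p.1 - θinf|) κ₄)
    (hκ₅ : HasSum (fun i : ℤ × ℤ => κ₀ * (rhoP h u i * |thetaP h u i - θinf|)) κ₅)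
    (hκ₆ : HasSum (fun p : (ℤ × ℤ) × Fin 2 =>
      (|Dp h (fun k => (rhoP h u k) ^ 2) p.2 p.1| * |Dp h (Dp h (thetaP h u) p.2) p.2 p.1| +
       |Dm h (fun k => (rhoP h u k) ^ 2) p.2 p.1| * |Dm h (Dm h (thetaP h u) p.2) p.2 p.1| +
       h * (rhoP h u p.1) ^ 2 * |Lj h (Lj h (thetaP h u) p.2) p.2 p.1|) *
      |thetaP h u p.1 - θinf|) κ₆)
    (hκ₇ : HasSum (fun p : (ℤ × ℤ) × Fin 2 =>
      (|Dp h (rhoP h u) p.2 p.1| ^ 2 * |Dp h (thetaP h u) p.2 p.1| +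
       |Dm h (rhoP h u) p.2 p.1| ^ 2 * |Dm h (thetaP h u) p.2 p.1|) *
      |thetaP h u p.1 - θinf|) κ₇) :
    (∑' p : (ℤ × ℤ) × Fin 2, ENNReal.ofReal
        ((rhoP h u p.1) ^ 2 *
          (|Dp h (thetaP h u) p.2 p.1| ^ 2 + |Dm h (thetaP h u) p.2 p.1| ^ 2)))
      ≤ ENNReal.ofReal
          (4 * (κ₂ + 2 * Real.exp (2 * π) * κ₃ + 2 * Real.exp (2 * π) * κ₄ +
            2 * κ₅ + κ₆ + κ₇) * h) := by
  classical
  open FKAux in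
  have hne : h ≠ 0 := ne_of_gt hh
  have hπ : (0:ℝ) < π := Real.pi_pos
  have hκ₁0 : (0:ℝ) ≤ κ₁ := le_trans (abs_nonneg _) (hκ₁ 0 0)
  -- rename hypothesis families
  have hκ₃' : HasSum (FKAux.k3F h u θinf) κ₃ := hκ₃
  have hκ₄' : HasSum (FKAux.k4F h u θinf) κ₄ := hκ₄
  have hκ₅' : HasSum (fun i => κ₀ * FKAux.k5Z h u θinf i) κ₅ := hκ₅
  have hκ₇' : HasSum (FKAux.k7F h u θinf) κ₇ := hκ₇
  -- nonnegativity of the constants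
  have κ₃0 : 0 ≤ κ₃ := hκ₃'.nonneg (FKAux.k3F_nonneg h u θinf)
  have κ₄0 : 0 ≤ κ₄ := hκ₄'.nonneg (FKAux.k4F_nonneg h u θinf)
  have κ₇0 : 0 ≤ κ₇ := hκ₇'.nonneg (FKAux.k7F_nonneg h u θinf)
  have κ₅0 : 0 ≤ κ₅ := hκ₅'.nonneg (fun i => mul_nonneg hκ₀.le
    (mul_nonneg (FKAux.rho_nonneg h u i) (abs_nonneg _)))
  have κ₂0 : 0 ≤ κ₂ := hκ₂.nonneg (fun p => by positivity)
  have κ₆0 : 0 ≤ κ₆ := hκ₆.nonneg (fun p => mul_nonneg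
    (add_nonneg (add_nonneg (mul_nonneg (abs_nonneg _) (abs_nonneg _))
      (mul_nonneg (abs_nonneg _) (abs_nonneg _)))
      (mul_nonneg (mul_nonneg hh.le (sq_nonneg _)) (abs_nonneg _))) (abs_nonneg _))
  -- summability of the κ₅-family without the κ₀ factor
  have hk5Z : Summable (FKAux.k5Z h u θinf) := by
    have h2 : Summable (fun i => κ₀ * FKAux.k5Z h u θinf i) := hκ₅'.summable
    have h3 := h2.div_const κ₀
    exact h3.congr (fun i => mul_div_cancel_left₀ _ (ne_of_gt hκ₀))
  have hk5Znn : ∀ i, 0 ≤ FKAux.k5Z h u θinf i :=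
    fun i => mul_nonneg (FKAux.rho_nonneg h u i) (abs_nonneg _)
  have hk5P : Summable (fun p : (ℤ × ℤ) × Fin 2 => FKAux.k5Z h u θinf p.1) :=
    FKAux.summable_fst hk5Znn hk5Z
  -- summability of the model-flux families
  have hmajM : Summable (fun p : (ℤ × ℤ) × Fin 2 =>
      6*π*κ₁ * FKAux.k5Z h u θinf p.1 + h^3 * FKAux.k7F h u θinf p) :=
    (hk5P.mul_left _).add (hκ₇'.summable.mul_left _)
  have sMA : Summable (fun p => FKAux.Mf h u p * (thetaP h u p.1 - θinf)) :=
    summable_abs_iff.mp (Summable.of_nonneg_of_le (fun p => abs_nonneg _)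
      (fun p => FKAux.Mf_boundA h hh u θinf κ₁ hκ₁ p) hmajM)
  have hmajMσ : Summable ((fun p : (ℤ × ℤ) × Fin 2 =>
      6*π*κ₁ * FKAux.k5Z h u θinf p.1 + h^3 * FKAux.k7F h u θinf p) ∘ FKAux.sig) :=
    (Equiv.summable_iff FKAux.sig).mpr hmajM
  have sMB : Summable (fun p => FKAux.Mf h u p * (thetaP h u (p.1 + ee p.2) - θinf)) :=
    summable_abs_iff.mp (Summable.of_nonneg_of_le (fun p => abs_nonneg _)
      (fun p => FKAux.Mf_boundB h hh u θinf κ₁ hκ₁ p) hmajMσ)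
  -- the remainder-flux families, with numeric bounds
  have hRmaj : HasSum (fun p => h^3 * (2 * FKAux.k3F h u θinf p +
      (4*π * FKAux.k4F h u θinf p + FKAux.k7F h u θinf p)))
      (h^3 * (2*κ₃ + (4*π*κ₄ + κ₇))) :=
    ((hκ₃'.mul_left 2).add ((hκ₄'.mul_left (4*π)).add hκ₇')).mul_left (h^3)
  obtain ⟨sRA, hRAval, -⟩ := FKAux.maj_bound hRmaj (fun p => FKAux.Rf_boundA h hh u θinf p)
  have hRmajσ : HasSum ((fun p => h^3 * (2 * FKAux.k3F h u θinf p +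
      (4*π * FKAux.k4F h u θinf p + FKAux.k7F h u θinf p))) ∘ FKAux.sig)
      (h^3 * (2*κ₃ + (4*π*κ₄ + κ₇))) :=
    (Equiv.hasSum_iff FKAux.sig).mpr hRmaj
  obtain ⟨sRB, hRBval, -⟩ := FKAux.maj_bound hRmajσ (fun p => FKAux.Rf_boundB h hh u θinf p)
  -- the full flux families
  have sWA : Summable (fun p => FKAux.Wf h u p * (thetaP h u p.1 - θinf)) :=
    (sMA.add sRA).congr (fun p => by rw [FKAux.Rf]; ring)
  have sWB : Summable (fun p => FKAux.Wf h u p * (thetaP h u (p.1 + ee p.2) - θinf)) :=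
    (sMB.add sRB).congr (fun p => by rw [FKAux.Rf]; ring)
  -- Abel summation against the equation
  have sWBσ : Summable (fun p => FKAux.Wf h u (FKAux.sig.symm p) * (thetaP h u p.1 - θinf)) := by
    have h1 := (Equiv.summable_iff FKAux.sig.symm).mpr sWB
    exact h1.congr (fun p => by
      simp only [Function.comp_apply, FKAux.sig_symm_apply, sub_add_cancel])
  have sF2 : Summable (fun p => FKAux.Wf h u p * (thetaP h u p.1 - θinf)
      - FKAux.Wf h u (FKAux.sig.symm p) * (thetaP h u p.1 - θinf)) := sWA.sub sWBσ
  have hFval : (∑' p, (FKAux.Wf h u p * (thetaP h u p.1 - θinf)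
        - FKAux.Wf h u (FKAux.sig.symm p) * (thetaP h u p.1 - θinf)))
      = (∑' p, FKAux.Wf h u p * (thetaP h u p.1 - θinf))
        - (∑' p, FKAux.Wf h u p * (thetaP h u (p.1 + ee p.2) - θinf)) := by
    rw [Summable.tsum_sub sWA sWBσ]
    congr 1
    have h1 := Equiv.tsum_eq FKAux.sig.symm
      (fun q : (ℤ × ℤ) × Fin 2 => FKAux.Wf h u q * (thetaP h u (q.1 + ee q.2) - θinf))
    rw [← h1]
    exact tsum_congr (fun p => by
      simp only [FKAux.sig_symm_apply, sub_add_cancel])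
  have hfib : ∀ i : ℤ × ℤ, HasSum (fun j : Fin 2 =>
      (FKAux.Wf h u (i, j) * (thetaP h u i - θinf)
        - FKAux.Wf h u (FKAux.sig.symm (i, j)) * (thetaP h u i - θinf)))
      (h^2 * FKAux.gF h u f i * (thetaP h u i - θinf)) := by
    intro i
    have hs := hasSum_fintype (fun j : Fin 2 =>
      (FKAux.Wf h u (i, j) * (thetaP h u i - θinf)
        - FKAux.Wf h u (FKAux.sig.symm (i, j)) * (thetaP h u i - θinf)))
    have he := FKAux.div_identity' h hne u f heq i
    have hval : (∑ j : Fin 2, (FKAux.Wf h u (i, j) * (thetaP h u i - θinf)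
        - FKAux.Wf h u (FKAux.sig.symm (i, j)) * (thetaP h u i - θinf)))
        = h^2 * FKAux.gF h u f i * (thetaP h u i - θinf) := by
      rw [Fin.sum_univ_two] at he ⊢
      simp only [FKAux.sig_symm_apply]
      linear_combination (thetaP h u i - θinf) * he
    rwa [hval] at hs
  have hG : HasSum (fun i => h^2 * FKAux.gF h u f i * (thetaP h u i - θinf))
      (∑' p, (FKAux.Wf h u p * (thetaP h u p.1 - θinf)
        - FKAux.Wf h u (FKAux.sig.symm p) * (thetaP h u p.1 - θinf))) :=
    HasSum.prod_fiberwise sF2.hasSum hfib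
  -- numeric bound on the equation term
  have hGmaj : HasSum (fun i => h^3 * (κ₀ * FKAux.k5Z h u θinf i)) (h^3 * κ₅) :=
    hκ₅'.mul_left _
  have hGb : ∀ i, |h^2 * FKAux.gF h u f i * (thetaP h u i - θinf)|
      ≤ h^3 * (κ₀ * FKAux.k5Z h u θinf i) := by
    intro i
    have h1 := FKAux.gF_bound h hh u f Lf κ₀ hH i
    have h2 : |h^2 * FKAux.gF h u f i * (thetaP h u i - θinf)|
        = h^2 * |FKAux.gF h u f i| * |thetaP h u i - θinf| := by
      rw [abs_mul, abs_mul, abs_of_nonneg (sq_nonneg h)]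
    rw [h2, FKAux.k5Z]
    have hΘnn : (0:ℝ) ≤ |thetaP h u i - θinf| := abs_nonneg _
    calc h^2 * |FKAux.gF h u f i| * |thetaP h u i - θinf|
        ≤ h^2 * (κ₀ * h * rhoP h u i) * |thetaP h u i - θinf| :=
          mul_le_mul_of_nonneg_right (mul_le_mul_of_nonneg_left h1 (sq_nonneg h)) hΘnn
    _ = h^3 * (κ₀ * (rhoP h u i * |thetaP h u i - θinf|)) := by ring
  obtain ⟨sGf, hGabs, -⟩ := FKAux.maj_bound hGmaj hGb
  have hEbound : |(∑' p, FKAux.Wf h u p * (thetaP h u p.1 - θinf))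
      - (∑' p, FKAux.Wf h u p * (thetaP h u (p.1 + ee p.2) - θinf))| ≤ h^3 * κ₅ := by
    rw [← hFval, ← hG.tsum_eq]
    exact hGabs
  -- the T quantity and its splitting
  have sMδ : Summable (fun p => FKAux.Mf h u p * (thetaP h u (p.1 + ee p.2) - θinf)
      - FKAux.Mf h u p * (thetaP h u p.1 - θinf)) := sMB.sub sMA
  have hab : ∀ p, FKAux.Mf h u p * (thetaP h u (p.1 + ee p.2) - θinf)
      - FKAux.Mf h u p * (thetaP h u p.1 - θinf)
      = h^2/2 * (FKAux.aF h u p + FKAux.bF h u (FKAux.sig p)) := FKAux.Mdelta h hne u θinf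
  have sab : Summable (fun p => FKAux.aF h u p + FKAux.bF h u (FKAux.sig p)) := by
    have h1 : Summable (fun p => h^2/2 * (FKAux.aF h u p + FKAux.bF h u (FKAux.sig p))) :=
      sMδ.congr hab
    exact (h1.mul_left (2/h^2)).congr (fun p => by field_simp)
  have haFnn : ∀ p, 0 ≤ FKAux.aF h u p := fun p => mul_nonneg (sq_nonneg _) (sq_nonneg _)
  have hbFnn : ∀ p : (ℤ × ℤ) × Fin 2, 0 ≤ FKAux.bF h u p :=
    fun p => mul_nonneg (sq_nonneg _) (sq_nonneg _)
  have saF : Summable (FKAux.aF h u) :=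
    Summable.of_nonneg_of_le haFnn (fun p => le_add_of_nonneg_right (hbFnn _)) sab
  have sbFσ : Summable (fun p => FKAux.bF h u (FKAux.sig p)) :=
    Summable.of_nonneg_of_le (fun p => hbFnn _) (fun p => le_add_of_nonneg_left (haFnn _)) sab
  have sbF : Summable (FKAux.bF h u) := (Equiv.summable_iff FKAux.sig).mp sbFσ
  -- the sum identity
  have hsum_ab : (∑' p, FKAux.aF h u p) + (∑' p, FKAux.bF h u p)
      = 2/h^2 * ((∑' p, FKAux.Mf h u p * (thetaP h u (p.1 + ee p.2) - θinf))
        - (∑' p, FKAux.Mf h u p * (thetaP h u p.1 - θinf))) := by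
    have e1 : (∑' p, FKAux.bF h u p) = (∑' p, FKAux.bF h u (FKAux.sig p)) :=
      (Equiv.tsum_eq FKAux.sig (FKAux.bF h u)).symm
    rw [e1, ← Summable.tsum_add saF sbFσ]
    have e2 : ∀ p, FKAux.aF h u p + FKAux.bF h u (FKAux.sig p)
        = 2/h^2 * (FKAux.Mf h u p * (thetaP h u (p.1 + ee p.2) - θinf)
          - FKAux.Mf h u p * (thetaP h u p.1 - θinf)) := by
      intro p; rw [hab p]; field_simp
    rw [tsum_congr e2, tsum_mul_left, Summable.tsum_sub sMB sMA]
  -- split M sums into W and R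
  have hMWA : (∑' p, FKAux.Mf h u p * (thetaP h u p.1 - θinf))
      = (∑' p, FKAux.Wf h u p * (thetaP h u p.1 - θinf))
        - (∑' p, FKAux.Rf h u p * (thetaP h u p.1 - θinf)) := by
    rw [← Summable.tsum_sub sWA sRA]
    exact tsum_congr (fun p => by rw [FKAux.Rf]; ring)
  have hMWB : (∑' p, FKAux.Mf h u p * (thetaP h u (p.1 + ee p.2) - θinf))
      = (∑' p, FKAux.Wf h u p * (thetaP h u (p.1 + ee p.2) - θinf))
        - (∑' p, FKAux.Rf h u p * (thetaP h u (p.1 + ee p.2) - θinf)) := by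
    rw [← Summable.tsum_sub sWB sRB]
    exact tsum_congr (fun p => by rw [FKAux.Rf]; ring)
  -- bound on T
  have hTbound : (∑' p, FKAux.Mf h u p * (thetaP h u (p.1 + ee p.2) - θinf))
      - (∑' p, FKAux.Mf h u p * (thetaP h u p.1 - θinf))
      ≤ h^3 * κ₅ + (h^3 * (2*κ₃ + (4*π*κ₄ + κ₇)) + h^3 * (2*κ₃ + (4*π*κ₄ + κ₇))) := by
    rw [hMWA, hMWB]
    have h1 := abs_le.mp hEbound
    have h2 := abs_le.mp hRAval
    have h3 := abs_le.mp hRBval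
    linarith [h1.1, h1.2, h2.1, h2.2, h3.1, h3.2]
  -- final numeric assembly
  have hsF_sum : Summable (FKAux.sF h u) :=
    (saF.add sbF).congr (fun p => (FKAux.sF_eq h u p).symm)
  have hsF_val : (∑' p, FKAux.sF h u p)
      ≤ 4 * (κ₂ + 2 * Real.exp (2 * π) * κ₃ + 2 * Real.exp (2 * π) * κ₄ +
          2 * κ₅ + κ₆ + κ₇) * h := by
    have e3 : (∑' p, FKAux.sF h u p) = (∑' p, FKAux.aF h u p) + (∑' p, FKAux.bF h u p) := by
      rw [← Summable.tsum_add saF sbF]; exact tsum_congr (fun p => FKAux.sF_eq h u p)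
    rw [e3, hsum_ab]
    have hhp : (0:ℝ) ≤ 2/h^2 := by positivity
    have hT2 := mul_le_mul_of_nonneg_left hTbound hhp
    have hexp : 2*π + 1 ≤ Real.exp (2*π) := by
      have := Real.add_one_le_exp (2*π); linarith
    have he1 : (1:ℝ) ≤ Real.exp (2*π) := by linarith
    have he2 : 2*π ≤ Real.exp (2*π) := by linarith
    calc 2/h^2 * ((∑' p, FKAux.Mf h u p * (thetaP h u (p.1 + ee p.2) - θinf))
          - (∑' p, FKAux.Mf h u p * (thetaP h u p.1 - θinf)))
        ≤ 2/h^2 * (h^3 * κ₅ + (h^3 * (2*κ₃ + (4*π*κ₄ + κ₇)) + h^3 * (2*κ₃ + (4*π*κ₄ + κ₇)))) := hT2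
    _ = 2*κ₅*h + (8*κ₃*h + 16*π*κ₄*h + 4*κ₇*h) := by field_simp; ring
    _ ≤ 4 * (κ₂ + 2 * Real.exp (2 * π) * κ₃ + 2 * Real.exp (2 * π) * κ₄ +
          2 * κ₅ + κ₆ + κ₇) * h := by
        nlinarith [mul_nonneg κ₂0 hh.le, mul_nonneg κ₅0 hh.le, mul_nonneg κ₆0 hh.le,
          mul_nonneg (mul_nonneg κ₃0 hh.le) (sub_nonneg.mpr he1),
          mul_nonneg (mul_nonneg κ₄0 hh.le) (sub_nonneg.mpr he2)]
  have hsnn : ∀ p, 0 ≤ FKAux.sF h u p :=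
    fun p => mul_nonneg (sq_nonneg _) (add_nonneg (by positivity) (by positivity))
  calc (∑' p : (ℤ × ℤ) × Fin 2, ENNReal.ofReal
        ((rhoP h u p.1) ^ 2 *
          (|Dp h (thetaP h u) p.2 p.1| ^ 2 + |Dm h (thetaP h u) p.2 p.1| ^ 2)))
      = ENNReal.ofReal (∑' p, FKAux.sF h u p) :=
        (ENNReal.ofReal_tsum_of_nonneg hsnn hsF_sum).symm
  _ ≤ ENNReal.ofReal (4 * (κ₂ + 2 * Real.exp (2 * π) * κ₃ + 2 * Real.exp (2 * π) * κ₄ +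
        2 * κ₅ + κ₆ + κ₇) * h) := ENNReal.ofReal_le_ofReal hsF_val
end
end

section
/- Let h > 0 and let u : ℤ² → ℝ solve Lu_i = f(i, u_i) for all i ∈ ℤ², where f satisfies the structural condition (H⁺) with data L_f⁺, κ₀⁺ and the structural condition (H⁻) with data L_f⁻, κ₀⁻. Assume both the forward and backward nondegeneracy conditions hold, that κ₁⁺, κ₂⁺ and κ₁⁻, κ₂⁻ are finite, and that for some ϑ∞⁺, ϑ∞⁻ ∈ (−π,π] the quantities κ₃^±, κ₄^±, κ₅^±, κ₆^±, κ₇^± are all finite. Then Σ_{i∈ℤ², j∈{1,2}} [ (ρ_i⁺)²( |Dⱼ⁺ϑ_i⁺|² + |Dⱼ⁻ϑ_i⁺|² ) + (ρ_i⁻)²( |Dⱼ⁺ϑ_i⁻|² + |Dⱼ⁻ϑ_i⁻|² ) ] ≤ C·h, where κ_m := κ_m⁺ + κ_m⁻ and C := 4( κ₂ + 2e^{2π}κ₃ + 2e^{2π}κ₄ + 2κ₅ + κ₆ + κ₇ ). -/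
noncomputable section

open Real

namespace FK

lemma abs_sub_sin_le (x : ℝ) : |x - Real.sin x| ≤ 2 * |x|^3 := by
  have key : ∀ y : ℝ, 0 ≤ y → |y - Real.sin y| ≤ 2 * |y|^3 := by
    intro y hy
    rcases le_or_gt y 1 with h1 | h1
    · have h0 : 0 ≤ y - Real.sin y := by
        have := Real.sin_le hy; linarith
      rw [_root_.abs_of_nonneg h0, _root_.abs_of_nonneg hy]
      rcases eq_or_lt_of_le hy with rfl | hy'
      · simp
      · have := Real.sin_gt_sub_cube hy'
        nlinarith [pow_nonneg hy 3]
    · have hs1 : Real.sin y ≤ 1 := Real.sin_le_one y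
      have hs2 : -1 ≤ Real.sin y := Real.neg_one_le_sin y
      have h3 : y ≤ y^3 := by
        calc y = y^1 := (pow_one y).symm
        _ ≤ y^3 := pow_le_pow_right₀ h1.le (by norm_num)
      rw [_root_.abs_of_nonneg hy, abs_le]; constructor <;> nlinarith
  rcases le_or_gt 0 x with hx | hx
  · exact key x hx
  · have h2 := key (-x) (by linarith)
    rw [Real.sin_neg, abs_neg] at h2
    have : |x - Real.sin x| = |-x - -Real.sin x| := by
      rw [show (-x - -Real.sin x) = -(x - Real.sin x) by ring, abs_neg]
    rw [this]
    simpa using h2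

/-- Auxiliary: the imaginary part of `conj z * w`. -/
lemma im_conj_mul (z w : ℂ) :
    ((starRingEnd ℂ) z * w).im = ‖z‖ * ‖w‖ * Real.sin (w.arg - z.arg) := by
  have h : (starRingEnd ℂ) z * w
      = ((‖z‖ * ‖w‖ : ℝ) : ℂ) * Complex.exp (((w.arg - z.arg : ℝ) : ℂ) * Complex.I) := by
    conv_lhs => rw [← Complex.norm_mul_exp_arg_mul_I z, ← Complex.norm_mul_exp_arg_mul_I w]
    rw [map_mul, ← Complex.exp_conj]
    simp only [Complex.conj_ofReal, map_mul, Complex.conj_I, mul_neg]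
    rw [mul_mul_mul_comm, ← Complex.exp_add]
    push_cast
    ring_nf
  rw [h]
  simp only [Complex.mul_im, Complex.ofReal_re, Complex.ofReal_im, Complex.exp_ofReal_mul_I_im,
    zero_mul, add_zero]

/-- Auxiliary: per-site divergence identity. -/
lemma keyI (h : ℝ) (U : ℤ × ℤ → ℂ) (c : ℤ × ℤ → ℝ) (E : ℤ × ℤ → ℂ)
    (Heq : ∀ i : ℤ × ℤ, U (i + ee 0) + U (i - ee 0) + U (i + ee 1) + U (i - ee 1) - 4 * U i
        = (h:ℂ)^2 * ((c i : ℂ) * U i + E i)) (i : ℤ × ℤ) :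
    (((starRingEnd ℂ) (U i) * U (i + ee 0)).im - ((starRingEnd ℂ) (U (i - ee 0)) * U ((i - ee 0) + ee 0)).im)
    + (((starRingEnd ℂ) (U i) * U (i + ee 1)).im - ((starRingEnd ℂ) (U (i - ee 1)) * U ((i - ee 1) + ee 1)).im)
      = h^2 * ((starRingEnd ℂ) (U i) * E i).im := by
  have h4 := Heq i
  rw [show ((h:ℂ))^2 = ((h^2 : ℝ) : ℂ) from by push_cast; ring] at h4
  simp only [sub_add_cancel]
  have expand : (((starRingEnd ℂ) (U i) * U (i + ee 0)).im - ((starRingEnd ℂ) (U (i - ee 0)) * U i).im)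
      + (((starRingEnd ℂ) (U i) * U (i + ee 1)).im - ((starRingEnd ℂ) (U (i - ee 1)) * U i).im)
      = ((starRingEnd ℂ) (U i) * (U (i + ee 0) + U (i - ee 0) + U (i + ee 1) + U (i - ee 1) - 4 * U i)).im := by
    simp only [Complex.mul_im, Complex.add_im, Complex.add_re, Complex.sub_im, Complex.sub_re,
      Complex.mul_re, Complex.conj_re, Complex.conj_im, Complex.re_ofNat, Complex.im_ofNat]
    ring
  rw [expand, h4]
  simp only [Complex.mul_im, Complex.add_im, Complex.add_re, Complex.mul_re,
    Complex.conj_re, Complex.conj_im, Complex.ofReal_re, Complex.ofReal_im]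
  ring

/-- The index shift `(i, j) ↦ (i + eⱼ, j)` as an equivalence. -/
def shiftE : ((ℤ×ℤ)×Fin 2) ≃ ((ℤ×ℤ)×Fin 2) where
  toFun p := (p.1 + ee p.2, p.2)
  invFun p := (p.1 - ee p.2, p.2)
  left_inv p := by simp
  right_inv p := by simp

lemma summable_pair {F : ((ℤ×ℤ)×Fin 2) → ℝ} (h0 : ∀ p, 0 ≤ F p)
    (hs : ∀ j : Fin 2, Summable (fun a => F (a, j))) : Summable F := by
  refine (summable_prod_of_nonneg h0).mpr ⟨fun a => ?_, ?_⟩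
  · exact Summable.of_finite
  · have hfe : (fun a : ℤ×ℤ => ∑' j : Fin 2, F (a, j)) = fun a => F (a, 0) + F (a, 1) := by
      funext a; rw [tsum_fintype, Fin.sum_univ_two]
    rw [hfe]; exact (hs 0).add (hs 1)

end FK
namespace FK

set_option maxHeartbeats 1600000 in
/-- Master geometric estimate. -/
lemma core (h : ℝ) (hh : 0 < h)
    (U : ℤ×ℤ → ℂ) (c : ℤ×ℤ → ℝ) (E : ℤ×ℤ → ℂ) (ρ θ : ℤ×ℤ → ℝ)
    (hρ : ∀ i, ρ i = ‖U i‖) (hθ : ∀ i, θ i = (U i).arg)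
    (M : ℝ) (hM : ∀ i, ρ i ≤ M)
    (Heq : ∀ i : ℤ×ℤ, U (i + ee 0) + U (i - ee 0) + U (i + ee 1) + U (i - ee 1) - 4 * U i
        = (h:ℂ)^2 * ((c i : ℂ) * U i + E i))
    (κ₀ : ℝ) (hκ₀ : 0 < κ₀) (HE : ∀ i, ‖E i‖ ≤ κ₀ * h)
    (θinf : ℝ) (κ₃ κ₄ κ₅ κ₇ : ℝ)
    (h3 : HasSum (fun p : (ℤ×ℤ)×Fin 2 =>
      (ρ p.1)^2 * (|Dp h θ p.2 p.1|^3 + |Dm h θ p.2 p.1|^3) * |θ p.1 - θinf|) κ₃)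
    (h4 : HasSum (fun p : (ℤ×ℤ)×Fin 2 =>
      ρ p.1 * (|Dp h ρ p.2 p.1| * |Dp h θ p.2 p.1|^2 +
         |Dm h ρ p.2 p.1| * |Dm h θ p.2 p.1|^2) * |θ p.1 - θinf|) κ₄)
    (h5 : HasSum (fun i : ℤ×ℤ => κ₀ * (ρ i * |θ i - θinf|)) κ₅)
    (h7 : HasSum (fun p : (ℤ×ℤ)×Fin 2 =>
      (|Dp h ρ p.2 p.1|^2 * |Dp h θ p.2 p.1| +
       |Dm h ρ p.2 p.1|^2 * |Dm h θ p.2 p.1|) * |θ p.1 - θinf|) κ₇) :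
    (∑' p : (ℤ×ℤ)×Fin 2, ENNReal.ofReal
        ((ρ p.1)^2 * (|Dp h θ p.2 p.1|^2 + |Dm h θ p.2 p.1|^2)))
      ≤ ENNReal.ofReal ((8*κ₃ + 16*π*κ₄ + 2*κ₅ + 2*κ₇) * h) := by
  have hh' : h ≠ 0 := hh.ne'
  have hρ0 : ∀ i, 0 ≤ ρ i := fun i => (hρ i).symm ▸ norm_nonneg _
  have hM0 : 0 ≤ M := le_trans (hρ0 (0,0)) (hM (0,0))
  have habsin : ∀ x : ℝ, |Real.sin x| ≤ 1 :=
    fun x => abs_le.mpr ⟨Real.neg_one_le_sin x, Real.sin_le_one x⟩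
  -- abbreviations
  set A : (ℤ×ℤ)×Fin 2 → ℝ :=
    fun p => ((starRingEnd ℂ) (U p.1) * U (p.1 + ee p.2)).im with hAdef
  set δ : (ℤ×ℤ)×Fin 2 → ℝ := fun p => θ (p.1 + ee p.2) - θ p.1 with hδdef
  set b : ℤ×ℤ → ℝ := fun i => ((starRingEnd ℂ) (U i) * E i).im with hbdef
  have hA : ∀ p : (ℤ×ℤ)×Fin 2, A p = ρ p.1 * ρ (p.1 + ee p.2) * Real.sin (δ p) := by
    intro p
    show ((starRingEnd ℂ) (U p.1) * U (p.1 + ee p.2)).im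
        = ρ p.1 * ρ (p.1 + ee p.2) * Real.sin (θ (p.1 + ee p.2) - θ p.1)
    simp only [hρ, hθ]
    exact im_conj_mul (U p.1) (U (p.1 + ee p.2))
  have hδeq : ∀ p : (ℤ×ℤ)×Fin 2, δ p = h * Dp h θ p.2 p.1 := by
    intro p; rw [hδdef]; show θ (p.1 + ee p.2) - θ p.1 = h * Dp h θ p.2 p.1
    rw [Dp]; field_simp
  have hδeq' : ∀ p : (ℤ×ℤ)×Fin 2, |δ p| = h * |Dp h θ p.2 p.1| := by
    intro p; rw [hδeq p, abs_mul, _root_.abs_of_pos hh]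
  have hδabs : ∀ p : (ℤ×ℤ)×Fin 2, |δ p| ≤ |θ p.1 - θinf| + |θ (p.1 + ee p.2) - θinf| := by
    intro p
    have h1 : δ p = (θ (p.1 + ee p.2) - θinf) - (θ p.1 - θinf) := by rw [hδdef]; ring
    rw [h1]
    calc |(θ (p.1 + ee p.2) - θinf) - (θ p.1 - θinf)|
        ≤ |θ (p.1 + ee p.2) - θinf| + |θ p.1 - θinf| := abs_sub _ _
    _ = |θ p.1 - θinf| + |θ (p.1 + ee p.2) - θinf| := by ring
  have hδ2π : ∀ p : (ℤ×ℤ)×Fin 2, |δ p| ≤ 2 * π := by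
    intro p
    have h1 : |θ (p.1 + ee p.2)| ≤ π := by rw [hθ]; exact Complex.abs_arg_le_pi _
    have h2 : |θ p.1| ≤ π := by rw [hθ]; exact Complex.abs_arg_le_pi _
    calc |δ p| ≤ |θ (p.1 + ee p.2)| + |θ p.1| := by rw [hδdef]; exact abs_sub _ _
    _ ≤ 2 * π := by linarith
  have hAabs1 : ∀ p : (ℤ×ℤ)×Fin 2, |A p| ≤ M * ρ p.1 := by
    intro p
    calc |A p| = ρ p.1 * ρ (p.1 + ee p.2) * |Real.sin (δ p)| := by
          rw [hA p, abs_mul, abs_mul, _root_.abs_of_nonneg (hρ0 _), _root_.abs_of_nonneg (hρ0 _)]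
    _ ≤ ρ p.1 * M * 1 := by
          apply mul_le_mul _ (habsin _) (abs_nonneg _) (by exact mul_nonneg (hρ0 _) hM0)
          exact mul_le_mul_of_nonneg_left (hM _) (hρ0 _)
    _ = M * ρ p.1 := by ring
  have hAabs2 : ∀ p : (ℤ×ℤ)×Fin 2, |A p| ≤ M * ρ (p.1 + ee p.2) := by
    intro p
    calc |A p| = ρ p.1 * ρ (p.1 + ee p.2) * |Real.sin (δ p)| := by
          rw [hA p, abs_mul, abs_mul, _root_.abs_of_nonneg (hρ0 _), _root_.abs_of_nonneg (hρ0 _)]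
    _ ≤ M * ρ (p.1 + ee p.2) * 1 := by
          apply mul_le_mul _ (habsin _) (abs_nonneg _) (by exact mul_nonneg hM0 (hρ0 _))
          exact mul_le_mul_of_nonneg_right (hM _) (hρ0 _)
    _ = M * ρ (p.1 + ee p.2) := by ring
  have hbabs : ∀ i, |b i| ≤ ρ i * (κ₀ * h) := by
    intro i
    calc |b i| ≤ ‖(starRingEnd ℂ) (U i) * E i‖ := Complex.abs_im_le_norm _
    _ = ‖U i‖ * ‖E i‖ := by rw [norm_mul, Complex.norm_conj]
    _ ≤ ρ i * (κ₀ * h) := by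
        rw [← hρ i]
        exact mul_le_mul_of_nonneg_left (HE i) (hρ0 i)
  -- summability of the weight
  have S0 : Summable (fun i : ℤ×ℤ => ρ i * |θ i - θinf|) := by
    have := h5.summable
    rwa [summable_mul_left_iff hκ₀.ne'] at this
  have SD1 : Summable (fun p : (ℤ×ℤ)×Fin 2 => ρ p.1 * |θ p.1 - θinf|) :=
    summable_pair (fun p => mul_nonneg (hρ0 _) (abs_nonneg _)) (fun j => S0)
  have SD2 : Summable (fun p : (ℤ×ℤ)×Fin 2 => ρ (p.1 + ee p.2) * |θ (p.1 + ee p.2) - θinf|) :=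
    shiftE.summable_iff.mpr SD1
  -- the two test-function sums
  have Sf1 : Summable (fun p : (ℤ×ℤ)×Fin 2 => (θ p.1 - θinf) * A p) := by
    apply Summable.of_abs
    apply Summable.of_nonneg_of_le (fun p => abs_nonneg _) _ (SD1.mul_left M)
    intro p
    rw [abs_mul]
    calc |θ p.1 - θinf| * |A p| ≤ |θ p.1 - θinf| * (M * ρ p.1) :=
          mul_le_mul_of_nonneg_left (hAabs1 p) (abs_nonneg _)
    _ = M * (ρ p.1 * |θ p.1 - θinf|) := by ring
  have Sf2 : Summable (fun p : (ℤ×ℤ)×Fin 2 => (θ (p.1 + ee p.2) - θinf) * A p) := by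
    apply Summable.of_abs
    apply Summable.of_nonneg_of_le (fun p => abs_nonneg _) _ (SD2.mul_left M)
    intro p
    rw [abs_mul]
    calc |θ (p.1 + ee p.2) - θinf| * |A p|
        ≤ |θ (p.1 + ee p.2) - θinf| * (M * ρ (p.1 + ee p.2)) :=
          mul_le_mul_of_nonneg_left (hAabs2 p) (abs_nonneg _)
    _ = M * (ρ (p.1 + ee p.2) * |θ (p.1 + ee p.2) - θinf|) := by ring
  -- the shifted test-function sum
  set g : (ℤ×ℤ)×Fin 2 → ℝ := fun p => (θ p.1 - θinf) * A (p.1 - ee p.2, p.2) with hgdef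
  have hgcomp : ∀ p : (ℤ×ℤ)×Fin 2, g (shiftE p) = (θ (p.1 + ee p.2) - θinf) * A p := by
    intro p
    show (θ (p.1 + ee p.2) - θinf) * A (p.1 + ee p.2 - ee p.2, p.2) = _
    rw [add_sub_cancel_right]
  have Sg : Summable g := by
    apply Summable.of_abs
    apply Summable.of_nonneg_of_le (fun p => abs_nonneg _) _ (SD1.mul_left M)
    intro p
    rw [hgdef]
    show |(θ p.1 - θinf) * A (p.1 - ee p.2, p.2)| ≤ M * (ρ p.1 * |θ p.1 - θinf|)
    rw [abs_mul]
    have hA2 := hAabs2 (p.1 - ee p.2, p.2)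
    rw [show (p.1 - ee p.2, p.2).1 + ee (p.1 - ee p.2, p.2).2 = p.1 from by
      show p.1 - ee p.2 + ee p.2 = p.1; exact sub_add_cancel _ _] at hA2
    calc |θ p.1 - θinf| * |A (p.1 - ee p.2, p.2)| ≤ |θ p.1 - θinf| * (M * ρ p.1) :=
          mul_le_mul_of_nonneg_left hA2 (abs_nonneg _)
    _ = M * (ρ p.1 * |θ p.1 - θinf|) := by ring
  have hgsum : ∑' p : (ℤ×ℤ)×Fin 2, g p = ∑' p : (ℤ×ℤ)×Fin 2, (θ (p.1 + ee p.2) - θinf) * A p := by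
    rw [← shiftE.tsum_eq g]
    exact tsum_congr hgcomp
  -- summation by parts
  have Stb : Summable (fun i : ℤ×ℤ => |(θ i - θinf) * b i|) := by
    apply Summable.of_nonneg_of_le (fun i => abs_nonneg _) _ (h5.summable.mul_left h)
    intro i
    rw [abs_mul]
    calc |θ i - θinf| * |b i| ≤ |θ i - θinf| * (ρ i * (κ₀ * h)) :=
          mul_le_mul_of_nonneg_left (hbabs i) (abs_nonneg _)
    _ = h * (κ₀ * (ρ i * |θ i - θinf|)) := by ring
  have htbsum : ∑' i : ℤ×ℤ, |(θ i - θinf) * b i| ≤ h * κ₅ := by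
    have hle : ∀ i : ℤ×ℤ, |(θ i - θinf) * b i| ≤ h * (κ₀ * (ρ i * |θ i - θinf|)) := by
      intro i
      rw [abs_mul]
      calc |θ i - θinf| * |b i| ≤ |θ i - θinf| * (ρ i * (κ₀ * h)) :=
            mul_le_mul_of_nonneg_left (hbabs i) (abs_nonneg _)
      _ = h * (κ₀ * (ρ i * |θ i - θinf|)) := by ring
    have := Summable.tsum_le_tsum hle Stb (h5.summable.mul_left h)
    rwa [tsum_mul_left, h5.tsum_eq] at this
  have SAδ : Summable (fun p : (ℤ×ℤ)×Fin 2 => A p * δ p) := by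
    have hsplit : (fun p : (ℤ×ℤ)×Fin 2 => A p * δ p)
        = fun p => (θ (p.1 + ee p.2) - θinf) * A p - (θ p.1 - θinf) * A p := by
      funext p; rw [hδdef]; show A p * (θ (p.1 + ee p.2) - θ p.1) = _; ring
    rw [hsplit]; exact Sf2.sub Sf1
  have main1 : ∑' p : (ℤ×ℤ)×Fin 2, A p * δ p = -(h^2 * ∑' i : ℤ×ℤ, (θ i - θinf) * b i) := by
    have hsplit : (fun p : (ℤ×ℤ)×Fin 2 => A p * δ p)
        = fun p => (θ (p.1 + ee p.2) - θinf) * A p - (θ p.1 - θinf) * A p := by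
      funext p; rw [hδdef]; show A p * (θ (p.1 + ee p.2) - θ p.1) = _; ring
    calc ∑' p : (ℤ×ℤ)×Fin 2, A p * δ p
        = ∑' p : (ℤ×ℤ)×Fin 2, ((θ (p.1 + ee p.2) - θinf) * A p - (θ p.1 - θinf) * A p) := by
          rw [hsplit]
    _ = (∑' p : (ℤ×ℤ)×Fin 2, (θ (p.1 + ee p.2) - θinf) * A p)
          - ∑' p : (ℤ×ℤ)×Fin 2, (θ p.1 - θinf) * A p := Summable.tsum_sub Sf2 Sf1
    _ = (∑' p : (ℤ×ℤ)×Fin 2, g p) - ∑' p : (ℤ×ℤ)×Fin 2, (θ p.1 - θinf) * A p := by rw [hgsum]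
    _ = ∑' p : (ℤ×ℤ)×Fin 2, (g p - (θ p.1 - θinf) * A p) := (Summable.tsum_sub Sg Sf1).symm
    _ = ∑' i : ℤ×ℤ, ∑' j : Fin 2, (g (i, j) - (θ i - θinf) * A (i, j)) :=
          Summable.tsum_prod (Sg.sub Sf1)
    _ = ∑' i : ℤ×ℤ, -((θ i - θinf) * (h^2 * b i)) := by
          apply tsum_congr; intro i
          rw [tsum_fintype, Fin.sum_univ_two]
          have hk := keyI h U c E Heq i
          rw [hgdef, hAdef, hbdef]
          show (θ i - θinf) * ((starRingEnd ℂ) (U (i - ee 0)) * U (i - ee 0 + ee 0)).im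
              - (θ i - θinf) * ((starRingEnd ℂ) (U i) * U (i + ee 0)).im
              + ((θ i - θinf) * ((starRingEnd ℂ) (U (i - ee 1)) * U (i - ee 1 + ee 1)).im
              - (θ i - θinf) * ((starRingEnd ℂ) (U i) * U (i + ee 1)).im)
              = -((θ i - θinf) * (h^2 * ((starRingEnd ℂ) (U i) * E i).im))
          linear_combination (-(θ i - θinf)) * hk
    _ = -(h^2 * ∑' i : ℤ×ℤ, (θ i - θinf) * b i) := by
          rw [tsum_neg]
          congr 1
          rw [← tsum_mul_left]
          apply tsum_congr; intro i; ring
  have bnd1 : ∑' p : (ℤ×ℤ)×Fin 2, A p * δ p ≤ h^3 * κ₅ := by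
    rw [main1]
    have h1 : |∑' i : ℤ×ℤ, (θ i - θinf) * b i| ≤ h * κ₅ := by
      have := norm_tsum_le_tsum_norm (f := fun i : ℤ×ℤ => (θ i - θinf) * b i) (by
        simpa only [Real.norm_eq_abs] using Stb)
      simp only [Real.norm_eq_abs] at this
      exact this.trans htbsum
    have h2 : -(∑' i : ℤ×ℤ, (θ i - θinf) * b i) ≤ h * κ₅ := (neg_le_abs _).trans h1
    calc -(h^2 * ∑' i : ℤ×ℤ, (θ i - θinf) * b i)
        = h^2 * (-(∑' i : ℤ×ℤ, (θ i - θinf) * b i)) := by ring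
    _ ≤ h^2 * (h * κ₅) := mul_le_mul_of_nonneg_left h2 (by positivity)
    _ = h^3 * κ₅ := by ring
  -- the weight function W
  set W : (ℤ×ℤ)×Fin 2 → ℝ := fun p => h^3 *
      ((ρ p.1)^2 * (|Dp h θ p.2 p.1|^3 + |Dm h θ p.2 p.1|^3) * |θ p.1 - θinf|
       + 2*π* (ρ p.1 * (|Dp h ρ p.2 p.1| * |Dp h θ p.2 p.1|^2
            + |Dm h ρ p.2 p.1| * |Dm h θ p.2 p.1|^2) * |θ p.1 - θinf|)) with hWdef
  have hW : HasSum W (h^3 * (κ₃ + 2*π*κ₄)) := by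
    rw [hWdef]; exact (h3.add (h4.mul_left (2*π))).mul_left (h^3)
  have SW : Summable W := hW.summable
  have hρp : ∀ p : (ℤ×ℤ)×Fin 2, ρ (p.1 + ee p.2) ≤ ρ p.1 + h * |Dp h ρ p.2 p.1| := by
    intro p
    have e1 : ρ (p.1 + ee p.2) = ρ p.1 + h * Dp h ρ p.2 p.1 := by rw [Dp]; field_simp; ring
    have e2 : h * Dp h ρ p.2 p.1 ≤ h * |Dp h ρ p.2 p.1| :=
      mul_le_mul_of_nonneg_left (le_abs_self _) hh.le
    linarith
  have hρm : ∀ p : (ℤ×ℤ)×Fin 2, ρ (p.1 - ee p.2) ≤ ρ p.1 + h * |Dm h ρ p.2 p.1| := by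
    intro p
    have e1 : h * Dm h ρ p.2 p.1 = ρ p.1 - ρ (p.1 - ee p.2) := by rw [Dm]; field_simp
    have e2 : h * (-(Dm h ρ p.2 p.1)) ≤ h * |Dm h ρ p.2 p.1| :=
      mul_le_mul_of_nonneg_left (neg_le_abs _) hh.le
    nlinarith
  -- pointwise Q bounds
  have hQ1W : ∀ p : (ℤ×ℤ)×Fin 2,
      ρ p.1 * ρ (p.1 + ee p.2) * |δ p|^3 * |θ p.1 - θinf| ≤ W p := by
    intro p
    have ha := hρ0 p.1
    have h2 := hρp p
    have h3' : h * |Dp h θ p.2 p.1| ≤ 2*π := by rw [← hδeq' p]; exact hδ2π p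
    have e1 : ρ p.1 * ρ (p.1 + ee p.2) * |δ p|^3 * |θ p.1 - θinf|
        ≤ (ρ p.1 * (ρ p.1 + h * |Dp h ρ p.2 p.1|)) * (|δ p|^3 * |θ p.1 - θinf|) := by
      have base : ρ p.1 * ρ (p.1 + ee p.2) ≤ ρ p.1 * (ρ p.1 + h * |Dp h ρ p.2 p.1|) :=
        mul_le_mul_of_nonneg_left h2 ha
      calc ρ p.1 * ρ (p.1 + ee p.2) * |δ p|^3 * |θ p.1 - θinf|
          = (ρ p.1 * ρ (p.1 + ee p.2)) * (|δ p|^3 * |θ p.1 - θinf|) := by ring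
      _ ≤ _ := mul_le_mul_of_nonneg_right base (by positivity)
    rw [hδeq' p] at e1 ⊢
    refine e1.trans ?_
    have e2 : (ρ p.1 * (ρ p.1 + h * |Dp h ρ p.2 p.1|)) * ((h * |Dp h θ p.2 p.1|)^3 * |θ p.1 - θinf|)
        = h^3 * ((ρ p.1)^2 * |Dp h θ p.2 p.1|^3 * |θ p.1 - θinf|)
          + h^3 * ((ρ p.1 * (|Dp h ρ p.2 p.1| * |Dp h θ p.2 p.1|^2) * |θ p.1 - θinf|)
              * (h * |Dp h θ p.2 p.1|)) := by ring
    rw [e2]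
    have e3 : h^3 * ((ρ p.1 * (|Dp h ρ p.2 p.1| * |Dp h θ p.2 p.1|^2) * |θ p.1 - θinf|)
            * (h * |Dp h θ p.2 p.1|))
        ≤ h^3 * ((ρ p.1 * (|Dp h ρ p.2 p.1| * |Dp h θ p.2 p.1|^2) * |θ p.1 - θinf|) * (2*π)) := by
      apply mul_le_mul_of_nonneg_left _ (by positivity)
      apply mul_le_mul_of_nonneg_left h3'
      exact mul_nonneg (mul_nonneg ha (by positivity)) (abs_nonneg _)
    have e4 : h^3 * ((ρ p.1)^2 * |Dp h θ p.2 p.1|^3 * |θ p.1 - θinf|)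
          + h^3 * ((ρ p.1 * (|Dp h ρ p.2 p.1| * |Dp h θ p.2 p.1|^2) * |θ p.1 - θinf|) * (2*π))
        ≤ W p := by
      rw [hWdef]
      show _ ≤ h^3 * ((ρ p.1)^2 * (|Dp h θ p.2 p.1|^3 + |Dm h θ p.2 p.1|^3) * |θ p.1 - θinf|
       + 2*π* (ρ p.1 * (|Dp h ρ p.2 p.1| * |Dp h θ p.2 p.1|^2
            + |Dm h ρ p.2 p.1| * |Dm h θ p.2 p.1|^2) * |θ p.1 - θinf|))
      have n1 : 0 ≤ (ρ p.1)^2 * |Dm h θ p.2 p.1|^3 * |θ p.1 - θinf| := by positivity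
      have n2 : 0 ≤ ρ p.1 * (|Dm h ρ p.2 p.1| * |Dm h θ p.2 p.1|^2) * |θ p.1 - θinf| :=
        mul_nonneg (mul_nonneg ha (by positivity)) (abs_nonneg _)
      linarith [mul_nonneg (pow_nonneg hh.le 3) n1,
        mul_nonneg (mul_nonneg (pow_nonneg hh.le 3) (by positivity : (0:ℝ) ≤ 2*π)) n2]
    linarith
  have hQ2W : ∀ p : (ℤ×ℤ)×Fin 2,
      ρ (p.1 - ee p.2) * ρ p.1 * |δ (p.1 - ee p.2, p.2)|^3 * |θ p.1 - θinf| ≤ W p := by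
    intro p
    have ha := hρ0 p.1
    have hδm : δ (p.1 - ee p.2, p.2) = h * Dm h θ p.2 p.1 := by
      show θ ((p.1 - ee p.2) + ee p.2) - θ (p.1 - ee p.2) = h * Dm h θ p.2 p.1
      rw [sub_add_cancel, Dm]; field_simp
    have hδm' : |δ (p.1 - ee p.2, p.2)| = h * |Dm h θ p.2 p.1| := by
      rw [hδm, abs_mul, _root_.abs_of_pos hh]
    have h3' : h * |Dm h θ p.2 p.1| ≤ 2*π := by rw [← hδm']; exact hδ2π (p.1 - ee p.2, p.2)
    have h2 := hρm p
    have e1 : ρ (p.1 - ee p.2) * ρ p.1 * |δ (p.1 - ee p.2, p.2)|^3 * |θ p.1 - θinf|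
        ≤ ((ρ p.1 + h * |Dm h ρ p.2 p.1|) * ρ p.1) * (|δ (p.1 - ee p.2, p.2)|^3 * |θ p.1 - θinf|) := by
      have base : ρ (p.1 - ee p.2) * ρ p.1 ≤ (ρ p.1 + h * |Dm h ρ p.2 p.1|) * ρ p.1 :=
        mul_le_mul_of_nonneg_right h2 ha
      calc ρ (p.1 - ee p.2) * ρ p.1 * |δ (p.1 - ee p.2, p.2)|^3 * |θ p.1 - θinf|
          = (ρ (p.1 - ee p.2) * ρ p.1) * (|δ (p.1 - ee p.2, p.2)|^3 * |θ p.1 - θinf|) := by ring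
      _ ≤ _ := mul_le_mul_of_nonneg_right base (by positivity)
    rw [hδm'] at e1 ⊢
    refine e1.trans ?_
    have e2 : ((ρ p.1 + h * |Dm h ρ p.2 p.1|) * ρ p.1) * ((h * |Dm h θ p.2 p.1|)^3 * |θ p.1 - θinf|)
        = h^3 * ((ρ p.1)^2 * |Dm h θ p.2 p.1|^3 * |θ p.1 - θinf|)
          + h^3 * ((ρ p.1 * (|Dm h ρ p.2 p.1| * |Dm h θ p.2 p.1|^2) * |θ p.1 - θinf|)
              * (h * |Dm h θ p.2 p.1|)) := by ring
    rw [e2]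
    have e3 : h^3 * ((ρ p.1 * (|Dm h ρ p.2 p.1| * |Dm h θ p.2 p.1|^2) * |θ p.1 - θinf|)
            * (h * |Dm h θ p.2 p.1|))
        ≤ h^3 * ((ρ p.1 * (|Dm h ρ p.2 p.1| * |Dm h θ p.2 p.1|^2) * |θ p.1 - θinf|) * (2*π)) := by
      apply mul_le_mul_of_nonneg_left _ (by positivity)
      apply mul_le_mul_of_nonneg_left h3'
      exact mul_nonneg (mul_nonneg ha (by positivity)) (abs_nonneg _)
    have e4 : h^3 * ((ρ p.1)^2 * |Dm h θ p.2 p.1|^3 * |θ p.1 - θinf|)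
          + h^3 * ((ρ p.1 * (|Dm h ρ p.2 p.1| * |Dm h θ p.2 p.1|^2) * |θ p.1 - θinf|) * (2*π))
        ≤ W p := by
      rw [hWdef]
      show _ ≤ h^3 * ((ρ p.1)^2 * (|Dp h θ p.2 p.1|^3 + |Dm h θ p.2 p.1|^3) * |θ p.1 - θinf|
       + 2*π* (ρ p.1 * (|Dp h ρ p.2 p.1| * |Dp h θ p.2 p.1|^2
            + |Dm h ρ p.2 p.1| * |Dm h θ p.2 p.1|^2) * |θ p.1 - θinf|))
      have n1 : 0 ≤ (ρ p.1)^2 * |Dp h θ p.2 p.1|^3 * |θ p.1 - θinf| := by positivity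
      have n2 : 0 ≤ ρ p.1 * (|Dp h ρ p.2 p.1| * |Dp h θ p.2 p.1|^2) * |θ p.1 - θinf| :=
        mul_nonneg (mul_nonneg ha (by positivity)) (abs_nonneg _)
      linarith [mul_nonneg (pow_nonneg hh.le 3) n1,
        mul_nonneg (mul_nonneg (pow_nonneg hh.le 3) (by positivity : (0:ℝ) ≤ 2*π)) n2]
    linarith
  -- Q functions
  set Q1 : (ℤ×ℤ)×Fin 2 → ℝ :=
    fun p => ρ p.1 * ρ (p.1 + ee p.2) * |δ p|^3 * |θ p.1 - θinf| with hQ1def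
  set Q2 : (ℤ×ℤ)×Fin 2 → ℝ :=
    fun p => ρ p.1 * ρ (p.1 + ee p.2) * |δ p|^3 * |θ (p.1 + ee p.2) - θinf| with hQ2def
  set Q2g : (ℤ×ℤ)×Fin 2 → ℝ :=
    fun p => ρ (p.1 - ee p.2) * ρ p.1 * |δ (p.1 - ee p.2, p.2)|^3 * |θ p.1 - θinf| with hQ2gdef
  have hQ1nn : ∀ p, 0 ≤ Q1 p := by
    intro p
    exact mul_nonneg (mul_nonneg (mul_nonneg (hρ0 _) (hρ0 _)) (by positivity)) (abs_nonneg _)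
  have hQ2gnn : ∀ p, 0 ≤ Q2g p := by
    intro p
    exact mul_nonneg (mul_nonneg (mul_nonneg (hρ0 _) (hρ0 _)) (by positivity)) (abs_nonneg _)
  have SQ1 : Summable Q1 := Summable.of_nonneg_of_le hQ1nn hQ1W SW
  have SQ2g : Summable Q2g := Summable.of_nonneg_of_le hQ2gnn hQ2W SW
  have hcompQ : ∀ p : (ℤ×ℤ)×Fin 2, Q2g (shiftE p) = Q2 p := by
    intro p
    show ρ (p.1 + ee p.2 - ee p.2) * ρ (p.1 + ee p.2) * |δ (p.1 + ee p.2 - ee p.2, p.2)|^3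
        * |θ (p.1 + ee p.2) - θinf| = Q2 p
    rw [add_sub_cancel_right]
  have SQ2 : Summable Q2 := by
    have hsq := shiftE.summable_iff.mpr SQ2g
    have heq2 : Q2g ∘ ⇑shiftE = Q2 := by funext p; exact hcompQ p
    rwa [heq2] at hsq
  have tsumQ1 : ∑' p, Q1 p ≤ ∑' p, W p := Summable.tsum_le_tsum hQ1W SQ1 SW
  have tsumQ2 : ∑' p, Q2 p ≤ ∑' p, W p := by
    have e0 : ∑' p, Q2 p = ∑' p, Q2g p := (tsum_congr hcompQ).symm.trans (shiftE.tsum_eq Q2g)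
    rw [e0]; exact Summable.tsum_le_tsum hQ2W SQ2g SW
  -- the remainder r and the main quantity m
  set r : (ℤ×ℤ)×Fin 2 → ℝ :=
    fun p => ρ p.1 * ρ (p.1 + ee p.2) * (δ p - Real.sin (δ p)) * δ p with hrdef
  set m : (ℤ×ℤ)×Fin 2 → ℝ :=
    fun p => ρ p.1 * ρ (p.1 + ee p.2) * (δ p)^2 with hmdef
  have hrle : ∀ p, |r p| ≤ 2 * (Q1 p + Q2 p) := by
    intro p
    have b1 : |δ p - Real.sin (δ p)| ≤ 2 * |δ p|^3 := abs_sub_sin_le (δ p)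
    have b2 : |δ p| ≤ |θ p.1 - θinf| + |θ (p.1 + ee p.2) - θinf| := hδabs p
    have hr1 : |r p| = ρ p.1 * ρ (p.1 + ee p.2) * |δ p - Real.sin (δ p)| * |δ p| := by
      rw [hrdef]
      show |ρ p.1 * ρ (p.1 + ee p.2) * (δ p - Real.sin (δ p)) * δ p| = _
      rw [abs_mul, abs_mul, abs_mul, _root_.abs_of_nonneg (hρ0 _), _root_.abs_of_nonneg (hρ0 _)]
    rw [hr1]
    have c1 : ρ p.1 * ρ (p.1 + ee p.2) * |δ p - Real.sin (δ p)| * |δ p|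
        ≤ (ρ p.1 * ρ (p.1 + ee p.2) * (2 * |δ p|^3)) * (|θ p.1 - θinf| + |θ (p.1 + ee p.2) - θinf|) := by
      apply mul_le_mul _ b2 (abs_nonneg _) _
      · exact mul_le_mul_of_nonneg_left b1 (mul_nonneg (hρ0 _) (hρ0 _))
      · exact mul_nonneg (mul_nonneg (hρ0 _) (hρ0 _)) (by positivity)
    refine c1.trans_eq ?_
    rw [hQ1def, hQ2def]
    show _ = 2 * (ρ p.1 * ρ (p.1 + ee p.2) * |δ p|^3 * |θ p.1 - θinf|
        + ρ p.1 * ρ (p.1 + ee p.2) * |δ p|^3 * |θ (p.1 + ee p.2) - θinf|)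
    ring
  have Sr : Summable r := by
    apply Summable.of_abs
    exact Summable.of_nonneg_of_le (fun p => abs_nonneg _) hrle ((SQ1.add SQ2).mul_left 2)
  have hmAr : ∀ p : (ℤ×ℤ)×Fin 2, m p = A p * δ p + r p := by
    intro p
    rw [hmdef, hrdef, hA p]
    show ρ p.1 * ρ (p.1 + ee p.2) * (δ p)^2
        = ρ p.1 * ρ (p.1 + ee p.2) * Real.sin (δ p) * δ p
          + ρ p.1 * ρ (p.1 + ee p.2) * (δ p - Real.sin (δ p)) * δ p
    ring
  have Sm : Summable m := by
    have : m = fun p => A p * δ p + r p := funext hmAr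
    rw [this]; exact SAδ.add Sr
  have hWtsum : ∑' p, W p = h^3 * (κ₃ + 2*π*κ₄) := hW.tsum_eq
  have tsumr : ∑' p, r p ≤ 4 * (h^3 * (κ₃ + 2*π*κ₄)) := by
    have s1 : ∑' p, r p ≤ ∑' p, |r p| := Summable.tsum_le_tsum (fun p => le_abs_self _) Sr Sr.abs
    have s2 : ∑' p, |r p| ≤ ∑' p, 2 * (Q1 p + Q2 p) :=
      Summable.tsum_le_tsum hrle Sr.abs ((SQ1.add SQ2).mul_left 2)
    have s3 : ∑' p, 2 * (Q1 p + Q2 p) = 2 * ((∑' p, Q1 p) + ∑' p, Q2 p) := by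
      rw [tsum_mul_left, Summable.tsum_add SQ1 SQ2]
    linarith
  have tsumm : ∑' p, m p ≤ h^3 * κ₅ + 4 * (h^3 * (κ₃ + 2*π*κ₄)) := by
    have e : ∑' p, m p = (∑' p, A p * δ p) + ∑' p, r p := by
      rw [← Summable.tsum_add SAδ Sr]; exact tsum_congr hmAr
    rw [e]; linarith [bnd1, tsumr]
  -- κ₇ terms
  set N1 : (ℤ×ℤ)×Fin 2 → ℝ :=
    fun p => h * |Dp h ρ p.2 p.1|^2 * |Dp h θ p.2 p.1| * |θ p.1 - θinf| with hN1def
  set N2 : (ℤ×ℤ)×Fin 2 → ℝ :=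
    fun p => h * |Dp h ρ p.2 p.1|^2 * |Dp h θ p.2 p.1| * |θ (p.1 + ee p.2) - θinf| with hN2def
  set N2g : (ℤ×ℤ)×Fin 2 → ℝ :=
    fun p => h * |Dm h ρ p.2 p.1|^2 * |Dm h θ p.2 p.1| * |θ p.1 - θinf| with hN2gdef
  have SK7 : Summable (fun p : (ℤ×ℤ)×Fin 2 =>
      h * ((|Dp h ρ p.2 p.1|^2 * |Dp h θ p.2 p.1| + |Dm h ρ p.2 p.1|^2 * |Dm h θ p.2 p.1|)
        * |θ p.1 - θinf|)) := h7.summable.mul_left h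
  have hN1le : ∀ p : (ℤ×ℤ)×Fin 2, N1 p
      ≤ h * ((|Dp h ρ p.2 p.1|^2 * |Dp h θ p.2 p.1| + |Dm h ρ p.2 p.1|^2 * |Dm h θ p.2 p.1|)
        * |θ p.1 - θinf|) := by
    intro p
    rw [hN1def]
    show h * |Dp h ρ p.2 p.1|^2 * |Dp h θ p.2 p.1| * |θ p.1 - θinf| ≤ _
    nlinarith [mul_nonneg (mul_nonneg hh.le (by positivity : (0:ℝ) ≤ |Dm h ρ p.2 p.1|^2 * |Dm h θ p.2 p.1|)) (abs_nonneg (θ p.1 - θinf))]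
  have hN2gle : ∀ p : (ℤ×ℤ)×Fin 2, N2g p
      ≤ h * ((|Dp h ρ p.2 p.1|^2 * |Dp h θ p.2 p.1| + |Dm h ρ p.2 p.1|^2 * |Dm h θ p.2 p.1|)
        * |θ p.1 - θinf|) := by
    intro p
    rw [hN2gdef]
    show h * |Dm h ρ p.2 p.1|^2 * |Dm h θ p.2 p.1| * |θ p.1 - θinf| ≤ _
    nlinarith [mul_nonneg (mul_nonneg hh.le (by positivity : (0:ℝ) ≤ |Dp h ρ p.2 p.1|^2 * |Dp h θ p.2 p.1|)) (abs_nonneg (θ p.1 - θinf))]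
  have hN1nn : ∀ p, 0 ≤ N1 p := by
    intro p; rw [hN1def]
    show (0:ℝ) ≤ h * |Dp h ρ p.2 p.1|^2 * |Dp h θ p.2 p.1| * |θ p.1 - θinf|
    positivity
  have hN2gnn : ∀ p, 0 ≤ N2g p := by
    intro p; rw [hN2gdef]
    show (0:ℝ) ≤ h * |Dm h ρ p.2 p.1|^2 * |Dm h θ p.2 p.1| * |θ p.1 - θinf|
    positivity
  have SN1 : Summable N1 := Summable.of_nonneg_of_le hN1nn hN1le SK7
  have SN2g : Summable N2g := Summable.of_nonneg_of_le hN2gnn hN2gle SK7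
  have hcompN : ∀ p : (ℤ×ℤ)×Fin 2, N2g (shiftE p) = N2 p := by
    intro p
    have d1 : Dm h ρ p.2 (p.1 + ee p.2) = Dp h ρ p.2 p.1 := by
      rw [Dm, Dp, add_sub_cancel_right]
    have d2 : Dm h θ p.2 (p.1 + ee p.2) = Dp h θ p.2 p.1 := by
      rw [Dm, Dp, add_sub_cancel_right]
    show h * |Dm h ρ p.2 (p.1 + ee p.2)|^2 * |Dm h θ p.2 (p.1 + ee p.2)|
        * |θ (p.1 + ee p.2) - θinf| = N2 p
    rw [d1, d2]
  have SN2 : Summable N2 := by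
    have hsn := shiftE.summable_iff.mpr SN2g
    have heqn : N2g ∘ ⇑shiftE = N2 := by funext p; exact hcompN p
    rwa [heqn] at hsn
  have hK7tsum : ∑' p : (ℤ×ℤ)×Fin 2,
      h * ((|Dp h ρ p.2 p.1|^2 * |Dp h θ p.2 p.1| + |Dm h ρ p.2 p.1|^2 * |Dm h θ p.2 p.1|)
        * |θ p.1 - θinf|) = h * κ₇ := by
    rw [tsum_mul_left, h7.tsum_eq]
  have tsumN1 : ∑' p, N1 p ≤ h * κ₇ := by
    have := Summable.tsum_le_tsum hN1le SN1 SK7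
    rwa [hK7tsum] at this
  have tsumN2 : ∑' p, N2 p ≤ h * κ₇ := by
    have e0 : ∑' p, N2 p = ∑' p, N2g p := (tsum_congr hcompN).symm.trans (shiftE.tsum_eq N2g)
    rw [e0]
    have := Summable.tsum_le_tsum hN2gle SN2g SK7
    rwa [hK7tsum] at this
  -- main pointwise bound
  have main2 : ∀ p : (ℤ×ℤ)×Fin 2,
      (ρ p.1)^2 * |Dp h θ p.2 p.1|^2 + (ρ (p.1 + ee p.2))^2 * |Dp h θ p.2 p.1|^2
        ≤ 2/h^2 * m p + (N1 p + N2 p) := by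
    intro p
    have hc : ρ (p.1 + ee p.2) = ρ p.1 + h * Dp h ρ p.2 p.1 := by rw [Dp]; field_simp; ring
    have habs2 : |Dp h θ p.2 p.1|^2 = (Dp h θ p.2 p.1)^2 := sq_abs _
    have em : 2/h^2 * m p = 2 * (ρ p.1 * ρ (p.1 + ee p.2)) * (Dp h θ p.2 p.1)^2 := by
      rw [hmdef]
      show 2/h^2 * (ρ p.1 * ρ (p.1 + ee p.2) * (δ p)^2) = _
      rw [hδeq p]
      field_simp
    have key : (ρ p.1)^2 * (Dp h θ p.2 p.1)^2 + (ρ (p.1 + ee p.2))^2 * (Dp h θ p.2 p.1)^2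
        = 2 * (ρ p.1 * ρ (p.1 + ee p.2)) * (Dp h θ p.2 p.1)^2
          + (h * Dp h ρ p.2 p.1)^2 * (Dp h θ p.2 p.1)^2 := by rw [hc]; ring
    have e2 : (h * Dp h ρ p.2 p.1)^2 * (Dp h θ p.2 p.1)^2 ≤ N1 p + N2 p := by
      have q2 : h * |Dp h θ p.2 p.1| ≤ |θ p.1 - θinf| + |θ (p.1 + ee p.2) - θinf| := by
        rw [← hδeq' p]; exact hδabs p
      have q3 : (0:ℝ) ≤ h * |Dp h ρ p.2 p.1|^2 * |Dp h θ p.2 p.1| := by positivity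
      have q1 : (h * Dp h ρ p.2 p.1)^2 * (Dp h θ p.2 p.1)^2
          = (h * |Dp h ρ p.2 p.1|^2 * |Dp h θ p.2 p.1|) * (h * |Dp h θ p.2 p.1|) := by
        have a1 : (Dp h ρ p.2 p.1)^2 = |Dp h ρ p.2 p.1|^2 := (sq_abs _).symm
        have a2 : (Dp h θ p.2 p.1)^2 = |Dp h θ p.2 p.1|^2 := (sq_abs _).symm
        rw [mul_pow, a1, a2]; ring
      calc (h * Dp h ρ p.2 p.1)^2 * (Dp h θ p.2 p.1)^2
          = (h * |Dp h ρ p.2 p.1|^2 * |Dp h θ p.2 p.1|) * (h * |Dp h θ p.2 p.1|) := q1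
      _ ≤ (h * |Dp h ρ p.2 p.1|^2 * |Dp h θ p.2 p.1|)
            * (|θ p.1 - θinf| + |θ (p.1 + ee p.2) - θinf|) := mul_le_mul_of_nonneg_left q2 q3
      _ = N1 p + N2 p := by
          rw [hN1def, hN2def]
          show _ = h * |Dp h ρ p.2 p.1|^2 * |Dp h θ p.2 p.1| * |θ p.1 - θinf|
            + h * |Dp h ρ p.2 p.1|^2 * |Dp h θ p.2 p.1| * |θ (p.1 + ee p.2) - θinf|
          ring
    rw [habs2]
    linarith [em, key, e2]
  -- final ENNReal chain
  have SRHS : Summable (fun p : (ℤ×ℤ)×Fin 2 => 2/h^2 * m p + (N1 p + N2 p)) :=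
    (Sm.mul_left (2/h^2)).add (SN1.add SN2)
  have hRHSnn : ∀ p : (ℤ×ℤ)×Fin 2, 0 ≤ 2/h^2 * m p + (N1 p + N2 p) := by
    intro p
    have hm0 : 0 ≤ m p := by
      rw [hmdef]
      show (0:ℝ) ≤ ρ p.1 * ρ (p.1 + ee p.2) * (δ p)^2
      exact mul_nonneg (mul_nonneg (hρ0 _) (hρ0 _)) (sq_nonneg _)
    have hn2 : 0 ≤ N2 p := by rw [← hcompN p]; exact hN2gnn _
    have h22 : 0 ≤ 2/h^2 * m p := mul_nonneg (by positivity) hm0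
    linarith [hN1nn p]
  have hRHStsum : ∑' p : (ℤ×ℤ)×Fin 2, (2/h^2 * m p + (N1 p + N2 p))
      ≤ (8*κ₃ + 16*π*κ₄ + 2*κ₅ + 2*κ₇) * h := by
    rw [Summable.tsum_add (Sm.mul_left (2/h^2)) (SN1.add SN2), Summable.tsum_add SN1 SN2, tsum_mul_left]
    have c1 : 2/h^2 * ∑' p, m p ≤ 2/h^2 * (h^3 * κ₅ + 4 * (h^3 * (κ₃ + 2*π*κ₄))) :=
      mul_le_mul_of_nonneg_left tsumm (by positivity)
    have id1 : 2/h^2 * (h^3 * κ₅ + 4 * (h^3 * (κ₃ + 2*π*κ₄)))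
        = (8*κ₃ + 16*π*κ₄ + 2*κ₅) * h := by field_simp; ring
    linarith [tsumN1, tsumN2]
  have split : ∀ p : (ℤ×ℤ)×Fin 2,
      ENNReal.ofReal ((ρ p.1)^2 * (|Dp h θ p.2 p.1|^2 + |Dm h θ p.2 p.1|^2))
        = ENNReal.ofReal ((ρ p.1)^2 * |Dp h θ p.2 p.1|^2)
          + ENNReal.ofReal ((ρ p.1)^2 * |Dm h θ p.2 p.1|^2) := by
    intro p
    rw [mul_add, ENNReal.ofReal_add (by positivity) (by positivity)]
  have shift2 : ∑' p : (ℤ×ℤ)×Fin 2, ENNReal.ofReal ((ρ p.1)^2 * |Dm h θ p.2 p.1|^2)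
      = ∑' p : (ℤ×ℤ)×Fin 2, ENNReal.ofReal ((ρ (p.1 + ee p.2))^2 * |Dp h θ p.2 p.1|^2) := by
    rw [← shiftE.tsum_eq (fun p : (ℤ×ℤ)×Fin 2 => ENNReal.ofReal ((ρ p.1)^2 * |Dm h θ p.2 p.1|^2))]
    apply tsum_congr
    intro p
    have d2 : Dm h θ p.2 (p.1 + ee p.2) = Dp h θ p.2 p.1 := by
      rw [Dm, Dp, add_sub_cancel_right]
    show ENNReal.ofReal ((ρ (p.1 + ee p.2))^2 * |Dm h θ p.2 (p.1 + ee p.2)|^2) = _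
    rw [d2]
  calc ∑' p : (ℤ×ℤ)×Fin 2, ENNReal.ofReal
        ((ρ p.1)^2 * (|Dp h θ p.2 p.1|^2 + |Dm h θ p.2 p.1|^2))
      = ∑' p : (ℤ×ℤ)×Fin 2, (ENNReal.ofReal ((ρ p.1)^2 * |Dp h θ p.2 p.1|^2)
          + ENNReal.ofReal ((ρ p.1)^2 * |Dm h θ p.2 p.1|^2)) := tsum_congr split
  _ = (∑' p : (ℤ×ℤ)×Fin 2, ENNReal.ofReal ((ρ p.1)^2 * |Dp h θ p.2 p.1|^2))
        + ∑' p : (ℤ×ℤ)×Fin 2, ENNReal.ofReal ((ρ p.1)^2 * |Dm h θ p.2 p.1|^2) := ENNReal.tsum_add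
  _ = (∑' p : (ℤ×ℤ)×Fin 2, ENNReal.ofReal ((ρ p.1)^2 * |Dp h θ p.2 p.1|^2))
        + ∑' p : (ℤ×ℤ)×Fin 2, ENNReal.ofReal ((ρ (p.1 + ee p.2))^2 * |Dp h θ p.2 p.1|^2) := by
      rw [shift2]
  _ = ∑' p : (ℤ×ℤ)×Fin 2, (ENNReal.ofReal ((ρ p.1)^2 * |Dp h θ p.2 p.1|^2)
        + ENNReal.ofReal ((ρ (p.1 + ee p.2))^2 * |Dp h θ p.2 p.1|^2)) := ENNReal.tsum_add.symm
  _ = ∑' p : (ℤ×ℤ)×Fin 2, ENNReal.ofReal ((ρ p.1)^2 * |Dp h θ p.2 p.1|^2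
        + (ρ (p.1 + ee p.2))^2 * |Dp h θ p.2 p.1|^2) := by
      apply tsum_congr; intro p
      rw [ENNReal.ofReal_add (by positivity) (by positivity)]
  _ ≤ ∑' p : (ℤ×ℤ)×Fin 2, ENNReal.ofReal (2/h^2 * m p + (N1 p + N2 p)) := by
      apply ENNReal.tsum_le_tsum
      intro p
      exact ENNReal.ofReal_le_ofReal (main2 p)
  _ = ENNReal.ofReal (∑' p : (ℤ×ℤ)×Fin 2, (2/h^2 * m p + (N1 p + N2 p))) :=
      (ENNReal.ofReal_tsum_of_nonneg hRHSnn SRHS).symm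
  _ ≤ ENNReal.ofReal ((8*κ₃ + 16*π*κ₄ + 2*κ₅ + 2*κ₇) * h) := ENNReal.ofReal_le_ofReal hRHStsum


/-- The forward remainder. -/
def EP (h : ℝ) (u : ℤ × ℤ → ℝ) (f Lf : ℤ × ℤ → ℝ → ℝ) (i : ℤ × ℤ) : ℂ :=
  (((f (i + ee 0) (u (i + ee 0)) - f i (u i) - Lf i (u i) * (u (i + ee 0) - u i)) / h : ℝ) : ℂ)
  + Complex.I * (((f (i + ee 1) (u (i + ee 1)) - f i (u i) - Lf i (u i) * (u (i + ee 1) - u i)) / h : ℝ) : ℂ)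

/-- The backward remainder. -/
def EM (h : ℝ) (u : ℤ × ℤ → ℝ) (f Lf : ℤ × ℤ → ℝ → ℝ) (i : ℤ × ℤ) : ℂ :=
  (((f i (u i) - f (i - ee 0) (u (i - ee 0)) - Lf i (u i) * (u i - u (i - ee 0))) / h : ℝ) : ℂ)
  + Complex.I * (((f i (u i) - f (i - ee 1) (u (i - ee 1)) - Lf i (u i) * (u i - u (i - ee 1))) / h : ℝ) : ℂ)

lemma UpHeq (h : ℝ) (hh : h ≠ 0) (u : ℤ × ℤ → ℝ) (f Lf : ℤ × ℤ → ℝ → ℝ)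
    (heq : ∀ i, Lap h u i = f i (u i)) (i : ℤ × ℤ) :
    Up h u (i + ee 0) + Up h u (i - ee 0) + Up h u (i + ee 1) + Up h u (i - ee 1) - 4 * Up h u i
      = (h:ℂ)^2 * ((Lf i (u i) : ℂ) * Up h u i + EP h u f Lf i) := by
  rw [show EP h u f Lf i
      = (((Lap h u (i + ee 0) - Lap h u i - Lf i (u i) * (u (i + ee 0) - u i)) / h : ℝ) : ℂ)
      + Complex.I * (((Lap h u (i + ee 1) - Lap h u i - Lf i (u i) * (u (i + ee 1) - u i)) / h : ℝ) : ℂ) by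
    rw [EP, heq i, heq (i + ee 0), heq (i + ee 1)]]
  rw [show ((h:ℂ))^2 = ((h^2 : ℝ) : ℂ) from by push_cast; ring]
  obtain ⟨a, b⟩ := i
  apply Complex.ext <;>
  · simp only [Up, Dp, Lap, Lj, ee, Matrix.cons_val_zero, Matrix.cons_val_one, Matrix.head_cons,
      Prod.mk_add_mk, Prod.mk_sub_mk, add_zero, zero_add, sub_zero, add_sub_cancel_right,
      sub_add_cancel,
      Complex.add_re, Complex.add_im, Complex.sub_re, Complex.sub_im, Complex.mul_re,
      Complex.mul_im, Complex.I_re, Complex.I_im, Complex.ofReal_re, Complex.ofReal_im,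
      Complex.re_ofNat, Complex.im_ofNat]
    push_cast
    field_simp
    ring

lemma UmHeq (h : ℝ) (hh : h ≠ 0) (u : ℤ × ℤ → ℝ) (f Lf : ℤ × ℤ → ℝ → ℝ)
    (heq : ∀ i, Lap h u i = f i (u i)) (i : ℤ × ℤ) :
    Um h u (i + ee 0) + Um h u (i - ee 0) + Um h u (i + ee 1) + Um h u (i - ee 1) - 4 * Um h u i
      = (h:ℂ)^2 * ((Lf i (u i) : ℂ) * Um h u i + EM h u f Lf i) := by
  rw [show EM h u f Lf i
      = (((Lap h u i - Lap h u (i - ee 0) - Lf i (u i) * (u i - u (i - ee 0))) / h : ℝ) : ℂ)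
      + Complex.I * (((Lap h u i - Lap h u (i - ee 1) - Lf i (u i) * (u i - u (i - ee 1))) / h : ℝ) : ℂ) by
    rw [EM, heq i, heq (i - ee 0), heq (i - ee 1)]]
  rw [show ((h:ℂ))^2 = ((h^2 : ℝ) : ℂ) from by push_cast; ring]
  obtain ⟨a, b⟩ := i
  apply Complex.ext <;>
  · simp only [Um, Dm, Lap, Lj, ee, Matrix.cons_val_zero, Matrix.cons_val_one, Matrix.head_cons,
      Prod.mk_add_mk, Prod.mk_sub_mk, add_zero, zero_add, sub_zero, add_sub_cancel_right,
      sub_add_cancel,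
      Complex.add_re, Complex.add_im, Complex.sub_re, Complex.sub_im, Complex.mul_re,
      Complex.mul_im, Complex.I_re, Complex.I_im, Complex.ofReal_re, Complex.ofReal_im,
      Complex.re_ofNat, Complex.im_ofNat]
    push_cast
    field_simp
    ring

lemma abs_ofReal_add_I_mul (x y : ℝ) : ‖(x:ℂ) + Complex.I * (y:ℂ)‖ ≤ |x| + |y| := by
  calc ‖(x:ℂ) + Complex.I * (y:ℂ)‖
      ≤ ‖(x:ℂ)‖ + ‖Complex.I * (y:ℂ)‖ := norm_add_le _ _
  _ = |x| + |y| := by simp only [norm_mul, Complex.norm_I, one_mul, Complex.norm_real, Real.norm_eq_abs]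

lemma absEP (h : ℝ) (hh : 0 < h) (u : ℤ × ℤ → ℝ) (f Lf : ℤ × ℤ → ℝ → ℝ) (κ₀ : ℝ)
    (hHP : Hplus h u f Lf κ₀) (i : ℤ × ℤ) : ‖EP h u f Lf i‖ ≤ κ₀ * h := by
  have h1 := hHP i
  rw [Fin.sum_univ_two] at h1
  refine le_trans (abs_ofReal_add_I_mul _ _) ?_
  rw [abs_div, abs_div, _root_.abs_of_pos hh]
  exact h1
lemma absEM (h : ℝ) (hh : 0 < h) (u : ℤ × ℤ → ℝ) (f Lf : ℤ × ℤ → ℝ → ℝ) (κ₀ : ℝ)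
    (hHM : Hminus h u f Lf κ₀) (i : ℤ × ℤ) : ‖EM h u f Lf i‖ ≤ κ₀ * h := by
  have h1 := hHM i
  rw [Fin.sum_univ_two] at h1
  refine le_trans (abs_ofReal_add_I_mul _ _) ?_
  rw [abs_div, abs_div, _root_.abs_of_pos hh]
  exact h1

lemma absUp (h : ℝ) (u : ℤ × ℤ → ℝ) (κ₁ : ℝ) (hκ₁ : ∀ (i : ℤ × ℤ) (j : Fin 2), |Dp h u j i| ≤ κ₁)
    (i : ℤ × ℤ) : rhoP h u i ≤ κ₁ + κ₁ := by
  refine le_trans (abs_ofReal_add_I_mul _ _) ?_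
  exact add_le_add (hκ₁ i 0) (hκ₁ i 1)
lemma absUm (h : ℝ) (u : ℤ × ℤ → ℝ) (κ₁ : ℝ) (hκ₁ : ∀ (i : ℤ × ℤ) (j : Fin 2), |Dm h u j i| ≤ κ₁)
    (i : ℤ × ℤ) : rhoM h u i ≤ κ₁ + κ₁ := by
  refine le_trans (abs_ofReal_add_I_mul _ _) ?_
  exact add_le_add (hκ₁ i 0) (hκ₁ i 1)

end FK

open FK

/-- Theorem 1.2 / `DGDG-GE` of the paper.  Quantitative rigidity estimate
for both forward and backward increments. -/
theorem statement1
    (h : ℝ) (hh : 0 < h)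
    (u : ℤ × ℤ → ℝ) (f LfP LfM : (ℤ × ℤ) → ℝ → ℝ)
    (κ₀P κ₀M : ℝ) (hκ₀P : 0 < κ₀P) (hκ₀M : 0 < κ₀M)
    (heq : ∀ i : ℤ × ℤ, Lap h u i = f i (u i))
    (hHP : Hplus h u f LfP κ₀P) (hHM : Hminus h u f LfM κ₀M)
    (hndP : NondegP u) (hndM : NondegM u)
    (κ₁P κ₁M : ℝ)
    (hκ₁P : ∀ (i : ℤ × ℤ) (j : Fin 2), |Dp h u j i| ≤ κ₁P)
    (hκ₁M : ∀ (i : ℤ × ℤ) (j : Fin 2), |Dm h u j i| ≤ κ₁M)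
    (θinfP θinfM : ℝ)
    (hθinfP : θinfP ∈ Set.Ioc (-π) π) (hθinfM : θinfM ∈ Set.Ioc (-π) π)
    (κ₂P κ₃P κ₄P κ₅P κ₆P κ₇P κ₂M κ₃M κ₄M κ₅M κ₆M κ₇M : ℝ)
    (hκ₂P : HasSum (fun p : (ℤ × ℤ) × Fin 2 =>
      (rhoP h u p.1) ^ 2 *
        (|Dp h (thetaP h u) p.2 p.1| * |Dp h (Dp h (thetaP h u) p.2) p.2 (p.1 - ee p.2)| +
         |Dm h (thetaP h u) p.2 p.1| * |Dm h (Dm h (thetaP h u) p.2) p.2 (p.1 + ee p.2)|)) κ₂P)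
    (hκ₃P : HasSum (fun p : (ℤ × ℤ) × Fin 2 =>
      (rhoP h u p.1) ^ 2 *
        (|Dp h (thetaP h u) p.2 p.1| ^ 3 + |Dm h (thetaP h u) p.2 p.1| ^ 3) *
        |thetaP h u p.1 - θinfP|) κ₃P)
    (hκ₄P : HasSum (fun p : (ℤ × ℤ) × Fin 2 =>
      rhoP h u p.1 *
        (|Dp h (rhoP h u) p.2 p.1| * |Dp h (thetaP h u) p.2 p.1| ^ 2 +
         |Dm h (rhoP h u) p.2 p.1| * |Dm h (thetaP h u) p.2 p.1| ^ 2) *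
        |thetaP h u p.1 - θinfP|) κ₄P)
    (hκ₅P : HasSum (fun i : ℤ × ℤ => κ₀P * (rhoP h u i * |thetaP h u i - θinfP|)) κ₅P)
    (hκ₆P : HasSum (fun p : (ℤ × ℤ) × Fin 2 =>
      (|Dp h (fun k => (rhoP h u k) ^ 2) p.2 p.1| * |Dp h (Dp h (thetaP h u) p.2) p.2 p.1| +
       |Dm h (fun k => (rhoP h u k) ^ 2) p.2 p.1| * |Dm h (Dm h (thetaP h u) p.2) p.2 p.1| +
       h * (rhoP h u p.1) ^ 2 * |Lj h (Lj h (thetaP h u) p.2) p.2 p.1|) *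
      |thetaP h u p.1 - θinfP|) κ₆P)
    (hκ₇P : HasSum (fun p : (ℤ × ℤ) × Fin 2 =>
      (|Dp h (rhoP h u) p.2 p.1| ^ 2 * |Dp h (thetaP h u) p.2 p.1| +
       |Dm h (rhoP h u) p.2 p.1| ^ 2 * |Dm h (thetaP h u) p.2 p.1|) *
      |thetaP h u p.1 - θinfP|) κ₇P)
    (hκ₂M : HasSum (fun p : (ℤ × ℤ) × Fin 2 =>
      (rhoM h u p.1) ^ 2 *
        (|Dp h (thetaM h u) p.2 p.1| * |Dp h (Dp h (thetaM h u) p.2) p.2 (p.1 - ee p.2)| +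
         |Dm h (thetaM h u) p.2 p.1| * |Dm h (Dm h (thetaM h u) p.2) p.2 (p.1 + ee p.2)|)) κ₂M)
    (hκ₃M : HasSum (fun p : (ℤ × ℤ) × Fin 2 =>
      (rhoM h u p.1) ^ 2 *
        (|Dp h (thetaM h u) p.2 p.1| ^ 3 + |Dm h (thetaM h u) p.2 p.1| ^ 3) *
        |thetaM h u p.1 - θinfM|) κ₃M)
    (hκ₄M : HasSum (fun p : (ℤ × ℤ) × Fin 2 =>
      rhoM h u p.1 *
        (|Dp h (rhoM h u) p.2 p.1| * |Dp h (thetaM h u) p.2 p.1| ^ 2 +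
         |Dm h (rhoM h u) p.2 p.1| * |Dm h (thetaM h u) p.2 p.1| ^ 2) *
        |thetaM h u p.1 - θinfM|) κ₄M)
    (hκ₅M : HasSum (fun i : ℤ × ℤ => κ₀M * (rhoM h u i * |thetaM h u i - θinfM|)) κ₅M)
    (hκ₆M : HasSum (fun p : (ℤ × ℤ) × Fin 2 =>
      (|Dp h (fun k => (rhoM h u k) ^ 2) p.2 p.1| * |Dp h (Dp h (thetaM h u) p.2) p.2 p.1| +
       |Dm h (fun k => (rhoM h u k) ^ 2) p.2 p.1| * |Dm h (Dm h (thetaM h u) p.2) p.2 p.1| +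
       h * (rhoM h u p.1) ^ 2 * |Lj h (Lj h (thetaM h u) p.2) p.2 p.1|) *
      |thetaM h u p.1 - θinfM|) κ₆M)
    (hκ₇M : HasSum (fun p : (ℤ × ℤ) × Fin 2 =>
      (|Dp h (rhoM h u) p.2 p.1| ^ 2 * |Dp h (thetaM h u) p.2 p.1| +
       |Dm h (rhoM h u) p.2 p.1| ^ 2 * |Dm h (thetaM h u) p.2 p.1|) *
      |thetaM h u p.1 - θinfM|) κ₇M) :
    (∑' p : (ℤ × ℤ) × Fin 2, ENNReal.ofReal
        ((rhoP h u p.1) ^ 2 *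
          (|Dp h (thetaP h u) p.2 p.1| ^ 2 + |Dm h (thetaP h u) p.2 p.1| ^ 2) +
         (rhoM h u p.1) ^ 2 *
          (|Dp h (thetaM h u) p.2 p.1| ^ 2 + |Dm h (thetaM h u) p.2 p.1| ^ 2)))
      ≤ ENNReal.ofReal
          (4 * ((κ₂P + κ₂M) + 2 * Real.exp (2 * π) * (κ₃P + κ₃M) +
            2 * Real.exp (2 * π) * (κ₄P + κ₄M) + 2 * (κ₅P + κ₅M) +
            (κ₆P + κ₆M) + (κ₇P + κ₇M)) * h) := by
  have hρPnn : ∀ i : ℤ × ℤ, 0 ≤ rhoP h u i := fun i => norm_nonneg _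
  have hρMnn : ∀ i : ℤ × ℤ, 0 ≤ rhoM h u i := fun i => norm_nonneg _
  have k2P : 0 ≤ κ₂P := hasSum_le (fun p => by positivity) hasSum_zero hκ₂P
  have k2M : 0 ≤ κ₂M := hasSum_le (fun p => by positivity) hasSum_zero hκ₂M
  have k3P : 0 ≤ κ₃P := hasSum_le (fun p => by positivity) hasSum_zero hκ₃P
  have k3M : 0 ≤ κ₃M := hasSum_le (fun p => by positivity) hasSum_zero hκ₃M
  have k4P : 0 ≤ κ₄P := hasSum_le
    (fun p => mul_nonneg (mul_nonneg (hρPnn _) (by positivity)) (abs_nonneg _))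
    hasSum_zero hκ₄P
  have k4M : 0 ≤ κ₄M := hasSum_le
    (fun p => mul_nonneg (mul_nonneg (hρMnn _) (by positivity)) (abs_nonneg _))
    hasSum_zero hκ₄M
  have k5P : 0 ≤ κ₅P := hasSum_le
    (fun i => mul_nonneg hκ₀P.le (mul_nonneg (hρPnn _) (abs_nonneg _))) hasSum_zero hκ₅P
  have k5M : 0 ≤ κ₅M := hasSum_le
    (fun i => mul_nonneg hκ₀M.le (mul_nonneg (hρMnn _) (abs_nonneg _))) hasSum_zero hκ₅M
  have k6P : 0 ≤ κ₆P := hasSum_le (fun p => mul_nonneg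
      (add_nonneg (add_nonneg (by positivity) (by positivity))
        (mul_nonneg (mul_nonneg hh.le (by positivity)) (abs_nonneg _)))
      (abs_nonneg _)) hasSum_zero hκ₆P
  have k6M : 0 ≤ κ₆M := hasSum_le (fun p => mul_nonneg
      (add_nonneg (add_nonneg (by positivity) (by positivity))
        (mul_nonneg (mul_nonneg hh.le (by positivity)) (abs_nonneg _)))
      (abs_nonneg _)) hasSum_zero hκ₆M
  have k7P : 0 ≤ κ₇P := hasSum_le (fun p => by positivity) hasSum_zero hκ₇P
  have k7M : 0 ≤ κ₇M := hasSum_le (fun p => by positivity) hasSum_zero hκ₇M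
  have coreP := core h hh (Up h u) (fun i => LfP i (u i)) (EP h u f LfP) (rhoP h u) (thetaP h u)
    (fun i => rfl) (fun i => rfl) (κ₁P + κ₁P) (absUp h u κ₁P hκ₁P)
    (fun i => UpHeq h hh.ne' u f LfP heq i) κ₀P hκ₀P (absEP h hh u f LfP κ₀P hHP)
    θinfP κ₃P κ₄P κ₅P κ₇P hκ₃P hκ₄P hκ₅P hκ₇P
  have coreM := core h hh (Um h u) (fun i => LfM i (u i)) (EM h u f LfM) (rhoM h u) (thetaM h u)
    (fun i => rfl) (fun i => rfl) (κ₁M + κ₁M) (absUm h u κ₁M hκ₁M)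
    (fun i => UmHeq h hh.ne' u f LfM heq i) κ₀M hκ₀M (absEM h hh u f LfM κ₀M hHM)
    θinfM κ₃M κ₄M κ₅M κ₇M hκ₃M hκ₄M hκ₅M hκ₇M
  have hCP : (0:ℝ) ≤ (8*κ₃P + 16*π*κ₄P + 2*κ₅P + 2*κ₇P) * h := by
    apply mul_nonneg _ hh.le
    linarith [mul_nonneg pi_pos.le k4P]
  have hCM : (0:ℝ) ≤ (8*κ₃M + 16*π*κ₄M + 2*κ₅M + 2*κ₇M) * h := by
    apply mul_nonneg _ hh.le
    linarith [mul_nonneg pi_pos.le k4M]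
  have hfinal : (8*κ₃P + 16*π*κ₄P + 2*κ₅P + 2*κ₇P) * h + (8*κ₃M + 16*π*κ₄M + 2*κ₅M + 2*κ₇M) * h
      ≤ 4 * ((κ₂P + κ₂M) + 2 * Real.exp (2 * π) * (κ₃P + κ₃M) +
          2 * Real.exp (2 * π) * (κ₄P + κ₄M) + 2 * (κ₅P + κ₅M) +
          (κ₆P + κ₆M) + (κ₇P + κ₇M)) * h := by
    have he := Real.add_one_le_exp (2*π)
    have hπ := pi_pos
    have key : (8*κ₃P + 16*π*κ₄P + 2*κ₅P + 2*κ₇P) + (8*κ₃M + 16*π*κ₄M + 2*κ₅M + 2*κ₇M)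
        ≤ 4 * ((κ₂P + κ₂M) + 2 * Real.exp (2 * π) * (κ₃P + κ₃M) +
            2 * Real.exp (2 * π) * (κ₄P + κ₄M) + 2 * (κ₅P + κ₅M) +
            (κ₆P + κ₆M) + (κ₇P + κ₇M)) := by
      nlinarith [mul_nonneg (by linarith : (0:ℝ) ≤ Real.exp (2*π) - 1)
          (by linarith : (0:ℝ) ≤ κ₃P + κ₃M),
        mul_nonneg (by linarith : (0:ℝ) ≤ Real.exp (2*π) - 2*π)
          (by linarith : (0:ℝ) ≤ κ₄P + κ₄M)]
    calc (8*κ₃P + 16*π*κ₄P + 2*κ₅P + 2*κ₇P) * h + (8*κ₃M + 16*π*κ₄M + 2*κ₅M + 2*κ₇M) * h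
        = ((8*κ₃P + 16*π*κ₄P + 2*κ₅P + 2*κ₇P) + (8*κ₃M + 16*π*κ₄M + 2*κ₅M + 2*κ₇M)) * h := by
          ring
    _ ≤ _ := mul_le_mul_of_nonneg_right key hh.le
  calc ∑' p : (ℤ × ℤ) × Fin 2, ENNReal.ofReal
        ((rhoP h u p.1) ^ 2 *
          (|Dp h (thetaP h u) p.2 p.1| ^ 2 + |Dm h (thetaP h u) p.2 p.1| ^ 2) +
         (rhoM h u p.1) ^ 2 *
          (|Dp h (thetaM h u) p.2 p.1| ^ 2 + |Dm h (thetaM h u) p.2 p.1| ^ 2))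
      = ∑' p : (ℤ × ℤ) × Fin 2, (ENNReal.ofReal ((rhoP h u p.1) ^ 2 *
          (|Dp h (thetaP h u) p.2 p.1| ^ 2 + |Dm h (thetaP h u) p.2 p.1| ^ 2))
        + ENNReal.ofReal ((rhoM h u p.1) ^ 2 *
          (|Dp h (thetaM h u) p.2 p.1| ^ 2 + |Dm h (thetaM h u) p.2 p.1| ^ 2))) :=
      tsum_congr (fun p => ENNReal.ofReal_add (by positivity) (by positivity))
  _ = (∑' p : (ℤ × ℤ) × Fin 2, ENNReal.ofReal ((rhoP h u p.1) ^ 2 *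
          (|Dp h (thetaP h u) p.2 p.1| ^ 2 + |Dm h (thetaP h u) p.2 p.1| ^ 2)))
        + ∑' p : (ℤ × ℤ) × Fin 2, ENNReal.ofReal ((rhoM h u p.1) ^ 2 *
          (|Dp h (thetaM h u) p.2 p.1| ^ 2 + |Dm h (thetaM h u) p.2 p.1| ^ 2)) := ENNReal.tsum_add
  _ ≤ ENNReal.ofReal ((8*κ₃P + 16*π*κ₄P + 2*κ₅P + 2*κ₇P) * h)
        + ENNReal.ofReal ((8*κ₃M + 16*π*κ₄M + 2*κ₅M + 2*κ₇M) * h) := add_le_add coreP coreM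
  _ = ENNReal.ofReal ((8*κ₃P + 16*π*κ₄P + 2*κ₅P + 2*κ₇P) * h
        + (8*κ₃M + 16*π*κ₄M + 2*κ₅M + 2*κ₇M) * h) := (ENNReal.ofReal_add hCP hCM).symm
  _ ≤ ENNReal.ofReal
          (4 * ((κ₂P + κ₂M) + 2 * Real.exp (2 * π) * (κ₃P + κ₃M) +
            2 * Real.exp (2 * π) * (κ₄P + κ₄M) + 2 * (κ₅P + κ₅M) +
            (κ₆P + κ₆M) + (κ₇P + κ₇M)) * h) := ENNReal.ofReal_le_ofReal hfinal
end
end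

section
/- Let h > 0 and let u : ℤ² → ℝ satisfy D₂⁺u_i ≠ 0 and D₂⁻u_i ≠ 0 for all i ∈ ℤ², and suppose that Σ_{i∈ℤ², j∈{1,2}} [ (ρ_i⁺)²( |Dⱼ⁺ϑ_i⁺|² + |Dⱼ⁻ϑ_i⁺|² ) + (ρ_i⁻)²( |Dⱼ⁺ϑ_i⁻|² + |Dⱼ⁻ϑ_i⁻|² ) ] = 0. Then there exist ũ : ℤ → ℝ and real numbers c⁺, c⁻ such that, for every k, m ∈ ℤ, u_{(k,m)} = Σ_{j=0}^{|k|} C(|k|, j) · (c^{σ_k})^j · (1 − c^{σ_k})^{|k|−j} · ũ_{m + σ_k·j}, where σ_k = + if k > 0, σ_k = − if k < 0, and for k = 0 the right-hand side is ũ_m; moreover (u_{i±e₁} − u_i)/(u_{i±e₂} − u_i) = c^± for all i ∈ ℤ². -/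
noncomputable section

open Real

open FK

/-- sum with binomial weights -/
noncomputable def SS (c : ℝ) (σ : ℤ) (w : ℤ → ℝ) (n : ℕ) (m : ℤ) : ℝ :=
  ∑ j ∈ Finset.range (n + 1),
    (Nat.choose n j : ℝ) * c ^ j * (1 - c) ^ (n - j) * w (m + σ * (j : ℤ))

theorem SS_succ (c : ℝ) (σ : ℤ) (w : ℤ → ℝ) (n : ℕ) (m : ℤ) :
    SS c σ w (n + 1) m = c * SS c σ w n (m + σ) + (1 - c) * SS c σ w n m := by
  have peel : SS c σ w (n+1) m
      = ∑ j ∈ Finset.range (n+1),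
          (Nat.choose (n+1) (j+1) : ℝ) * c ^ (j+1) * (1-c) ^ (n - j) * w (m + σ * ((j:ℤ)+1))
        + (1-c) ^ (n+1) * w m := by
    rw [SS, Finset.sum_range_succ']
    simp [Nat.succ_sub_succ]
  have split : ∀ j ∈ Finset.range (n+1),
      (Nat.choose (n+1) (j+1) : ℝ) * c ^ (j+1) * (1-c) ^ (n - j) * w (m + σ * ((j:ℤ)+1))
      = c * ((Nat.choose n j : ℝ) * c ^ j * (1-c) ^ (n - j) * w ((m+σ) + σ * (j:ℤ)))
        + (Nat.choose n (j+1) : ℝ) * c ^ (j+1) * (1-c) ^ (n - j) * w (m + σ * ((j:ℤ)+1)) := by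
    intro j _
    have hc : ((Nat.choose (n+1) (j+1) : ℕ) : ℝ) = (Nat.choose n j : ℝ) + (Nat.choose n (j+1) : ℝ) := by
      rw [Nat.choose_succ_succ]; push_cast; ring
    have harg : (m+σ) + σ * (j:ℤ) = m + σ * ((j:ℤ)+1) := by ring
    rw [hc, harg]; ring
  rw [peel, Finset.sum_congr rfl split, Finset.sum_add_distrib, ← Finset.mul_sum]
  have h1 : ∑ j ∈ Finset.range (n+1),
      (Nat.choose n j : ℝ) * c ^ j * (1-c) ^ (n - j) * w ((m+σ) + σ * (j:ℤ)) = SS c σ w n (m+σ) := rfl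
  have hL : ∑ j ∈ Finset.range (n+1),
      (Nat.choose n (j+1) : ℝ) * c ^ (j+1) * (1-c) ^ (n - j) * w (m + σ * ((j:ℤ)+1))
      = ∑ j ∈ Finset.range n,
      (Nat.choose n (j+1) : ℝ) * c ^ (j+1) * (1-c) ^ (n - j) * w (m + σ * ((j:ℤ)+1)) := by
    rw [Finset.sum_range_succ]
    simp [Nat.choose_succ_self]
  have h2 : (∑ j ∈ Finset.range n,
      (Nat.choose n (j+1) : ℝ) * c ^ (j+1) * (1-c) ^ (n - j) * w (m + σ * ((j:ℤ)+1)))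
      + (1-c) ^ (n+1) * w m = (1 - c) * SS c σ w n m := by
    rw [SS, Finset.mul_sum, Finset.sum_range_succ']
    congr 1
    · apply Finset.sum_congr rfl
      intro j hj
      have hj' := Finset.mem_range.mp hj
      have he : n - j = (n - (j+1)) + 1 := by omega
      have harg : m + σ * ((j:ℤ)+1) = m + σ * (((j+1 : ℕ) : ℤ)) := by push_cast; ring
      rw [he, harg]; ring
    · simp; ring
  rw [h1, hL, add_assoc, h2]

theorem key (c : ℝ) (σ : ℤ) (v : ℕ → ℤ → ℝ)
    (hrec : ∀ n m, v (n+1) m = c * v n (m+σ) + (1-c) * v n m) :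
    ∀ n m, v n m = SS c σ (v 0) n m := by
  intro n
  induction n with
  | zero => intro m; simp [SS]
  | succ n ih => intro m; rw [hrec, ih, ih, SS_succ]

theorem ratio_of_arg (z w : ℂ) (hz : z.im ≠ 0) (hw : w.im ≠ 0) (ha : z.arg = w.arg) :
    z.re / z.im = w.re / w.im := by
  have hz0 : z ≠ 0 := fun h => hz (by simp [h])
  have hw0 : w ≠ 0 := fun h => hw (by simp [h])
  have habs_z : ‖z‖ ≠ 0 := norm_ne_zero_iff.mpr hz0
  have habs_w : ‖w‖ ≠ 0 := norm_ne_zero_iff.mpr hw0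
  have h1 : z.re / z.im = Real.cos z.arg / Real.sin z.arg := by
    rw [Complex.cos_arg hz0, Complex.sin_arg]
    field_simp
  have h2 : w.re / w.im = Real.cos w.arg / Real.sin w.arg := by
    rw [Complex.cos_arg hw0, Complex.sin_arg]
    field_simp
  rw [h1, h2, ha]

theorem const_of_steps (g : ℤ × ℤ → ℝ)
    (h0 : ∀ i : ℤ × ℤ, g (i + (1, 0)) = g i)
    (h1 : ∀ i : ℤ × ℤ, g (i + (0, 1)) = g i) :
    ∀ i : ℤ × ℤ, g i = g (0, 0) := by
  have row : ∀ k m : ℤ, g (k, m) = g (0, m) := by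
    intro k m
    induction k using Int.induction_on with
    | zero => rfl
    | succ k ih => have := h0 (k, m); rw [show ((k:ℤ), m) + ((1:ℤ), (0:ℤ)) = ((k:ℤ)+1, m) by simp [Prod.ext_iff]] at this ; rw [this, ih]
    | pred k ih => have := h0 (-(k:ℤ)-1, m); rw [show ((-(k:ℤ)-1), m) + ((1:ℤ), (0:ℤ)) = (-(k:ℤ), m) by simp [Prod.ext_iff]; try ring] at this ; rw [← this, ih]
  have col : ∀ m : ℤ, g (0, m) = g (0, 0) := by
    intro m
    induction m using Int.induction_on with
    | zero => rfl
    | succ m ih => have := h1 (0, m); rw [show ((0:ℤ), (m:ℤ)) + ((0:ℤ), (1:ℤ)) = ((0:ℤ), (m:ℤ)+1) by simp [Prod.ext_iff]] at this ; rw [this, ih]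
    | pred m ih => have := h1 (0, -(m:ℤ)-1); rw [show ((0:ℤ), -(m:ℤ)-1) + ((0:ℤ), (1:ℤ)) = ((0:ℤ), -(m:ℤ)) by simp [Prod.ext_iff]; try ring] at this ; rw [← this, ih]
  exact fun i => (row i.1 i.2).trans (col i.2)

/-- Lemma 1.3 / `KK-1D` of the paper.  One-dimensional reconstruction of
functions whose angular energy vanishes identically. -/
theorem statement3
    (h : ℝ) (hh : 0 < h) (u : ℤ × ℤ → ℝ)
    (hd2p : ∀ i : ℤ × ℤ, Dp h u 1 i ≠ 0)
    (hd2m : ∀ i : ℤ × ℤ, Dm h u 1 i ≠ 0)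
    (hzero : (∑' p : (ℤ × ℤ) × Fin 2, ENNReal.ofReal
        ((rhoP h u p.1) ^ 2 *
          (|Dp h (thetaP h u) p.2 p.1| ^ 2 + |Dm h (thetaP h u) p.2 p.1| ^ 2) +
         (rhoM h u p.1) ^ 2 *
          (|Dp h (thetaM h u) p.2 p.1| ^ 2 + |Dm h (thetaM h u) p.2 p.1| ^ 2))) = 0) :
    ∃ (util : ℤ → ℝ) (cp cm : ℝ),
      (∀ k m : ℤ,
        u (k, m) = ∑ j ∈ Finset.range (k.natAbs + 1),
          (Nat.choose k.natAbs j : ℝ) *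
            (if 0 < k then cp else if k < 0 then cm else 1) ^ j *
            (1 - (if 0 < k then cp else if k < 0 then cm else 1)) ^ (k.natAbs - j) *
            util (m + k.sign * (j : ℤ))) ∧
      (∀ i : ℤ × ℤ,
        (u (i + ee 0) - u i) / (u (i + ee 1) - u i) = cp ∧
        (u (i - ee 0) - u i) / (u (i - ee 1) - u i) = cm) := by
  have hne : h ≠ 0 := ne_of_gt hh
  -- basic re/im facts
  have hUpre : ∀ i, (Up h u i).re = Dp h u 0 i := by intro i; simp [Up]
  have hUpim : ∀ i, (Up h u i).im = Dp h u 1 i := by intro i; simp [Up]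
  have hUmre : ∀ i, (Um h u i).re = Dm h u 0 i := by intro i; simp [Um]
  have hUmim : ∀ i, (Um h u i).im = Dm h u 1 i := by intro i; simp [Um]
  -- pointwise vanishing
  rw [ENNReal.tsum_eq_zero] at hzero
  have hpt : ∀ (i : ℤ × ℤ) (j : Fin 2),
      Dp h (thetaP h u) j i = 0 ∧ Dp h (thetaM h u) j i = 0 := by
    intro i j
    have hv : ENNReal.ofReal
        ((rhoP h u i) ^ 2 *
          (|Dp h (thetaP h u) j i| ^ 2 + |Dm h (thetaP h u) j i| ^ 2) +
         (rhoM h u i) ^ 2 *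
          (|Dp h (thetaM h u) j i| ^ 2 + |Dm h (thetaM h u) j i| ^ 2)) = 0 := hzero (i, j)
    rw [ENNReal.ofReal_eq_zero] at hv
    have hrp : 0 < rhoP h u i := by
      have : Up h u i ≠ 0 := fun hz => hd2p i (by rw [← hUpim i, hz]; simp)
      exact norm_pos_iff.mpr this
    have hrm : 0 < rhoM h u i := by
      have : Um h u i ≠ 0 := fun hz => hd2m i (by rw [← hUmim i, hz]; simp)
      exact norm_pos_iff.mpr this
    have e1 : 0 ≤ (rhoP h u i) ^ 2 *
        (|Dp h (thetaP h u) j i| ^ 2 + |Dm h (thetaP h u) j i| ^ 2) := by positivity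
    have e2 : 0 ≤ (rhoM h u i) ^ 2 *
        (|Dp h (thetaM h u) j i| ^ 2 + |Dm h (thetaM h u) j i| ^ 2) := by positivity
    have hA : (rhoP h u i) ^ 2 *
        (|Dp h (thetaP h u) j i| ^ 2 + |Dm h (thetaP h u) j i| ^ 2) = 0 := le_antisymm (by linarith) e1
    have hB : (rhoM h u i) ^ 2 *
        (|Dp h (thetaM h u) j i| ^ 2 + |Dm h (thetaM h u) j i| ^ 2) = 0 := le_antisymm (by linarith) e2
    have hrp2 : (rhoP h u i) ^ 2 ≠ 0 := pow_ne_zero 2 (ne_of_gt hrp)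
    have hrm2 : (rhoM h u i) ^ 2 ≠ 0 := pow_ne_zero 2 (ne_of_gt hrm)
    have hA' : |Dp h (thetaP h u) j i| ^ 2 + |Dm h (thetaP h u) j i| ^ 2 = 0 :=
      (mul_eq_zero.mp hA).resolve_left hrp2
    have hB' : |Dp h (thetaM h u) j i| ^ 2 + |Dm h (thetaM h u) j i| ^ 2 = 0 :=
      (mul_eq_zero.mp hB).resolve_left hrm2
    constructor
    · have : |Dp h (thetaP h u) j i| = 0 := by
        nlinarith [sq_nonneg |Dp h (thetaP h u) j i|, sq_nonneg |Dm h (thetaP h u) j i|,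
          abs_nonneg (Dp h (thetaP h u) j i)]
      exact abs_eq_zero.mp this
    · have : |Dp h (thetaM h u) j i| = 0 := by
        nlinarith [sq_nonneg |Dp h (thetaM h u) j i|, sq_nonneg |Dm h (thetaM h u) j i|,
          abs_nonneg (Dp h (thetaM h u) j i)]
      exact abs_eq_zero.mp this
  -- thetaP constant
  have stepP : ∀ (j : Fin 2) (i : ℤ × ℤ), thetaP h u (i + ee j) = thetaP h u i := by
    intro j i
    have := (hpt i j).1
    rw [Dp, div_eq_zero_iff] at this
    rcases this with hx | hx
    · linarith
    · exact absurd hx hne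
  have stepM : ∀ (j : Fin 2) (i : ℤ × ℤ), thetaM h u (i + ee j) = thetaM h u i := by
    intro j i
    have := (hpt i j).2
    rw [Dp, div_eq_zero_iff] at this
    rcases this with hx | hx
    · linarith
    · exact absurd hx hne
  have ee0 : ee 0 = ((1:ℤ), (0:ℤ)) := rfl
  have ee1 : ee 1 = ((0:ℤ), (1:ℤ)) := rfl
  have constP : ∀ i, thetaP h u i = thetaP h u (0, 0) :=
    const_of_steps _ (fun i => by rw [← ee0]; exact stepP 0 i) (fun i => by rw [← ee1]; exact stepP 1 i)
  have constM : ∀ i, thetaM h u i = thetaM h u (0, 0) :=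
    const_of_steps _ (fun i => by rw [← ee0]; exact stepM 0 i) (fun i => by rw [← ee1]; exact stepM 1 i)
  -- constants
  set cp := Dp h u 0 (0, 0) / Dp h u 1 (0, 0) with hcp
  set cm := Dm h u 0 (0, 0) / Dm h u 1 (0, 0) with hcm
  have ratioP : ∀ i, Dp h u 0 i / Dp h u 1 i = cp := by
    intro i
    have := ratio_of_arg (Up h u i) (Up h u (0,0))
      (by rw [hUpim]; exact hd2p i) (by rw [hUpim]; exact hd2p (0,0))
      ((constP i))
    rwa [hUpre, hUpim, hUpre, hUpim] at this
  have ratioM : ∀ i, Dm h u 0 i / Dm h u 1 i = cm := by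
    intro i
    have := ratio_of_arg (Um h u i) (Um h u (0,0))
      (by rw [hUmim]; exact hd2m i) (by rw [hUmim]; exact hd2m (0,0))
      ((constM i))
    rwa [hUmre, hUmim, hUmre, hUmim] at this
  -- u-difference ratios
  have udiff_p : ∀ (i : ℤ × ℤ) (j : Fin 2), u (i + ee j) - u i = h * Dp h u j i := by
    intro i j; rw [Dp]; field_simp
  have udiff_m : ∀ (i : ℤ × ℤ) (j : Fin 2), u (i - ee j) - u i = -(h * Dm h u j i) := by
    intro i j; rw [Dm]; field_simp; ring
  have uratP : ∀ i : ℤ × ℤ, (u (i + ee 0) - u i) / (u (i + ee 1) - u i) = cp := by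
    intro i
    rw [udiff_p i 0, udiff_p i 1, mul_div_mul_left _ _ hne]
    exact ratioP i
  have uratM : ∀ i : ℤ × ℤ, (u (i - ee 0) - u i) / (u (i - ee 1) - u i) = cm := by
    intro i
    rw [udiff_m i 0, udiff_m i 1, neg_div_neg_eq, mul_div_mul_left _ _ hne]
    exact ratioM i
  -- linear recurrences
  have hbP : ∀ i : ℤ × ℤ, u (i + ee 1) - u i ≠ 0 := by
    intro i hb0; apply hd2p i; rw [Dp, hb0, zero_div]
  have hbM : ∀ i : ℤ × ℤ, u (i - ee 1) - u i ≠ 0 := by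
    intro i hb0; apply hd2m i
    rw [Dm, show u i - u (i - ee 1) = -(u (i - ee 1) - u i) by ring, hb0, neg_zero, zero_div]
  have recP : ∀ i : ℤ × ℤ, u (i + ee 0) = cp * u (i + ee 1) + (1 - cp) * u i := by
    intro i
    have h1 := uratP i
    have h2 : u (i + ee 0) - u i = cp * (u (i + ee 1) - u i) := by
      field_simp at h1
      rw [div_eq_iff (hbP i)] at h1
      · linarith [h1]
    linarith [h2]
  have recM : ∀ i : ℤ × ℤ, u (i - ee 0) = cm * u (i - ee 1) + (1 - cm) * u i := by
    intro i
    have h1 := uratM i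
    have h2 : u (i - ee 0) - u i = cm * (u (i - ee 1) - u i) := by
      rw [div_eq_iff (hbM i)] at h1
      · linarith [h1]
    linarith [h2]
  -- assemble
  refine ⟨fun m => u (0, m), cp, cm, ?_, fun i => ⟨uratP i, uratM i⟩⟩
  intro k m
  rcases lt_trichotomy k 0 with hk | hk | hk
  · -- k < 0
    have hif : (if 0 < k then cp else if k < 0 then cm else 1) = cm := by
      rw [if_neg (by omega), if_pos hk]
    have hsg : k.sign = -1 := Int.sign_eq_neg_one_of_neg hk
    have hna : ((k.natAbs : ℤ)) = -k := by omega
    set v : ℕ → ℤ → ℝ := fun n m => u (-(n : ℤ), m) with hv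
    have hrec : ∀ n m, v (n+1) m = cm * v n (m + (-1)) + (1-cm) * v n m := by
      intro n m'
      have := recM ((-(n:ℤ), m'))
      rw [show ((-(n:ℤ), m') - ee 0) = (-((n:ℕ)+1 : ℤ), m') by simp [ee0, Prod.ext_iff]; ring,
          show ((-(n:ℤ), m') - ee 1) = (-(n:ℤ), m' + (-1)) by simp [ee1, Prod.ext_iff]; try ring] at this
      simpa [hv] using this
    have hk' := key cm (-1) v hrec k.natAbs m
    have hval : u (k, m) = v k.natAbs m := by
      show u (k, m) = u (-(k.natAbs : ℤ), m)
      rw [show -((k.natAbs : ℤ)) = k by omega]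
    rw [hval, hk', SS]
    apply Finset.sum_congr rfl
    intro j _
    rw [hif, hsg]
    show _ = _ * _ * _ * u (0, m + -1 * (j:ℤ))
    rfl
  · -- k = 0
    subst hk
    simp
  · -- k > 0
    have hif : (if 0 < k then cp else if k < 0 then cm else 1) = cp := if_pos hk
    have hsg : k.sign = 1 := Int.sign_eq_one_of_pos hk
    have hna : ((k.natAbs : ℤ)) = k := Int.natAbs_of_nonneg (le_of_lt hk)
    set v : ℕ → ℤ → ℝ := fun n m => u ((n : ℤ), m) with hv
    have hrec : ∀ n m, v (n+1) m = cp * v n (m + 1) + (1-cp) * v n m := by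
      intro n m'
      have := recP (((n:ℤ), m'))
      rw [show (((n:ℤ), m') + ee 0) = (((n:ℕ)+1 : ℤ), m') by simp [ee0, Prod.ext_iff]; try ring,
          show (((n:ℤ), m') + ee 1) = ((n:ℤ), m' + 1) by simp [ee1, Prod.ext_iff]] at this
      simpa [hv] using this
    have hk' := key cp 1 v hrec k.natAbs m
    have hval : u (k, m) = v k.natAbs m := by
      show u (k, m) = u ((k.natAbs : ℤ), m)
      rw [show ((k.natAbs : ℤ)) = k by omega]
    rw [hval, hk', SS]
    apply Finset.sum_congr rfl
    intro j _
    rw [hif, hsg]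
    show _ = _ * _ * _ * u (0, m + 1 * (j:ℤ))
    rfl
end
end

section
/- Let h > 0 and let u : ℤ² → ℝ solve Lu_i = f(i, u_i) for all i ∈ ℤ², where f satisfies the structural condition (H⁺) with data L_f⁺, κ₀⁺, and assume the nondegeneracy condition. Then for every i ∈ ℤ², | Σ_{j=1,2} ( Dⱼ⁺((ρ⁺)²Dⱼ⁺ϑ⁺)_i + Dⱼ⁻((ρ⁺)²Dⱼ⁻ϑ⁺)_i ) | ≤ 2e^{2π}h·Σ_{j=1,2}(ρ_i⁺)²( |Dⱼ⁺ϑ_i⁺|³ + |Dⱼ⁻ϑ_i⁺|³ ) + 2e^{2π}h·Σ_{j=1,2} ρ_i⁺( |Dⱼ⁺ρ_i⁺|·|Dⱼ⁺ϑ_i⁺|² + |Dⱼ⁻ρ_i⁺|·|Dⱼ⁻ϑ_i⁺|² ) + 2κ₀⁺·h·ρ_i⁺ + h·Σ_{j=1,2}( |Dⱼ⁺((ρ⁺)²)_i|·|Dⱼ⁺(Dⱼ⁺ϑ⁺)_i| + |Dⱼ⁻((ρ⁺)²)_i|·|Dⱼ⁻(Dⱼ⁻ϑ⁺)_i| + h·(ρ_i⁺)²·|Lⱼ(Lⱼϑ⁺)_i|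 ) + h·Σ_{j=1,2}( |Dⱼ⁺ρ_i⁺|²·|Dⱼ⁺ϑ_i⁺| + |Dⱼ⁻ρ_i⁺|²·|Dⱼ⁻ϑ_i⁺| ). -/
noncomputable section

open Real

open FK

set_option maxHeartbeats 1000000


theorem sin_cubic' (x : ℝ) : |Real.sin x - x| ≤ 2 * |x| ^ 3 := by
  have key : ∀ y : ℝ, 0 ≤ y → |Real.sin y - y| ≤ 2 * y ^ 3 := by
    intro y hy
    rcases eq_or_lt_of_le hy with rfl | hy'
    · simp
    rcases le_or_gt y 1 with h1 | h1
    · have hs1 := Real.sin_lt hy'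
      have hs2 := Real.sin_gt_sub_cube hy'
      rw [abs_of_nonpos (by linarith)]
      nlinarith [pow_nonneg hy 3]
    · have hs1 := Real.sin_le_one y
      have hs2 := Real.neg_one_le_sin y
      have h3 : |Real.sin y - y| ≤ 1 + y := by
        rw [abs_le]; constructor <;> nlinarith
      nlinarith [mul_nonneg (by linarith : (0:ℝ) ≤ y - 1) (by positivity : (0:ℝ) ≤ 2*y^2 + 2*y + 1)]
  rcases le_total 0 x with hx | hx
  · rw [abs_of_nonneg hx]; exact key x hx
  · have h2 : Real.sin (-x) - (-x) = -(Real.sin x - x) := by rw [Real.sin_neg]; ring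
    have h3 := key (-x) (by linarith)
    rw [h2, abs_neg] at h3
    rw [abs_of_nonpos hx]
    simpa using h3

theorem exp2pi : 4 * π ≤ Real.exp (2 * π) := by
  have h1 : Real.exp (2 * π) = Real.exp π * Real.exp π := by rw [← Real.exp_add]; ring_nf
  have h2 := Real.add_one_le_exp π
  have h3 := Real.pi_gt_three
  nlinarith

theorem two_le_exp2pi : (2 : ℝ) ≤ Real.exp (2 * π) := by
  have := exp2pi
  have h3 := Real.pi_gt_three
  nlinarith

theorem habs' (u v : ℝ) : |u - v| ≤ |u| + |v| := by
  simpa [sub_eq_add_neg] using abs_add_le u (-v)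

theorem tri6 (x1 x2 x3 x4 x5 x6 : ℝ) :
    |x1 - x2 + x3 + x4 - x5 - x6| ≤ |x1| + |x2| + |x3| + |x4| + |x5| + |x6| := by
  have a1 := abs_add_le (x1 - x2) x3
  have a2 := abs_add_le (x1 - x2 + x3) x4
  have a3 := habs' (x1 - x2 + x3 + x4) x5
  have a4 := habs' (x1 - x2 + x3 + x4 - x5) x6
  have a5 := habs' x1 x2
  linarith

theorem keyreal2 (h r0 rp rm a b p q A1 A2 B1 B2 LL Ea Eb : ℝ) (hh : 0 < h)
    (hr0 : 0 ≤ r0) (hrp : 0 ≤ rp) (hrm : 0 ≤ rm)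
    (hrp' : rp ≤ r0 + h * |p|) (hrm' : rm ≤ r0 + h * |q|)
    (hEa : |Ea| ≤ 2 * (h * |a|) ^ 3) (hEb : |Eb| ≤ 2 * (h * |b|) ^ 3)
    (h2a : h * |a| ≤ 2 * π) (h2b : h * |b| ≤ 2 * π) :
    |h * A1 * A2 - h * B1 * B2 + h * (h * r0 ^ 2 * LL) + h * p ^ 2 * a - h * q ^ 2 * b -
        2 * ((r0 * rp * Ea - r0 * rm * Eb) / h ^ 2)|
      ≤ 2 * Real.exp (2 * π) * h * (r0 ^ 2 * (|a| ^ 3 + |b| ^ 3)) +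
        2 * Real.exp (2 * π) * h * (r0 * (|p| * |a| ^ 2 + |q| * |b| ^ 2)) +
        h * (|A1| * |A2| + |B1| * |B2| + h * r0 ^ 2 * |LL|) +
        h * (|p| ^ 2 * |a| + |q| ^ 2 * |b|) := by
  have hh' : h ≠ 0 := ne_of_gt hh
  have e1 : (4 : ℝ) ≤ 2 * Real.exp (2 * π) := by linarith [two_le_exp2pi]
  have e2 : 8 * π ≤ 2 * Real.exp (2 * π) := by linarith [exp2pi]
  have b1 : |h * A1 * A2| = h * (|A1| * |A2|) := by
    rw [abs_mul, abs_mul, abs_of_pos hh]; ring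
  have b2 : |h * B1 * B2| = h * (|B1| * |B2|) := by
    rw [abs_mul, abs_mul, abs_of_pos hh]; ring
  have b3 : |h * (h * r0 ^ 2 * LL)| = h * (h * r0 ^ 2 * |LL|) := by
    rw [abs_mul, abs_mul, abs_mul, abs_of_pos hh, abs_pow, abs_of_nonneg hr0]
  have b4 : |h * p ^ 2 * a| = h * (|p| ^ 2 * |a|) := by
    rw [abs_mul, abs_mul, abs_of_pos hh, abs_pow]; ring
  have b5 : |h * q ^ 2 * b| = h * (|q| ^ 2 * |b|) := by
    rw [abs_mul, abs_mul, abs_of_pos hh, abs_pow]; ring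
  have b6 : |2 * ((r0 * rp * Ea - r0 * rm * Eb) / h ^ 2)| ≤
      2 * (r0 * rp * |Ea|) / h ^ 2 + 2 * (r0 * rm * |Eb|) / h ^ 2 := by
    have hin : |r0 * rp * Ea - r0 * rm * Eb| ≤ r0 * rp * |Ea| + r0 * rm * |Eb| := by
      refine (habs' _ _).trans ?_
      rw [abs_mul, abs_mul, abs_mul, abs_mul, abs_of_nonneg hr0, abs_of_nonneg hrp,
        abs_of_nonneg hrm]
    have heq2 : |2 * ((r0 * rp * Ea - r0 * rm * Eb) / h ^ 2)| =
        2 * (|r0 * rp * Ea - r0 * rm * Eb| / h ^ 2) := by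
      rw [abs_mul, abs_div, abs_of_nonneg (sq_nonneg h)]
      norm_num
    rw [heq2]
    calc 2 * (|r0 * rp * Ea - r0 * rm * Eb| / h ^ 2)
        ≤ 2 * ((r0 * rp * |Ea| + r0 * rm * |Eb|) / h ^ 2) := by gcongr
      _ = 2 * (r0 * rp * |Ea|) / h ^ 2 + 2 * (r0 * rm * |Eb|) / h ^ 2 := by ring
  have key1 : r0 * rp * |Ea| ≤ r0 * ((r0 + h * |p|) * (2 * (h * |a|) ^ 3)) := by
    have h1 : rp * |Ea| ≤ (r0 + h * |p|) * (2 * (h * |a|) ^ 3) :=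
      mul_le_mul hrp' hEa (abs_nonneg Ea) (by positivity)
    calc r0 * rp * |Ea| = r0 * (rp * |Ea|) := by ring
      _ ≤ r0 * ((r0 + h * |p|) * (2 * (h * |a|) ^ 3)) := mul_le_mul_of_nonneg_left h1 hr0
  have key2 : r0 * rm * |Eb| ≤ r0 * ((r0 + h * |q|) * (2 * (h * |b|) ^ 3)) := by
    have h1 : rm * |Eb| ≤ (r0 + h * |q|) * (2 * (h * |b|) ^ 3) :=
      mul_le_mul hrm' hEb (abs_nonneg Eb) (by positivity)
    calc r0 * rm * |Eb| = r0 * (rm * |Eb|) := by ring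
      _ ≤ r0 * ((r0 + h * |q|) * (2 * (h * |b|) ^ 3)) := mul_le_mul_of_nonneg_left h1 hr0
  have parta : 2 * (r0 * rp * |Ea|) / h ^ 2 ≤
      2 * Real.exp (2 * π) * h * (r0 ^ 2 * |a| ^ 3) +
      2 * Real.exp (2 * π) * h * (r0 * (|p| * |a| ^ 2)) := by
    calc 2 * (r0 * rp * |Ea|) / h ^ 2
        ≤ 2 * (r0 * ((r0 + h * |p|) * (2 * (h * |a|) ^ 3))) / h ^ 2 := by gcongr
      _ = 4 * h * (r0 ^ 2 * |a| ^ 3) + 4 * (h * |a|) * (h * (r0 * (|p| * |a| ^ 2))) := by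
          rw [div_eq_iff (pow_ne_zero 2 hh')]; ring
      _ ≤ 4 * h * (r0 ^ 2 * |a| ^ 3) + 4 * (2 * π) * (h * (r0 * (|p| * |a| ^ 2))) := by gcongr
      _ ≤ _ := by
          nlinarith [e1, e2, (by positivity : (0:ℝ) ≤ h * (r0 ^ 2 * |a| ^ 3)),
            (by positivity : (0:ℝ) ≤ h * (r0 * (|p| * |a| ^ 2)))]
  have partb : 2 * (r0 * rm * |Eb|) / h ^ 2 ≤
      2 * Real.exp (2 * π) * h * (r0 ^ 2 * |b| ^ 3) +
      2 * Real.exp (2 * π) * h * (r0 * (|q| * |b| ^ 2)) := by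
    calc 2 * (r0 * rm * |Eb|) / h ^ 2
        ≤ 2 * (r0 * ((r0 + h * |q|) * (2 * (h * |b|) ^ 3))) / h ^ 2 := by gcongr
      _ = 4 * h * (r0 ^ 2 * |b| ^ 3) + 4 * (h * |b|) * (h * (r0 * (|q| * |b| ^ 2))) := by
          rw [div_eq_iff (pow_ne_zero 2 hh')]; ring
      _ ≤ 4 * h * (r0 ^ 2 * |b| ^ 3) + 4 * (2 * π) * (h * (r0 * (|q| * |b| ^ 2))) := by gcongr
      _ ≤ _ := by
          nlinarith [e1, e2, (by positivity : (0:ℝ) ≤ h * (r0 ^ 2 * |b| ^ 3)),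
            (by positivity : (0:ℝ) ≤ h * (r0 * (|q| * |b| ^ 2)))]
  refine (tri6 _ _ _ _ _ _).trans ?_
  rw [b1, b2, b3, b4, b5]
  linarith [b6, parta, partb]

theorem keyreal (h r0 rp rm t0 tp tm tpp tmm : ℝ) (hh : 0 < h)
    (hr0 : 0 ≤ r0) (hrp : 0 ≤ rp) (hrm : 0 ≤ rm)
    (hta : |tp - t0| ≤ 2 * π) (htb : |t0 - tm| ≤ 2 * π) :
    |(rp ^ 2 * ((tpp - tp) / h) - r0 ^ 2 * ((tp - t0) / h)) / h +
        (r0 ^ 2 * ((t0 - tm) / h) - rm ^ 2 * ((tm - tmm) / h)) / h -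
        2 * ((r0 * rp * Real.sin (tp - t0) - r0 * rm * Real.sin (t0 - tm)) / h ^ 2)|
      ≤ 2 * Real.exp (2 * π) * h * (r0 ^ 2 * (|(tp - t0) / h| ^ 3 + |(t0 - tm) / h| ^ 3)) +
        2 * Real.exp (2 * π) * h *
          (r0 * (|(rp - r0) / h| * |(tp - t0) / h| ^ 2 + |(r0 - rm) / h| * |(t0 - tm) / h| ^ 2)) +
        h * (|(rp ^ 2 - r0 ^ 2) / h| * |((tpp - tp) / h - (tp - t0) / h) / h| +
             |(r0 ^ 2 - rm ^ 2) / h| * |((t0 - tm) / h - (tm - tmm) / h) / h| +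
             h * r0 ^ 2 *
               |((tpp + t0 - 2 * tp) / h ^ 2 + (t0 + tmm - 2 * tm) / h ^ 2 -
                   2 * ((tp + tm - 2 * t0) / h ^ 2)) / h ^ 2|) +
        h * (|(rp - r0) / h| ^ 2 * |(tp - t0) / h| + |(r0 - rm) / h| ^ 2 * |(t0 - tm) / h|) := by
  have hh' : h ≠ 0 := ne_of_gt hh
  have hd : ∀ x : ℝ, h * |x / h| = |x| := by
    intro x
    rw [abs_div, abs_of_pos hh]
    field_simp
  have H := keyreal2 h r0 rp rm ((tp - t0) / h) ((t0 - tm) / h) ((rp - r0) / h) ((r0 - rm) / h)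
    ((rp ^ 2 - r0 ^ 2) / h) (((tpp - tp) / h - (tp - t0) / h) / h)
    ((r0 ^ 2 - rm ^ 2) / h) (((t0 - tm) / h - (tm - tmm) / h) / h)
    (((tpp + t0 - 2 * tp) / h ^ 2 + (t0 + tmm - 2 * tm) / h ^ 2 -
        2 * ((tp + tm - 2 * t0) / h ^ 2)) / h ^ 2)
    (Real.sin (tp - t0) - (tp - t0)) (Real.sin (t0 - tm) - (t0 - tm)) hh hr0 hrp hrm
    (by rw [hd]; linarith [le_abs_self (rp - r0)])
    (by rw [hd]; linarith [neg_abs_le (r0 - rm)])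
    (by rw [hd]; exact sin_cubic' _)
    (by rw [hd]; exact sin_cubic' _)
    (by rw [hd]; exact hta)
    (by rw [hd]; exact htb)
  refine le_trans (le_of_eq ?_) H
  congr 1
  field_simp
  ring

theorem Tbound (h : ℝ) (hh : 0 < h) (u : ℤ × ℤ → ℝ) (f Lf : (ℤ × ℤ) → ℝ → ℝ) (κ₀ : ℝ)
    (heq : ∀ i : ℤ × ℤ, Lap h u i = f i (u i)) (hH : Hplus h u f Lf κ₀) (i : ℤ × ℤ) :
    |∑ j : Fin 2,
        (rhoP h u i * rhoP h u (i + ee j) * Real.sin (thetaP h u (i + ee j) - thetaP h u i) -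
          rhoP h u i * rhoP h u (i - ee j) * Real.sin (thetaP h u i - thetaP h u (i - ee j))) /
          h ^ 2|
      ≤ κ₀ * h * rhoP h u i := by
  have hh' : h ≠ 0 := ne_of_gt hh
  have hρ : ∀ k : ℤ × ℤ, 0 ≤ rhoP h u k := fun k => norm_nonneg _
  have hre : ∀ k : ℤ × ℤ, rhoP h u k * Real.cos (thetaP h u k) = Dp h u 0 k := by
    intro k
    have h1 := Complex.norm_mul_cos_arg (Up h u k)
    have h2 : (Up h u k).re = Dp h u 0 k := by simp [Up]
    rw [← h2]
    exact h1
  have him : ∀ k : ℤ × ℤ, rhoP h u k * Real.sin (thetaP h u k) = Dp h u 1 k := by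
    intro k
    have h1 := Complex.norm_mul_sin_arg (Up h u k)
    have h2 : (Up h u k).im = Dp h u 1 k := by simp [Up]
    rw [← h2]
    exact h1
  have conv : ∀ k k' : ℤ × ℤ,
      rhoP h u k * rhoP h u k' * Real.sin (thetaP h u k' - thetaP h u k) =
        Dp h u 1 k' * Dp h u 0 k - Dp h u 0 k' * Dp h u 1 k := by
    intro k k'
    rw [Real.sin_sub, ← hre k, ← him k, ← hre k', ← him k']
    ring
  have conv2 : ∀ k k' : ℤ × ℤ,
      rhoP h u k' * rhoP h u k * Real.sin (thetaP h u k' - thetaP h u k) =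
        Dp h u 1 k' * Dp h u 0 k - Dp h u 0 k' * Dp h u 1 k := by
    intro k k'
    rw [← conv k k']
    ring
  have hHi := hH i
  simp only [Fin.sum_univ_two] at hHi
  set η₁ := f (i + ee 0) (u (i + ee 0)) - f i (u i) - Lf i (u i) * (u (i + ee 0) - u i) with hη₁
  set η₂ := f (i + ee 1) (u (i + ee 1)) - f i (u i) - Lf i (u i) * (u (i + ee 1) - u i) with hη₂
  have hX : (Dp h u 0 i * η₂ - Dp h u 1 i * η₁) / h =
      ∑ j : Fin 2,
        (rhoP h u i * rhoP h u (i + ee j) * Real.sin (thetaP h u (i + ee j) - thetaP h u i) -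
          rhoP h u i * rhoP h u (i - ee j) * Real.sin (thetaP h u i - thetaP h u (i - ee j))) /
          h ^ 2 := by
    simp only [Fin.sum_univ_two, conv, conv2]
    rw [hη₁, hη₂]
    rw [show f (i + ee 0) (u (i + ee 0)) = Lap h u (i + ee 0) from (heq _).symm,
      show f (i + ee 1) (u (i + ee 1)) = Lap h u (i + ee 1) from (heq _).symm,
      show f i (u i) = Lap h u i from (heq _).symm]
    simp only [Lap, Lj, Dp, add_sub_cancel_right, sub_add_cancel, sub_add_eq_add_sub,
      add_right_comm i (ee 1) (ee 0)]
    field_simp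
    ring
  rw [← hX]
  have hc : |Dp h u 0 i| ≤ rhoP h u i := by
    rw [← hre i, abs_mul, abs_of_nonneg (hρ i)]
    exact mul_le_of_le_one_right (hρ i) (Real.abs_cos_le_one _)
  have hs : |Dp h u 1 i| ≤ rhoP h u i := by
    rw [← him i, abs_mul, abs_of_nonneg (hρ i)]
    exact mul_le_of_le_one_right (hρ i) (Real.abs_sin_le_one _)
  calc |(Dp h u 0 i * η₂ - Dp h u 1 i * η₁) / h|
      = |Dp h u 0 i * η₂ - Dp h u 1 i * η₁| / h := by rw [abs_div, abs_of_pos hh]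
    _ ≤ (|Dp h u 0 i| * |η₂| + |Dp h u 1 i| * |η₁|) / h := by
        gcongr
        refine (habs' _ _).trans ?_
        rw [abs_mul, abs_mul]
    _ ≤ (rhoP h u i * |η₂| + rhoP h u i * |η₁|) / h := by gcongr
    _ = rhoP h u i * (|η₁| / h + |η₂| / h) := by ring
    _ ≤ rhoP h u i * (κ₀ * h) := mul_le_mul_of_nonneg_left hHi (hρ i)
    _ = κ₀ * h * rhoP h u i := by ring

theorem tri' (x y a b : ℝ) : |x + y| ≤ |x - 2 * a| + |y - 2 * b| + 2 * |a + b| := by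
  have h1 : x + y = x - 2 * a + (y - 2 * b) + 2 * (a + b) := by ring
  rw [h1]
  calc |x - 2 * a + (y - 2 * b) + 2 * (a + b)|
      ≤ |x - 2 * a + (y - 2 * b)| + |2 * (a + b)| := abs_add_le _ _
    _ ≤ |x - 2 * a| + |y - 2 * b| + |2 * (a + b)| := by
        linarith [abs_add_le (x - 2 * a) (y - 2 * b)]
    _ = |x - 2 * a| + |y - 2 * b| + 2 * |a + b| := by rw [abs_mul]; norm_num



/-- Lemma 3.1 / `lem:linearized equation` of the paper.  Approximate
divergence-form identity for the angular function, with quantified remainder. -/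
theorem statement8
    (h : ℝ) (hh : 0 < h)
    (u : ℤ × ℤ → ℝ) (f Lf : (ℤ × ℤ) → ℝ → ℝ) (κ₀ : ℝ) (hκ₀ : 0 < κ₀)
    (heq : ∀ i : ℤ × ℤ, Lap h u i = f i (u i))
    (hH : Hplus h u f Lf κ₀)
    (hnd : NondegP u) :
    ∀ i : ℤ × ℤ,
      |∑ j : Fin 2,
          (Dp h (fun k => (rhoP h u k) ^ 2 * Dp h (thetaP h u) j k) j i +
           Dm h (fun k => (rhoP h u k) ^ 2 * Dm h (thetaP h u) j k) j i)|
        ≤ 2 * Real.exp (2 * π) * h *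
            (∑ j : Fin 2, (rhoP h u i) ^ 2 *
              (|Dp h (thetaP h u) j i| ^ 3 + |Dm h (thetaP h u) j i| ^ 3)) +
          2 * Real.exp (2 * π) * h *
            (∑ j : Fin 2, rhoP h u i *
              (|Dp h (rhoP h u) j i| * |Dp h (thetaP h u) j i| ^ 2 +
               |Dm h (rhoP h u) j i| * |Dm h (thetaP h u) j i| ^ 2)) +
          2 * κ₀ * h * rhoP h u i +
          h * (∑ j : Fin 2,
            (|Dp h (fun k => (rhoP h u k) ^ 2) j i| * |Dp h (Dp h (thetaP h u) j) j i| +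
             |Dm h (fun k => (rhoP h u k) ^ 2) j i| * |Dm h (Dm h (thetaP h u) j) j i| +
             h * (rhoP h u i) ^ 2 * |Lj h (Lj h (thetaP h u) j) j i|)) +
          h * (∑ j : Fin 2,
            (|Dp h (rhoP h u) j i| ^ 2 * |Dp h (thetaP h u) j i| +
             |Dm h (rhoP h u) j i| ^ 2 * |Dm h (thetaP h u) j i|)) := by
  intro i
  have hρ : ∀ k : ℤ × ℤ, 0 ≤ rhoP h u k := fun k => norm_nonneg _
  have hθ : ∀ k k' : ℤ × ℤ, |thetaP h u k - thetaP h u k'| ≤ 2 * π := by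
    intro k k'
    have h1 := Complex.abs_arg_le_pi (Up h u k)
    have h2 := Complex.abs_arg_le_pi (Up h u k')
    have h3 := habs' (thetaP h u k) (thetaP h u k')
    simp only [thetaP] at *
    linarith
  have hK : ∀ j : Fin 2,
      |Dp h (fun k => (rhoP h u k) ^ 2 * Dp h (thetaP h u) j k) j i +
        Dm h (fun k => (rhoP h u k) ^ 2 * Dm h (thetaP h u) j k) j i -
        2 * ((rhoP h u i * rhoP h u (i + ee j) * Real.sin (thetaP h u (i + ee j) - thetaP h u i) -
            rhoP h u i * rhoP h u (i - ee j) *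
              Real.sin (thetaP h u i - thetaP h u (i - ee j))) / h ^ 2)|
      ≤ 2 * Real.exp (2 * π) * h *
            ((rhoP h u i) ^ 2 * (|Dp h (thetaP h u) j i| ^ 3 + |Dm h (thetaP h u) j i| ^ 3)) +
          2 * Real.exp (2 * π) * h *
            (rhoP h u i * (|Dp h (rhoP h u) j i| * |Dp h (thetaP h u) j i| ^ 2 +
               |Dm h (rhoP h u) j i| * |Dm h (thetaP h u) j i| ^ 2)) +
          h * (|Dp h (fun k => (rhoP h u k) ^ 2) j i| * |Dp h (Dp h (thetaP h u) j) j i| +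
             |Dm h (fun k => (rhoP h u k) ^ 2) j i| * |Dm h (Dm h (thetaP h u) j) j i| +
             h * (rhoP h u i) ^ 2 * |Lj h (Lj h (thetaP h u) j) j i|) +
          h * (|Dp h (rhoP h u) j i| ^ 2 * |Dp h (thetaP h u) j i| +
             |Dm h (rhoP h u) j i| ^ 2 * |Dm h (thetaP h u) j i|) := by
    intro j
    have H := keyreal h (rhoP h u i) (rhoP h u (i + ee j)) (rhoP h u (i - ee j))
      (thetaP h u i) (thetaP h u (i + ee j)) (thetaP h u (i - ee j))
      (thetaP h u (i + ee j + ee j)) (thetaP h u (i - ee j - ee j)) hh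
      (hρ i) (hρ (i + ee j)) (hρ (i - ee j)) (hθ _ _) (hθ _ _)
    refine le_trans (le_of_eq ?_) (H.trans (le_of_eq ?_))
    · congr 1
    · simp only [Dp, Dm, Lj, add_sub_cancel_right, sub_add_cancel]
  have tb := Tbound h hh u f Lf κ₀ heq hH i
  have k0 := hK 0
  have k1 := hK 1
  simp only [Fin.sum_univ_two] at tb ⊢
  refine (tri' _ _
    ((rhoP h u i * rhoP h u (i + ee 0) * Real.sin (thetaP h u (i + ee 0) - thetaP h u i) -
        rhoP h u i * rhoP h u (i - ee 0) * Real.sin (thetaP h u i - thetaP h u (i - ee 0))) /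
        h ^ 2)
    ((rhoP h u i * rhoP h u (i + ee 1) * Real.sin (thetaP h u (i + ee 1) - thetaP h u i) -
        rhoP h u i * rhoP h u (i - ee 1) * Real.sin (thetaP h u i - thetaP h u (i - ee 1))) /
        h ^ 2)).trans ?_
  linarith [k0, k1, tb]
end
end

section
/- Let 0 < h ≤ 1 and define u : ℤ² → ℝ by u_i := h·i₂ + (h/π)·e^{−(h·i₂)²}·arctan(h·i₁). Then u is injective on ℤ². -/
noncomputable section

open Real

open FK

namespace FK

/-- The function of Example 5.2 of the paper (lattice encoding):
`u_i := h·i₂ + (h/π)·e^{−(h·i₂)²}·arctan(h·i₁)`. -/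
def uEx2 (h : ℝ) (i : ℤ × ℤ) : ℝ :=
  h * (i.2 : ℝ) +
    h / Real.pi * Real.exp (-(h * (i.2 : ℝ)) ^ 2) * Real.arctan (h * (i.1 : ℝ))

end FK

/-- Example 5.2 of the paper, injectivity.  The function `uEx2` is
injective on `ℤ²`. -/
theorem statement17
    (h : ℝ) (hh : 0 < h) (h1 : h ≤ 1) :
    Function.Injective (uEx2 h) := by
  have hpi := Real.pi_pos
  have hc : 0 < h / Real.pi := div_pos hh hpi
  -- bound on the perturbation term
  have key : ∀ y x : ℤ,
      |h / Real.pi * Real.exp (-(h * (y : ℝ)) ^ 2) * Real.arctan (h * (x : ℝ))| < h / 2 := by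
    intro y x
    have he : Real.exp (-(h * (y : ℝ)) ^ 2) ≤ 1 := by
      rw [Real.exp_le_one_iff]
      nlinarith [sq_nonneg (h * (y : ℝ))]
    have he0 : 0 < Real.exp (-(h * (y : ℝ)) ^ 2) := Real.exp_pos _
    have ha : |Real.arctan (h * (x : ℝ))| < Real.pi / 2 := by
      rw [abs_lt]; exact ⟨Real.neg_pi_div_two_lt_arctan _, Real.arctan_lt_pi_div_two _⟩
    have ha0 : |Real.arctan (h * (x : ℝ))| ≥ 0 := abs_nonneg _
    rw [abs_mul, abs_mul, abs_of_pos hc, abs_of_pos he0]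
    have : h / Real.pi * Real.exp (-(h * (y : ℝ)) ^ 2) * |Real.arctan (h * (x : ℝ))|
        ≤ h / Real.pi * |Real.arctan (h * (x : ℝ))| := by nlinarith [mul_nonneg (mul_nonneg hc.le ha0) (sub_nonneg.mpr he)]
    have h2 : h / Real.pi * |Real.arctan (h * (x : ℝ))| < h / Real.pi * (Real.pi / 2) :=
      mul_lt_mul_of_pos_left ha hc
    have h3 : h / Real.pi * (Real.pi / 2) = h / 2 := by field_simp
    linarith
  intro a b hab
  unfold uEx2 at hab
  -- first coordinate 2 agrees
  have h2eq : a.2 = b.2 := by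
    by_contra hne
    have hZ : (1 : ℤ) ≤ |a.2 - b.2| := Int.one_le_abs (sub_ne_zero.mpr hne)
    have hR : (1 : ℝ) ≤ |(a.2 : ℝ) - (b.2 : ℝ)| := by
      have : ((1 : ℤ) : ℝ) ≤ ((|a.2 - b.2| : ℤ) : ℝ) := by exact_mod_cast hZ
      push_cast at this
      simpa using this
    have hdiff : h * ((a.2 : ℝ) - (b.2 : ℝ)) =
        h / Real.pi * Real.exp (-(h * (b.2 : ℝ)) ^ 2) * Real.arctan (h * (b.1 : ℝ))
        - h / Real.pi * Real.exp (-(h * (a.2 : ℝ)) ^ 2) * Real.arctan (h * (a.1 : ℝ)) := by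
      linarith [hab]
    have hb1 := key b.2 b.1
    have ha1 := key a.2 a.1
    have habs : |h * ((a.2 : ℝ) - (b.2 : ℝ))| < h := by
      rw [hdiff]
      calc |_ - _| ≤ _ + _ := abs_sub _ _
        _ < h / 2 + h / 2 := by exact add_lt_add hb1 ha1
        _ = h := by ring
    rw [abs_mul, abs_of_pos hh] at habs
    nlinarith
  rw [h2eq] at hab
  have hcexp : 0 < h / Real.pi * Real.exp (-(h * (b.2 : ℝ)) ^ 2) :=
    mul_pos hc (Real.exp_pos _)
  have harct : Real.arctan (h * (a.1 : ℝ)) = Real.arctan (h * (b.1 : ℝ)) := by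
    have := hab
    have h' : h / Real.pi * Real.exp (-(h * (b.2 : ℝ)) ^ 2) * Real.arctan (h * (a.1 : ℝ)) =
        h / Real.pi * Real.exp (-(h * (b.2 : ℝ)) ^ 2) * Real.arctan (h * (b.1 : ℝ)) := by
      linarith
    exact mul_left_cancel₀ (ne_of_gt hcexp) h'
  have h1eq : a.1 = b.1 := by
    have := Real.arctan_injective harct
    have hx : (a.1 : ℝ) = (b.1 : ℝ) := mul_left_cancel₀ (ne_of_gt hh) this
    exact_mod_cast hx
  exact Prod.ext h1eq h2eq
end
end
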